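/- arXiv:1911.00555 — 11 statements merged into one kernel-verified Lean document; each statement's English description precedes it below -/
import Mathlib

section
/- Let G be a group such that the center of its power graph 𝒢(G) (the set of vertices adjacent to every other vertex) has more than one element. Then either G is isomorphic to the infinite cyclic group (ℤ,+), or every element of G has finite order. -/
set_option linter.unusedVariables false

/-- The power graph of a group: distinct `x, y` adjacent iff one is an integer power of the other. -/
def powerGraph (G : Type*) [Group G] : SimpleGraph G where
  Adj x y := x ≠ y ∧ ∃ n : ℤ, y = x ^ n ∨ x = y ^ n
  symm := ⟨fun x y ⟨hxy, n, h⟩ => ⟨hxy.symm, n, h.symm⟩⟩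
  loopless := ⟨fun x ⟨h, _⟩ => h rfl⟩

/-- The Z±-power graph of a group: distinct `x, y` adjacent iff one is a nonzero integer power
of the other. -/
def zpmPowerGraph (G : Type*) [Group G] : SimpleGraph G where
  Adj x y := x ≠ y ∧ ∃ n : ℤ, n ≠ 0 ∧ (y = x ^ n ∨ x = y ^ n)
  symm := ⟨fun x y ⟨hxy, n, hn, h⟩ => ⟨hxy.symm, n, hn, h.symm⟩⟩
  loopless := ⟨fun x ⟨h, _⟩ => h rfl⟩

/-- The N-power graph of a group: distinct `x, y` adjacent iff one is a positive-integer power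
of the other. -/
def nPowerGraph (G : Type*) [Group G] : SimpleGraph G where
  Adj x y := x ≠ y ∧ ∃ n : ℕ, 0 < n ∧ (y = x ^ n ∨ x = y ^ n)
  symm := ⟨fun x y ⟨hxy, n, hn, h⟩ => ⟨hxy.symm, n, hn, h.symm⟩⟩
  loopless := ⟨fun x ⟨h, _⟩ => h rfl⟩

/-- The closed neighborhood of a vertex in a graph. -/
def closedNbhd {V : Type*} (Γ : SimpleGraph V) (x : V) : Set V :=
  insert x {y | Γ.Adj x y}

/-- The center of a graph: the set of vertices adjacent to every other vertex. -/
def graphCenter {V : Type*} (Γ : SimpleGraph V) : Set V :=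
  {x | ∀ y, y ≠ x → Γ.Adj x y}

private lemma int_aux {m n : ℤ} (hm : m ≠ 0) (hn : n ≠ 0) (h : m = n * (1 - m)) : n = -2 := by
  have h2 : (m - 1) * (n + 1) = -1 := by linear_combination h
  rcases Int.eq_one_or_neg_one_of_mul_eq_neg_one' h2 with ⟨h3, h4⟩ | ⟨h3, h4⟩ <;> omega

private lemma fin_of_zpow {G : Type*} [Group G] {x : G} {n : ℤ} (hn : n ≠ 0)
    (h : IsOfFinOrder (x ^ n)) : IsOfFinOrder x := by
  obtain ⟨k, hk, hk1⟩ := isOfFinOrder_iff_pow_eq_one.mp h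
  refine isOfFinOrder_iff_zpow_eq_one.mpr ⟨n * k, by positivity, ?_⟩
  rw [zpow_mul, zpow_natCast, hk1]

/-- If the center of the power graph of a group `G` has more than one element, then either
`G ≅ (ℤ,+)` or every element of `G` has finite order. -/
theorem center_big_imp_infinite_cyclic_or_torsion {G : Type*} [Group G]
    (h : (graphCenter (powerGraph G)).Nontrivial) :
    Nonempty (G ≃* Multiplicative ℤ) ∨ ∀ x : G, IsOfFinOrder x := by
  by_cases htor : ∀ x : G, IsOfFinOrder x
  · exact Or.inr htor
  push_neg at htor
  obtain ⟨x, hx⟩ := htor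
  -- get a non-identity element of the graph center
  obtain ⟨a, ha, b, hb, hab⟩ := h
  obtain ⟨z, hzc, hz1⟩ : ∃ z, z ∈ graphCenter (powerGraph G) ∧ z ≠ 1 := by
    by_cases h1 : a = 1
    · exact ⟨b, hb, fun hb1 => hab (h1.trans hb1.symm)⟩
    · exact ⟨a, ha, h1⟩
  -- z has infinite order
  have hzinf : ¬ IsOfFinOrder z := by
    by_cases hzx : z = x
    · rw [hzx]; exact hx
    · obtain ⟨-, n, hn⟩ := hzc x (fun he => hzx he.symm)
      rcases hn with h1 | h2
      · exact fun hzf => hx (h1 ▸ hzf.zpow)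
      · have hn0 : n ≠ 0 := by
          rintro rfl; rw [zpow_zero] at h2; exact hz1 h2
        exact fun hzf => hx (fin_of_zpow hn0 (h2 ▸ hzf))
  -- every non-identity element has infinite order
  have htf : ∀ y : G, y ≠ 1 → ¬ IsOfFinOrder y := by
    intro y hy1 hyf
    have hyz : y ≠ z := by rintro rfl; exact hzinf hyf
    obtain ⟨-, n, hn⟩ := hzc y hyz
    rcases hn with h1 | h2
    · have hn0 : n ≠ 0 := by
        rintro rfl; rw [zpow_zero] at h1; exact hy1 h1
      exact hzinf (fin_of_zpow hn0 (h1 ▸ hyf))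
    · exact hzinf (h2 ▸ hyf.zpow)
  -- key step: every element outside ⟨z⟩ satisfies z = w ^ (-2)
  have key : ∀ w : G, w ∉ Subgroup.zpowers z → z = w ^ (-2 : ℤ) := by
    intro w hw
    have hw1 : w ≠ 1 := by rintro rfl; exact hw (one_mem _)
    have hwz : w ≠ z := by rintro rfl; exact hw (Subgroup.mem_zpowers _)
    obtain ⟨-, n, hn⟩ := hzc w hwz
    obtain ⟨hn0, hzn⟩ : n ≠ 0 ∧ z = w ^ n := by
      rcases hn with h1 | h2
      · exact absurd ⟨n, h1.symm⟩ hw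
      · refine ⟨?_, h2⟩
        rintro rfl; rw [zpow_zero] at h2; exact hz1 h2
    -- w and z commute
    have hc : Commute w z := by rw [hzn]; exact Commute.zpow_right (Commute.refl w) n
    -- w * z is also outside ⟨z⟩
    have hwz2 : w * z ∉ Subgroup.zpowers z := by
      intro ⟨k, hk⟩
      have hk' : z ^ k = w * z := hk
      refine hw ⟨k - 1, ?_⟩
      show z ^ (k - 1) = w
      rw [zpow_sub, hk', zpow_one, mul_inv_cancel_right]
    have hwzne : w * z ≠ z := by
      intro he; exact hw1 (by rwa [mul_eq_right] at he)
    obtain ⟨-, m, hm⟩ := hzc (w * z) hwzne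
    obtain ⟨hm0, hzm⟩ : m ≠ 0 ∧ z = (w * z) ^ m := by
      rcases hm with h1 | h2
      · exact absurd ⟨m, h1.symm⟩ hwz2
      · refine ⟨?_, h2⟩
        rintro rfl; rw [zpow_zero] at h2; exact hz1 h2
    rw [hc.mul_zpow] at hzm
    -- z = w^m * z^m, so w^m = z^(1-m) = w^(n*(1-m))
    have hwm : w ^ m = w ^ (n * (1 - m)) := by
      have h4 : w ^ m = z ^ (1 - m) := by
        rw [zpow_sub, zpow_one]
        exact eq_mul_inv_iff_mul_eq.mpr hzm.symm
      rw [h4, hzn, ← zpow_mul]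
    have hwinf : ¬ IsOfFinOrder w := htf w hw1
    have hinj := injective_zpow_iff_not_isOfFinOrder.mpr hwinf
    have heq : m = n * (1 - m) := hinj hwm
    rw [hzn, int_aux hm0 hn0 heq]
  -- now every element is in ⟨z⟩
  have hall : ∀ g : G, g ∈ Subgroup.zpowers z := by
    intro g
    by_contra hg
    have h1 := key g hg
    have hgz2 : g * z ∉ Subgroup.zpowers z := by
      intro ⟨k, hk⟩
      have hk' : z ^ k = g * z := hk
      refine hg ⟨k - 1, ?_⟩
      show z ^ (k - 1) = g
      rw [zpow_sub, hk', zpow_one, mul_inv_cancel_right]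
    have h2 := key (g * z) hgz2
    have hc : Commute g z := by
      rw [h1]; exact ((Commute.refl g).zpow_left (-2)).symm
    rw [hc.mul_zpow, ← h1] at h2
    -- z = z * z^(-2)
    have h3 : z ^ (-2 : ℤ) = 1 := left_eq_mul.mp h2
    exact hzinf (isOfFinOrder_iff_zpow_eq_one.mpr ⟨-2, by norm_num, h3⟩)
  -- build the isomorphism
  left
  have hbij : Function.Bijective (zpowersHom G z) := by
    constructor
    · intro p q hpq
      have := injective_zpow_iff_not_isOfFinOrder.mpr hzinf
        (a₁ := p.toAdd) (a₂ := q.toAdd) hpq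
      exact Multiplicative.toAdd.injective this
    · intro g
      obtain ⟨k, hk⟩ := hall g
      exact ⟨Multiplicative.ofAdd k, hk⟩
  exact ⟨(MulEquiv.ofBijective (zpowersHom G z) hbij).symm⟩
end

section
/- Let G be a group such that the center of its power graph 𝒢(G) has more than one element. Then G is isomorphic to (ℤ,+) if and only if G is the union of countably many ≡_G-classes of cardinality 2 together with exactly one ≡_G-class of cardinality 3, where ≡_G identifies elements with equal closed neighborhoods in 𝒢(G). -/
set_option linter.unusedVariables false

/-- The `≡_G` class of `x`: all elements with the same closed neighborhood as `x` in the
power graph of `G`. -/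
def eqvClass (G : Type*) [Group G] (x : G) : Set G :=
  {y | closedNbhd (powerGraph G) y = closedNbhd (powerGraph G) x}

namespace PGAux

open Subgroup

variable {G : Type*} [Group G]

lemma mem_closedNbhd_iff {x w : G} :
    w ∈ closedNbhd (powerGraph G) x ↔ w ∈ zpowers x ∨ x ∈ zpowers w := by
  constructor
  · rintro (rfl | ⟨hne, n, h | h⟩)
    · exact Or.inl (mem_zpowers _)
    · exact Or.inl ⟨n, h.symm⟩
    · exact Or.inr ⟨n, h.symm⟩
  · intro h
    by_cases hw : w = x
    · exact hw ▸ Set.mem_insert _ _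
    · refine Set.mem_insert_iff.mpr (Or.inr ?_)
      rcases h with ⟨n, hn⟩ | ⟨n, hn⟩
      · exact ⟨fun he => hw he.symm, n, Or.inl hn.symm⟩
      · exact ⟨fun he => hw he.symm, n, Or.inr hn.symm⟩

lemma self_mem_closedNbhd (x : G) : x ∈ closedNbhd (powerGraph G) x :=
  Set.mem_insert _ _

lemma closedNbhd_eq_of_zpowers_eq {x y : G} (h : zpowers x = zpowers y) :
    closedNbhd (powerGraph G) x = closedNbhd (powerGraph G) y := by
  ext w
  rw [mem_closedNbhd_iff, mem_closedNbhd_iff, h]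
  constructor
  · rintro (hw | hx)
    · exact Or.inl hw
    · exact Or.inr ((zpowers_le.mpr hx) (h ▸ mem_zpowers y))
  · rintro (hw | hy)
    · exact Or.inl hw
    · exact Or.inr ((zpowers_le.mpr hy) (h.symm ▸ mem_zpowers x))

lemma closedNbhd_one : closedNbhd (powerGraph G) 1 = Set.univ := by
  ext w
  simp only [Set.mem_univ, iff_true, mem_closedNbhd_iff]
  exact Or.inr ⟨0, by simp⟩

lemma mem_graphCenter_iff {x : G} :
    x ∈ graphCenter (powerGraph G) ↔ closedNbhd (powerGraph G) x = Set.univ := by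
  constructor
  · intro hx
    ext w
    simp only [Set.mem_univ, iff_true]
    by_cases hw : w = x
    · exact hw ▸ self_mem_closedNbhd x
    · exact Set.mem_insert_iff.mpr (Or.inr (hx w hw))
  · intro hx y hy
    have : y ∈ closedNbhd (powerGraph G) x := hx ▸ Set.mem_univ y
    rcases Set.mem_insert_iff.mp this with h | h
    · exact absurd h hy
    · exact h

lemma graphCenter_eq : graphCenter (powerGraph G) = eqvClass G 1 := by
  ext x
  rw [show (x ∈ graphCenter (powerGraph G)) = _ from rfl] at *
  rw [mem_graphCenter_iff]
  show _ ↔ closedNbhd (powerGraph G) x = closedNbhd (powerGraph G) 1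
  rw [closedNbhd_one]

lemma mem_eqvClass_self (x : G) : x ∈ eqvClass G x := rfl

lemma eqvClass_eq_of_mem {x y : G} (h : y ∈ eqvClass G x) : eqvClass G y = eqvClass G x := by
  have hy : closedNbhd (powerGraph G) y = closedNbhd (powerGraph G) x := h
  ext z
  show _ = _ ↔ _ = _
  rw [hy]

lemma mem_zpowers_zpow {z : G} {k : ℕ} (hk : z ^ k = 1) {n : ℤ} (h : IsCoprime n (k : ℤ)) :
    z ∈ zpowers (z ^ n) := by
  obtain ⟨a, b, hab⟩ := h
  refine ⟨a, ?_⟩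
  have hzk : z ^ ((k : ℤ) * b) = 1 := by
    rw [zpow_mul, zpow_natCast, hk, one_zpow]
  calc (z ^ n) ^ a = z ^ (n * a) := by rw [← zpow_mul]
    _ = z ^ (n * a) * z ^ ((k:ℤ) * b) := by rw [hzk, mul_one]
    _ = z ^ (n * a + (k:ℤ) * b) := by rw [← zpow_add]
    _ = z ^ (1 : ℤ) := by rw [show n * a + (k:ℤ) * b = 1 by linarith [hab]]
    _ = z := zpow_one z

lemma zpowers_zpow_eq {z : G} {k : ℕ} (hk : z ^ k = 1) {n : ℤ} (h : IsCoprime n (k : ℤ)) :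
    zpowers (z ^ n) = zpowers z := by
  refine le_antisymm (zpowers_le.mpr ⟨n, rfl⟩) (zpowers_le.mpr (mem_zpowers_zpow hk h))

lemma zpowers_pow_eq {z : G} {j : ℕ} (h : Nat.Coprime j (orderOf z)) :
    zpowers (z ^ j) = zpowers z := by
  have := zpowers_zpow_eq (pow_orderOf_eq_one z) (n := (j : ℤ))
    (Nat.isCoprime_iff_coprime.mpr h)
  rwa [zpow_natCast] at this

lemma pow_ne_pow {z : G} {a b : ℕ} (hab : a < b) (hb : b < orderOf z) : z ^ a ≠ z ^ b := by
  intro h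
  have h1 : z ^ (b - a) = 1 := by
    have : z ^ a * z ^ (b - a) = z ^ a * 1 := by
      rw [mul_one, ← pow_add, Nat.add_sub_cancel' hab.le, h]
    exact mul_left_cancel this
  have h2 := orderOf_dvd_of_pow_eq_one h1
  have h3 : 0 < b - a := by omega
  have := Nat.le_of_dvd h3 h2
  omega

lemma exists_pow_of_mem_zpowers {y w : G} (hk : orderOf y ≠ 0) (h : w ∈ zpowers y) :
    ∃ j : ℕ, j < orderOf y ∧ w = y ^ j := by
  obtain ⟨n, hn⟩ := h
  refine ⟨(n % (orderOf y : ℤ)).toNat, ?_, ?_⟩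
  · have h1 : (0:ℤ) < (orderOf y : ℤ) := by exact_mod_cast Nat.pos_of_ne_zero hk
    have := Int.emod_lt_of_pos n h1
    omega
  · simp only at hn
    rw [← hn, zpow_eq_zpow_emod' n (pow_orderOf_eq_one y)]
    rw [← zpow_natCast y]
    congr 1
    have h1 : (0:ℤ) < (orderOf y : ℤ) := by exact_mod_cast Nat.pos_of_ne_zero hk
    have := Int.emod_nonneg n (by omega : (orderOf y : ℤ) ≠ 0)
    omega

lemma zpowers_finite {y : G} (hk : orderOf y ≠ 0) : (zpowers y : Set G).Finite := by
  refine Set.Finite.subset ((Set.finite_Iio (orderOf y)).image (fun j => y ^ j)) ?_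
  intro w hw
  obtain ⟨j, hj, rfl⟩ := exists_pow_of_mem_zpowers hk hw
  exact ⟨j, hj, rfl⟩

lemma zpowers_eq_of_orderOf_eq {y w : G} (hk : orderOf y ≠ 0) (hw : w ∈ zpowers y)
    (h : orderOf w = orderOf y) : zpowers w = zpowers y := by
  obtain ⟨j, hj, rfl⟩ := exists_pow_of_mem_zpowers hk hw
  by_cases hj0 : j = 0
  · subst hj0
    simp only [pow_zero] at h ⊢
    have : orderOf y = 1 := by rw [← h, orderOf_one]
    have hy1 : y = 1 := orderOf_eq_one_iff.mp this
    rw [hy1]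
  · have := orderOf_pow' y hj0
    rw [h] at this
    have hg : Nat.gcd (orderOf y) j = 1 := by
      have hOy : orderOf y ≠ 0 := hk
      have h2 : orderOf y * Nat.gcd (orderOf y) j = orderOf y * 1 := by
        rw [Nat.mul_one]
        nth_rewrite 1 [this]
        rw [Nat.div_mul_cancel (Nat.gcd_dvd_left _ _)]
      exact Nat.eq_of_mul_eq_mul_left (Nat.pos_of_ne_zero hOy) h2
    exact zpowers_pow_eq (Nat.coprime_comm.mp hg)

lemma dvd_natAbs_le {d a : ℤ} (h : d ∣ a) (ha : a ≠ 0) : d.natAbs ≤ a.natAbs :=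
  Nat.le_of_dvd (by omega) (Int.natAbs_dvd_natAbs.mpr h)

lemma card_not_four {α : Type*} {s : Set α} (hcard : Nat.card s = 2 ∨ Nat.card s = 3)
    {a b c d : α} (ha : a ∈ s) (hb : b ∈ s) (hc : c ∈ s) (hd : d ∈ s)
    (hab : a ≠ b) (hac : a ≠ c) (had : a ≠ d) (hbc : b ≠ c) (hbd : b ≠ d) (hcd : c ≠ d) :
    False := by
  have hfin : s.Finite := by
    rw [← Set.finite_coe_iff]
    have : Nat.card s ≠ 0 := by omega
    exact (Nat.card_ne_zero.mp this).2
  have hsub : ({a, b, c, d} : Set α) ⊆ s := by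
    intro w hw
    rcases hw with rfl | rfl | rfl | rfl
    exacts [ha, hb, hc, hd]
  have h4 : ({a, b, c, d} : Set α).ncard = 4 := by
    rw [Set.ncard_insert_of_notMem (by simp [hab, hac, had]) (Set.toFinite _),
      Set.ncard_insert_of_notMem (by simp [hbc, hbd]) (Set.toFinite _),
      Set.ncard_pair hcd]
  have hle := Set.ncard_le_ncard hsub hfin
  rw [h4, ← Nat.card_coe_set_eq] at hle
  omega

lemma nat_fact : ∀ k : ℕ, k ≠ 0 →
    (∀ p : ℕ, p.Prime → p ∣ k → p < 5) → ¬ 8 ∣ k → ¬ 9 ∣ k → ¬ 12 ∣ k →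
    k = 1 ∨ k = 2 ∨ k = 3 ∨ k = 4 ∨ k = 6 := by
  intro k
  induction k using Nat.strong_induction_on with
  | _ k ih =>
    intro hk0 hp h8 h9 h12
    by_cases hk1 : k = 1
    · exact Or.inl hk1
    obtain ⟨p, hprime, hdvd⟩ := Nat.exists_prime_and_dvd hk1
    have hp5 : p < 5 := hp p hprime hdvd
    have hp2 : p = 2 ∨ p = 3 := by
      interval_cases p <;> simp_all (config := {decide := true})
    obtain ⟨k', rfl⟩ := hdvd
    have hk'0 : k' ≠ 0 := by rintro rfl; simp at hk0
    have hppos : 2 ≤ p := hprime.two_le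
    have hk'lt : k' < p * k' := by
      have : 1 * k' < p * k' :=
        (Nat.mul_lt_mul_right (Nat.pos_of_ne_zero hk'0)).mpr (by omega)
      omega
    have ih' := ih k' hk'lt hk'0
      (fun q hq hqd => hp q hq (hqd.mul_left p))
      (fun hd => h8 (hd.mul_left p)) (fun hd => h9 (hd.mul_left p))
      (fun hd => h12 (hd.mul_left p))
    rcases hp2 with rfl | rfl <;> rcases ih' with rfl | rfl | rfl | rfl | rfl <;> omega

variable (h2or3 : ∀ x : G, Nat.card (eqvClass G x) = 2 ∨ Nat.card (eqvClass G x) = 3)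

include h2or3 in
lemma four_powers (z : G) {j1 j2 j3 j4 : ℕ} (h12 : j1 < j2) (h23 : j2 < j3) (h34 : j3 < j4)
    (h4 : j4 < orderOf z)
    (c1 : Nat.Coprime j1 (orderOf z)) (c2 : Nat.Coprime j2 (orderOf z))
    (c3 : Nat.Coprime j3 (orderOf z)) (c4 : Nat.Coprime j4 (orderOf z)) : False := by
  have hmem : ∀ j : ℕ, Nat.Coprime j (orderOf z) → z ^ j ∈ eqvClass G z := fun j hj =>
    closedNbhd_eq_of_zpowers_eq (zpowers_pow_eq hj)
  exact card_not_four (h2or3 z) (hmem j1 c1) (hmem j2 c2) (hmem j3 c3) (hmem j4 c4)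
    (pow_ne_pow h12 (by omega)) (pow_ne_pow (by omega) (by omega))
    (pow_ne_pow (by omega) h4) (pow_ne_pow h23 (by omega))
    (pow_ne_pow (by omega) h4) (pow_ne_pow h34 h4)

include h2or3 in
lemma order_mem (htor : ∀ y : G, orderOf y ≠ 0) (y : G) :
    orderOf y = 1 ∨ orderOf y = 2 ∨ orderOf y = 3 ∨ orderOf y = 4 ∨ orderOf y = 6 := by
  set k := orderOf y with hk
  have hk0 : k ≠ 0 := htor y
  -- general: from q ∣ k get an element of order q
  have horder : ∀ q : ℕ, q ≠ 0 → q ∣ k → orderOf (y ^ (k / q)) = q := by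
    intro q hq0 hqd
    have hkq0 : k / q ≠ 0 := by
      have := Nat.div_pos (Nat.le_of_dvd (Nat.pos_of_ne_zero hk0) hqd) (Nat.pos_of_ne_zero hq0)
      omega
    rw [orderOf_pow' y hkq0, ← hk, Nat.gcd_eq_right (Nat.div_dvd_of_dvd hqd),
      Nat.div_div_self hqd hk0]
  by_contra hcon
  push_neg at hcon
  obtain ⟨h1, h2, h3, h4, h6⟩ := hcon
  -- one of the bad cases holds
  by_cases hp : ∀ p : ℕ, p.Prime → p ∣ k → p < 5
  · by_cases h8 : 8 ∣ k
    · set z := y ^ (k / 8) with hz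
      have hoz : orderOf z = 8 := horder 8 (by omega) h8
      exact four_powers h2or3 z (j1 := 1) (j2 := 3) (j3 := 5) (j4 := 7)
        (by omega) (by omega) (by omega) (by omega)
        (by rw [hoz]; decide) (by rw [hoz]; decide) (by rw [hoz]; decide)
        (by rw [hoz]; decide)
    · by_cases h9 : 9 ∣ k
      · set z := y ^ (k / 9) with hz
        have hoz : orderOf z = 9 := horder 9 (by omega) h9
        exact four_powers h2or3 z (j1 := 1) (j2 := 2) (j3 := 4) (j4 := 5)
          (by omega) (by omega) (by omega) (by omega)
          (by rw [hoz]; decide) (by rw [hoz]; decide) (by rw [hoz]; decide)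
          (by rw [hoz]; decide)
      · by_cases h12 : 12 ∣ k
        · set z := y ^ (k / 12) with hz
          have hoz : orderOf z = 12 := horder 12 (by omega) h12
          exact four_powers h2or3 z (j1 := 1) (j2 := 5) (j3 := 7) (j4 := 11)
            (by omega) (by omega) (by omega) (by omega)
            (by rw [hoz]; decide) (by rw [hoz]; decide) (by rw [hoz]; decide)
            (by rw [hoz]; decide)
        · have := nat_fact k hk0 hp h8 h9 h12
          omega
  · push_neg at hp
    obtain ⟨p, hprime, hpd, hp5⟩ := hp
    set z := y ^ (k / p) with hz
    have hoz : orderOf z = p := horder p hprime.pos.ne' hpd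
    have hcop : ∀ j : ℕ, 0 < j → j < p → Nat.Coprime j (orderOf z) := by
      intro j hj0 hjp
      rw [hoz]
      exact Nat.coprime_comm.mp ((Nat.Prime.coprime_iff_not_dvd hprime).mpr
        (fun hd => by have := Nat.le_of_dvd hj0 hd; omega))
    exact four_powers h2or3 z (j1 := 1) (j2 := 2) (j3 := 3) (j4 := 4)
      (by omega) (by omega) (by omega) (by omega)
      (hcop 1 (by omega) (by omega)) (hcop 2 (by omega) (by omega))
      (hcop 3 (by omega) (by omega)) (hcop 4 (by omega) (by omega))



include h2or3 in
lemma torsion_case {x : G} (hx : x ∈ graphCenter (powerGraph G)) (hx1 : x ≠ 1)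
    (htor : ∀ y : G, orderOf y ≠ 0) (hGinf : Infinite G)
    (h3ex : ∃ c : Set G, (∃ z : G, c = eqvClass G z) ∧ Nat.card c = 3) : False := by
  have hdom : ∀ y : G, y ∈ zpowers x ∨ x ∈ zpowers y := by
    intro y
    by_cases hxy : y = x
    · exact Or.inl (hxy ▸ mem_zpowers x)
    · have := hx y hxy
      obtain ⟨-, n, hn | hn⟩ := this
      · exact Or.inl ⟨n, hn.symm⟩
      · exact Or.inr ⟨n, hn.symm⟩
  set m := orderOf x with hm
  have hm1 : m ≠ 1 := fun h => hx1 (orderOf_eq_one_iff.mp h)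
  have hmmem := order_mem h2or3 htor x
  rw [← hm] at hmmem
  -- rule out m = 3, 4, 6 : G would equal zpowers x, hence finite
  have hfin_univ : ¬ (∀ y : G, y ∈ zpowers x) := by
    intro hall
    have : (Set.univ : Set G).Finite := (zpowers_finite (htor x)).subset (fun y _ => hall y)
    exact Set.infinite_univ this
  have hnot346 : m ≠ 3 ∧ m ≠ 4 ∧ m ≠ 6 := by
    refine ⟨?_, ?_, ?_⟩ <;> intro hmv <;> apply hfin_univ <;> intro y <;> by_contra hy
    -- m = 3
    · have hxy : x ∈ zpowers y := (hdom y).resolve_left hy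
      have hdvd : orderOf x ∣ orderOf y := orderOf_dvd_of_mem_zpowers hxy
      have hky := order_mem h2or3 htor y
      rw [← hm, hmv] at hdvd
      have hk6 : orderOf y = 3 ∨ orderOf y = 6 := by omega
      rcases hk6 with hk3 | hk6
      · have := zpowers_eq_of_orderOf_eq (htor y) hxy (by omega)
        exact hy (this ▸ mem_zpowers y)
      · -- y^3 has order 2, contradiction with dominating x of order 3
        set z := y ^ 3 with hz
        have hoz : orderOf z = 2 := by
          rw [hz, orderOf_pow' y (by decide : (3:ℕ) ≠ 0), hk6]
          decide
        rcases hdom z with hzx | hxz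
        · have := orderOf_dvd_of_mem_zpowers hzx
          rw [hoz, ← hm, hmv] at this
          omega
        · have := orderOf_dvd_of_mem_zpowers hxz
          rw [hoz, ← hm, hmv] at this
          omega
    -- m = 4
    · have hxy : x ∈ zpowers y := (hdom y).resolve_left hy
      have hdvd : orderOf x ∣ orderOf y := orderOf_dvd_of_mem_zpowers hxy
      have hky := order_mem h2or3 htor y
      have hk4 : orderOf y = 4 := by
        rw [← hm, hmv] at hdvd
        rcases hky with h|h|h|h|h <;> omega
      have := zpowers_eq_of_orderOf_eq (htor y) hxy (by omega)
      exact hy (this ▸ mem_zpowers y)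
    -- m = 6
    · have hxy : x ∈ zpowers y := (hdom y).resolve_left hy
      have hdvd : orderOf x ∣ orderOf y := orderOf_dvd_of_mem_zpowers hxy
      have hky := order_mem h2or3 htor y
      have hk6 : orderOf y = 6 := by
        rw [← hm, hmv] at hdvd
        rcases hky with h|h|h|h|h <;> omega
      have := zpowers_eq_of_orderOf_eq (htor y) hxy (by omega)
      exact hy (this ▸ mem_zpowers y)
  have hm2 : m = 2 := by omega
  -- zpowers x = {1, x}
  have hzx : ∀ w : G, w ∈ zpowers x ↔ (w = 1 ∨ w = x) := by
    intro w
    constructor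
    · intro hw
      obtain ⟨j, hj, rfl⟩ := exists_pow_of_mem_zpowers (htor x) hw
      rw [← hm, hm2] at hj
      interval_cases j
      · exact Or.inl (pow_zero x)
      · exact Or.inr (pow_one x)
    · rintro (rfl | rfl)
      · exact one_mem _
      · exact mem_zpowers _
  -- every y ∉ {1, x} has order 4 and y ^ 2 = x
  have horder4 : ∀ y : G, y ≠ 1 → y ≠ x → orderOf y = 4 ∧ y ^ 2 = x := by
    intro y hy1 hyx
    have hynx : y ∉ zpowers x := by
      rw [hzx]
      tauto
    have hxy : x ∈ zpowers y := (hdom y).resolve_left hynx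
    have hdvd : orderOf x ∣ orderOf y := orderOf_dvd_of_mem_zpowers hxy
    rw [← hm, hm2] at hdvd
    have hky := order_mem h2or3 htor y
    have hk246 : orderOf y = 2 ∨ orderOf y = 4 ∨ orderOf y = 6 := by
      have h1 : orderOf y ≠ 1 := fun h => hy1 (orderOf_eq_one_iff.mp h)
      rcases hky with h|h|h|h|h <;> omega
    have hk4 : orderOf y = 4 := by
      rcases hk246 with hk2 | hk4 | hk6
      · -- order 2 : zpowers y = zpowers x
        have := zpowers_eq_of_orderOf_eq (htor y) hxy (by omega)
        exact absurd (this ▸ mem_zpowers y) hynx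
      · exact hk4
      · -- order 6 : y^2 has order 3
        exfalso
        set z := y ^ 2 with hz
        have hoz : orderOf z = 3 := by
          rw [hz, orderOf_pow' y (by decide : (2:ℕ) ≠ 0), hk6]
          decide
        rcases hdom z with hzx' | hxz
        · have := orderOf_dvd_of_mem_zpowers hzx'
          rw [hoz, ← hm, hm2] at this
          omega
        · have := orderOf_dvd_of_mem_zpowers hxz
          rw [hoz, ← hm, hm2] at this
          omega
    refine ⟨hk4, ?_⟩
    -- x = y ^ j with j < 4, orderOf (y^j) = 2 forces j = 2
    obtain ⟨j, hj, hxj⟩ := exists_pow_of_mem_zpowers (htor y) hxy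
    rw [hk4] at hj
    have hoj : orderOf (y ^ j) = 2 := by rw [← hxj, ← hm, hm2]
    have hj0 : j ≠ 0 := by
      rintro rfl
      rw [pow_zero, orderOf_one] at hoj
      omega
    have hj2 : j = 2 := by
      have hgc := orderOf_pow' y hj0
      rw [hoj, hk4] at hgc
      interval_cases j
      · exact absurd rfl hj0
      · exact absurd hgc (by decide)
      · rfl
      · exact absurd hgc (by decide)
    rw [hj2] at hxj
    exact hxj.symm
  -- x is a power of any order-4 element
  have hxpow : ∀ y : G, orderOf y = 4 → x ∈ zpowers y := by
    intro y hy4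
    have hy1 : y ≠ 1 := fun h => by rw [h, orderOf_one] at hy4; omega
    have hyx : y ≠ x := fun h => by rw [h, ← hm, hm2] at hy4; omega
    obtain ⟨-, h2⟩ := horder4 y hy1 hyx
    exact ⟨((2:ℕ):ℤ), by show y ^ ((2:ℕ):ℤ) = x; rw [zpow_natCast]; exact h2⟩
  -- for every order-4 element there is a non-neighbor
  have hnadj : ∀ y : G, orderOf y = 4 → ∃ w : G, w ∉ zpowers y ∧ y ∉ zpowers w := by
    intro y hy4
    have hfin : (zpowers y : Set G).Finite := zpowers_finite (htor y)
    obtain ⟨w, hw⟩ := hfin.infinite_compl.nonempty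
    refine ⟨w, hw, ?_⟩
    intro hyw
    have hw1 : w ≠ 1 := fun h => hw (h ▸ one_mem _)
    have hwx : w ≠ x := by
      rintro rfl
      exact hw (hxpow y hy4)
    have hw4 : orderOf w = 4 := (horder4 w hw1 hwx).1
    have := zpowers_eq_of_orderOf_eq (htor w) hyw (by omega)
    exact hw (this ▸ mem_zpowers w)
  -- closed neighborhood of an order-4 element is its cyclic subgroup
  have hN4 : ∀ y : G, orderOf y = 4 → closedNbhd (powerGraph G) y = (zpowers y : Set G) := by
    intro y hy4
    ext w
    rw [mem_closedNbhd_iff]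
    constructor
    · rintro (hw | hyw)
      · exact hw
      · have hw1 : w ≠ 1 := by
          rintro rfl
          obtain ⟨n, hn⟩ := hyw
          simp only [one_zpow] at hn
          rw [← hn, orderOf_one] at hy4
          omega
        have hwx : w ≠ x := by
          rintro rfl
          have := orderOf_dvd_of_mem_zpowers hyw
          rw [hy4, ← hm, hm2] at this
          omega
        have hw4 : orderOf w = 4 := (horder4 w hw1 hwx).1
        have := zpowers_eq_of_orderOf_eq (htor w) hyw (by omega)
        exact this ▸ mem_zpowers w
    · exact fun hw => Or.inl hw
  -- the center is {1, x}
  have hNne : ∀ y : G, orderOf y = 4 → closedNbhd (powerGraph G) y ≠ Set.univ := by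
    intro y hy4 huniv
    obtain ⟨w, hw1, hw2⟩ := hnadj y hy4
    have : w ∈ closedNbhd (powerGraph G) y := huniv ▸ Set.mem_univ w
    rcases mem_closedNbhd_iff.mp this with h | h
    · exact hw1 h
    · exact hw2 h
  -- the contradiction: a class of size 3 exists
  obtain ⟨c, ⟨z, rfl⟩, hc3⟩ := h3ex
  by_cases hz4 : z ≠ 1 ∧ z ≠ x
  · -- z has order 4; its class is contained in {z, z^3}
    have hz4' : orderOf z = 4 := (horder4 z hz4.1 hz4.2).1
    have hsub : eqvClass G z ⊆ {z, z ^ 3} := by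
      intro v hv
      have hNv : closedNbhd (powerGraph G) v = closedNbhd (powerGraph G) z := hv
      have hvz : v ∈ zpowers z := by
        have : v ∈ closedNbhd (powerGraph G) z := hNv ▸ self_mem_closedNbhd v
        rw [hN4 z hz4'] at this
        exact this
      obtain ⟨j, hj, rfl⟩ := exists_pow_of_mem_zpowers (htor z) hvz
      rw [hz4'] at hj
      have hvne : closedNbhd (powerGraph G) (z ^ j) ≠ Set.univ := by
        rw [hNv]
        exact hNne z hz4'
      interval_cases j
      · exfalso
        rw [pow_zero] at hvne
        exact hvne closedNbhd_one
      · rw [pow_one]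
        exact Set.mem_insert _ _
      · exfalso
        rw [(horder4 z hz4.1 hz4.2).2] at hvne
        exact hvne (mem_graphCenter_iff.mp hx)
      · exact Set.mem_insert_iff.mpr (Or.inr rfl)
    have hle : Nat.card (eqvClass G z) ≤ 2 := by
      rw [Nat.card_coe_set_eq]
      calc (eqvClass G z).ncard ≤ ({z, z ^ 3} : Set G).ncard :=
            Set.ncard_le_ncard hsub (Set.toFinite _)
        _ ≤ 2 := by
            refine le_trans (Set.ncard_insert_le _ _) ?_
            simp [Set.ncard_singleton]
    omega
  · -- z ∈ {1, x} : its class is the center {1, x}, of size 2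
    have hz1x : z = 1 ∨ z = x := by tauto
    have hzc : closedNbhd (powerGraph G) z = Set.univ := by
      rcases hz1x with rfl | rfl
      · exact closedNbhd_one
      · exact mem_graphCenter_iff.mp hx
    have hclass : eqvClass G z = {1, x} := by
      ext v
      constructor
      · intro hv
        have hNv : closedNbhd (powerGraph G) v = Set.univ := by
          rw [show closedNbhd (powerGraph G) v = closedNbhd (powerGraph G) z from hv, hzc]
        by_cases hv1 : v = 1
        · exact Or.inl hv1
        by_cases hvx : v = x
        · exact Set.mem_insert_iff.mpr (Or.inr hvx)
        exact absurd hNv (hNne v (horder4 v hv1 hvx).1)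
      · intro hv
        rcases hv with rfl | hv
        · show closedNbhd (powerGraph G) 1 = closedNbhd (powerGraph G) z
          rw [closedNbhd_one, hzc]
        · have hvx : v = x := hv
          show closedNbhd (powerGraph G) v = closedNbhd (powerGraph G) z
          rw [hvx, mem_graphCenter_iff.mp hx, hzc]
    rw [hclass, Nat.card_coe_set_eq, Set.ncard_pair (Ne.symm hx1)] at hc3
    omega


lemma orderOf_ne_zero_of_zpow_eq_one {y : G} {n : ℤ} (hn : n ≠ 0) (h : y ^ n = 1) :
    orderOf y ≠ 0 := by
  intro h0
  have hlt := orderOf_eq_zero_iff'.mp h0 n.natAbs (by omega)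
  apply hlt
  rcases Int.natAbs_eq n with he | he
  · rw [← zpow_natCast, ← he]
    exact h
  · rw [← zpow_natCast, show ((n.natAbs : ℤ)) = -n by omega, zpow_neg, h, inv_one]

lemma zpow_inj_of_orderOf_zero {y : G} (h0 : orderOf y = 0) {a b : ℤ} (h : y ^ a = y ^ b) :
    a = b := by
  by_contra hab
  have h1 : y ^ (a - b) = 1 := by
    rw [zpow_sub, h, mul_inv_cancel]
  exact (orderOf_ne_zero_of_zpow_eq_one (by omega) h1) h0

lemma inf_order_case {x : G} (hx : x ∈ graphCenter (powerGraph G)) (h0 : orderOf x = 0) :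
    Nonempty (G ≃* Multiplicative ℤ) := by
  have hx1 : x ≠ 1 := by
    rintro rfl
    rw [orderOf_one] at h0
    omega
  have hdom : ∀ y : G, y ∈ zpowers x ∨ x ∈ zpowers y := by
    intro y
    by_cases hxy : y = x
    · exact Or.inl (hxy ▸ mem_zpowers x)
    · obtain ⟨-, n, hn | hn⟩ := hx y hxy
      · exact Or.inl ⟨n, hn.symm⟩
      · exact Or.inr ⟨n, hn.symm⟩
  have key : ∀ z : G, z ∉ zpowers x → ∀ n : ℤ, 2 ≤ n → z ^ n = x → False := by
    intro z hz n hn2 hzn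
    have hz0 : orderOf z = 0 := by
      have hxz : x ∈ zpowers z := ⟨n, hzn⟩
      have := orderOf_dvd_of_mem_zpowers hxz
      rw [h0] at this
      exact Nat.eq_zero_of_zero_dvd this
    rcases hdom (z ^ (n + 1)) with ⟨k, hk⟩ | ⟨k, hk⟩
    · -- x ^ k = z ^ (n+1)
      simp only at hk
      rw [← hzn, ← zpow_mul] at hk
      have hnk : n * k = n + 1 := zpow_inj_of_orderOf_zero hz0 hk
      have hd : n ∣ n + 1 := ⟨k, hnk.symm⟩
      have hd1 : n ∣ 1 := by
        have := hd.sub (dvd_refl n)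
        simpa using this
      have := dvd_natAbs_le hd1 (one_ne_zero)
      omega
    · -- (z ^ (n+1)) ^ k = x
      simp only at hk
      rw [← zpow_mul] at hk
      rw [← hzn] at hk
      have hnk : (n + 1) * k = n := zpow_inj_of_orderOf_zero hz0 hk
      have hd : (n + 1) ∣ n := ⟨k, hnk.symm⟩
      have hd1 : (n + 1) ∣ 1 := by
        have := (dvd_refl (n + 1)).sub hd
        simpa using this
      have := dvd_natAbs_le hd1 (one_ne_zero)
      omega
  have hall : ∀ y : G, y ∈ zpowers x := by
    intro y
    by_contra hy
    have hxy : x ∈ zpowers y := (hdom y).resolve_left hy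
    obtain ⟨n, hn⟩ := hxy
    simp only at hn
    have hn0 : n ≠ 0 := by
      rintro rfl
      rw [zpow_zero] at hn
      exact hx1 hn.symm
    rcases lt_trichotomy n 0 with hneg | rfl | hpos
    · by_cases hn1 : n = -1
      · subst hn1
        apply hy
        have hxi : x = y⁻¹ := by rw [← hn, zpow_neg_one]
        rw [show y = x⁻¹ by rw [hxi, inv_inv]]
        exact inv_mem (mem_zpowers x)
      · refine key y⁻¹ (fun hm => hy (by simpa using (inv_mem_iff.mp hm))) (-n) (by omega) ?_
        rw [inv_zpow, ← zpow_neg, neg_neg]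
        exact hn
    · exact absurd rfl hn0
    · by_cases hn1 : n = 1
      · subst hn1
        rw [zpow_one] at hn
        exact hy (hn ▸ mem_zpowers y)
      · exact key y hy n (by omega) hn
  have hinj : Function.Injective (zpowersHom G x) := by
    intro a b hab
    rw [zpowersHom_apply, zpowersHom_apply] at hab
    have := zpow_inj_of_orderOf_zero h0 hab
    exact Multiplicative.toAdd.injective this
  have hsurj : Function.Surjective (zpowersHom G x) := by
    intro y
    obtain ⟨n, hn⟩ := hall y
    exact ⟨Multiplicative.ofAdd n, hn⟩
  exact ⟨(MulEquiv.ofBijective (zpowersHom G x) ⟨hinj, hsurj⟩).symm⟩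

lemma backward (h : (graphCenter (powerGraph G)).Nontrivial)
    (h2or3 : ∀ x : G, Nat.card (eqvClass G x) = 2 ∨ Nat.card (eqvClass G x) = 3)
    (h3ex : ∃ c : Set G, (∃ z : G, c = eqvClass G z) ∧ Nat.card c = 3)
    (hinf : {c : Set G | (∃ x : G, c = eqvClass G x) ∧ Nat.card c = 2}.Infinite) :
    Nonempty (G ≃* Multiplicative ℤ) := by
  have hGinf : Infinite G := by
    rw [← not_finite_iff_infinite]
    intro hfin
    exact hinf (Set.toFinite _)
  obtain ⟨a, ha, b, hb, hab⟩ := h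
  have hx : ∃ x : G, x ∈ graphCenter (powerGraph G) ∧ x ≠ 1 := by
    by_cases ha1 : a = 1
    · exact ⟨b, hb, fun hb1 => hab (by rw [ha1, hb1])⟩
    · exact ⟨a, ha, ha1⟩
  obtain ⟨x, hxc, hx1⟩ := hx
  by_cases h0 : orderOf x = 0
  · exact inf_order_case hxc h0
  · -- torsion case: contradiction
    exfalso
    have htor : ∀ y : G, orderOf y ≠ 0 := by
      intro y hy0
      have hyx : y ≠ x := fun he => h0 (he ▸ hy0)
      have hcase : y ∈ zpowers x ∨ x ∈ zpowers y := by
        obtain ⟨-, n, hn | hn⟩ := hxc y hyx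
        · exact Or.inl ⟨n, hn.symm⟩
        · exact Or.inr ⟨n, hn.symm⟩
      rcases hcase with hyz | hxz
      · have := orderOf_dvd_of_mem_zpowers hyz
        rw [hy0] at this
        exact h0 (Nat.eq_zero_of_zero_dvd this)
      · obtain ⟨n, hn⟩ := hxz
        simp only at hn
        have hn0 : n ≠ 0 := by
          rintro rfl
          rw [zpow_zero] at hn
          exact hx1 hn.symm
        have hym : y ^ (n * (orderOf x : ℤ)) = 1 := by
          rw [zpow_mul, hn, zpow_natCast, pow_orderOf_eq_one]
        have : n * (orderOf x : ℤ) ≠ 0 := by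
          have : (orderOf x : ℤ) ≠ 0 := by exact_mod_cast h0
          exact mul_ne_zero hn0 this
        exact (orderOf_ne_zero_of_zpow_eq_one this hym) hy0
    exact torsion_case h2or3 hxc hx1 htor hGinf h3ex


section Forward

variable {H : Type*} [Group H] {g : H}
  (hinj : ∀ a b : ℤ, g ^ a = g ^ b → a = b) (hsurj : ∀ y : H, ∃ n : ℤ, y = g ^ n)

/-- "small" exponents: those of dominating vertices. -/
def Small (a : ℤ) : Prop := a = 0 ∨ a = 1 ∨ a = -1

include hinj in
lemma memN (a b : ℤ) : g ^ b ∈ closedNbhd (powerGraph H) (g ^ a) ↔ a ∣ b ∨ b ∣ a := by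
  rw [mem_closedNbhd_iff]
  constructor
  · rintro (⟨n, hn⟩ | ⟨n, hn⟩)
    · simp only at hn
      rw [← zpow_mul] at hn
      exact Or.inl ⟨n, (hinj _ _ hn).symm⟩
    · simp only at hn
      rw [← zpow_mul] at hn
      exact Or.inr ⟨n, (hinj _ _ hn).symm⟩
  · rintro (⟨n, hn⟩ | ⟨n, hn⟩)
    · exact Or.inl ⟨n, by show (g ^ a) ^ n = g ^ b; rw [← zpow_mul, ← hn]⟩
    · exact Or.inr ⟨n, by show (g ^ b) ^ n = g ^ a; rw [← zpow_mul, ← hn]⟩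

include hinj hsurj in
lemma Nuniv {a : ℤ} (ha : Small a) : closedNbhd (powerGraph H) (g ^ a) = Set.univ := by
  ext w
  simp only [Set.mem_univ, iff_true]
  obtain ⟨b, rfl⟩ := hsurj w
  rw [memN hinj]
  rcases ha with rfl | rfl | rfl
  · exact Or.inr (dvd_zero b)
  · exact Or.inl (one_dvd b)
  · exact Or.inl ⟨-b, by ring⟩

include hinj in
lemma Nnotuniv {a : ℤ} (ha : ¬ Small a) : closedNbhd (powerGraph H) (g ^ a) ≠ Set.univ := by
  intro hu
  have hmem : g ^ (2 * a + 1) ∈ closedNbhd (powerGraph H) (g ^ a) := hu ▸ Set.mem_univ _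
  rw [memN hinj] at hmem
  unfold Small at ha
  push_neg at ha
  rcases hmem with hd | hd
  · have h1 : a ∣ 1 := by
      have := hd.sub (⟨2, by ring⟩ : a ∣ 2 * a)
      simpa using this
    have := dvd_natAbs_le h1 one_ne_zero
    omega
  · have := dvd_natAbs_le hd (by omega)
    omega

include hinj hsurj in
lemma class_small {a : ℤ} (ha : Small a) :
    eqvClass H (g ^ a) = {1, g, g⁻¹} := by
  ext y
  constructor
  · intro hy
    have hNy : closedNbhd (powerGraph H) y = Set.univ := by
      rw [show closedNbhd (powerGraph H) y = closedNbhd (powerGraph H) (g ^ a) from hy,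
        Nuniv hinj hsurj ha]
    obtain ⟨b, rfl⟩ := hsurj y
    have hb : Small b := by
      by_contra hbc
      exact Nnotuniv hinj hbc hNy
    rcases hb with rfl | rfl | rfl
    · rw [zpow_zero]
      exact Set.mem_insert _ _
    · rw [zpow_one]
      exact Set.mem_insert_iff.mpr (Or.inr (Set.mem_insert _ _))
    · rw [zpow_neg_one]
      exact Set.mem_insert_iff.mpr (Or.inr (Set.mem_insert_iff.mpr (Or.inr rfl)))
  · intro hy
    show closedNbhd (powerGraph H) y = closedNbhd (powerGraph H) (g ^ a)
    rw [Nuniv hinj hsurj ha]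
    rcases hy with hy1 | hy2 | hy3
    · rw [show y = g ^ (0:ℤ) by rw [zpow_zero]; exact hy1]
      exact Nuniv hinj hsurj (Or.inl rfl)
    · rw [show y = g ^ (1:ℤ) by rw [zpow_one]; exact hy2]
      exact Nuniv hinj hsurj (Or.inr (Or.inl rfl))
    · rw [show y = g ^ (-1:ℤ) by rw [zpow_neg_one]; exact hy3]
      exact Nuniv hinj hsurj (Or.inr (Or.inr rfl))

include hinj in
lemma div_step {a b : ℤ} (ha : ¬ Small a) (hb : ¬ Small b)
    (hN : closedNbhd (powerGraph H) (g ^ a) = closedNbhd (powerGraph H) (g ^ b))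
    (hd : a ∣ b) : b = a ∨ b = -a := by
  obtain ⟨k, rfl⟩ := hd
  unfold Small at ha hb
  push_neg at ha hb
  have ha0 : a ≠ 0 := ha.1
  have hk0 : k ≠ 0 := by
    rintro rfl
    rw [mul_zero] at hb
    exact hb.1 rfl
  rcases eq_or_ne k 1 with rfl | hk1
  · exact Or.inl (mul_one a)
  rcases eq_or_ne k (-1) with rfl | hkm1
  · exact Or.inr (by ring)
  -- now |k| ≥ 2, derive a contradiction
  exfalso
  have hw : g ^ (a * (2 * k + 1)) ∈ closedNbhd (powerGraph H) (g ^ a) :=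
    (memN hinj _ _).mpr (Or.inl ⟨2 * k + 1, rfl⟩)
  rw [hN, memN hinj] at hw
  rcases hw with hd' | hd'
  · have hk' : k ∣ 2 * k + 1 := (mul_dvd_mul_iff_left ha0).mp hd'
    have h1 : k ∣ 1 := by
      have := hk'.sub (⟨2, by ring⟩ : k ∣ 2 * k)
      simpa using this
    have := dvd_natAbs_le h1 one_ne_zero
    omega
  · have hk' : (2 * k + 1) ∣ k := (mul_dvd_mul_iff_left ha0).mp hd'
    have := dvd_natAbs_le hk' hk0
    omega

include hinj hsurj in
lemma class_big {a : ℤ} (ha : ¬ Small a) :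
    eqvClass H (g ^ a) = {g ^ a, g ^ (-a)} := by
  ext y
  constructor
  · intro hy
    obtain ⟨b, rfl⟩ := hsurj y
    have hN : closedNbhd (powerGraph H) (g ^ b) = closedNbhd (powerGraph H) (g ^ a) := hy
    have hb : ¬ Small b := by
      intro hsb
      exact Nnotuniv hinj ha (by rw [← hN, Nuniv hinj hsurj hsb])
    have hmem : g ^ b ∈ closedNbhd (powerGraph H) (g ^ a) := hN ▸ self_mem_closedNbhd _
    rw [memN hinj] at hmem
    have hba : b = a ∨ b = -a := by
      rcases hmem with hd | hd
      · exact div_step hinj ha hb hN.symm hd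
      · rcases div_step hinj hb ha hN hd with h | h
        · exact Or.inl h.symm
        · exact Or.inr (by omega)
    rcases hba with rfl | rfl
    · exact Set.mem_insert _ _
    · exact Set.mem_insert_iff.mpr (Or.inr rfl)
  · intro hy
    have hzp : Subgroup.zpowers (g ^ (-a)) = Subgroup.zpowers (g ^ a) := by
      rw [zpow_neg]
      exact Subgroup.zpowers_inv
    rcases hy with rfl | hy
    · exact mem_eqvClass_self _
    · have : y = g ^ (-a) := hy
      rw [this]
      exact closedNbhd_eq_of_zpowers_eq hzp

include hinj in
lemma g_ne_one : g ≠ 1 := by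
  intro h
  have : g ^ (1:ℤ) = g ^ (0:ℤ) := by rw [zpow_one, zpow_zero, h]
  have := hinj 1 0 this
  omega

include hinj in
lemma g_ne_inv : g ≠ g⁻¹ := by
  intro h
  have : g ^ (1:ℤ) = g ^ (-1:ℤ) := by rw [zpow_one, zpow_neg_one, ← h]
  have := hinj 1 (-1) this
  omega

include hinj in
lemma card3 : Nat.card ({1, g, g⁻¹} : Set H) = 3 := by
  have h1 : g ≠ 1 := g_ne_one hinj
  have h2 : g ≠ g⁻¹ := g_ne_inv hinj
  have h3 : g⁻¹ ≠ 1 := fun h => h1 (by rw [← inv_inv g, h, inv_one])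
  rw [Nat.card_coe_set_eq,
    Set.ncard_insert_of_notMem (by
      simp only [Set.mem_insert_iff, Set.mem_singleton_iff]
      push_neg
      exact ⟨fun h => h1 h.symm, fun h => h3 h.symm⟩) (Set.toFinite _),
    Set.ncard_pair h2]

include hinj in
lemma card2 {a : ℤ} (ha : ¬ Small a) : Nat.card ({g ^ a, g ^ (-a)} : Set H) = 2 := by
  have hne : g ^ a ≠ g ^ (-a) := by
    intro h
    have := hinj a (-a) h
    unfold Small at ha
    omega
  rw [Nat.card_coe_set_eq, Set.ncard_pair hne]

end Forward

lemma forward {G : Type*} [Group G] (f : G ≃* Multiplicative ℤ) :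
    (∀ x : G, Nat.card (eqvClass G x) = 2 ∨ Nat.card (eqvClass G x) = 3) ∧
      (∃! c : Set G, (∃ x : G, c = eqvClass G x) ∧ Nat.card c = 3) ∧
      {c : Set G | (∃ x : G, c = eqvClass G x) ∧ Nat.card c = 2}.Countable ∧
      {c : Set G | (∃ x : G, c = eqvClass G x) ∧ Nat.card c = 2}.Infinite := by
  set g : G := f.symm (Multiplicative.ofAdd 1) with hg
  have hfg : f g = Multiplicative.ofAdd 1 := f.apply_symm_apply _
  have hfgz : ∀ n : ℤ, f (g ^ n) = Multiplicative.ofAdd n := by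
    intro n
    rw [map_zpow, hfg, ← ofAdd_zsmul]
    congr 1
    simp
  have hinj : ∀ a b : ℤ, g ^ a = g ^ b → a = b := by
    intro a b hab
    have := congrArg f hab
    rw [hfgz, hfgz] at this
    exact Multiplicative.ofAdd.injective this
  have hsurj : ∀ y : G, ∃ n : ℤ, y = g ^ n := by
    intro y
    refine ⟨Multiplicative.toAdd (f y), f.injective ?_⟩
    rw [hfgz]
    simp
  refine ⟨?_, ?_, ?_, ?_⟩
  · -- all classes have size 2 or 3
    intro x
    obtain ⟨a, rfl⟩ := hsurj x
    by_cases ha : Small a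
    · right
      rw [class_small hinj hsurj ha]
      exact card3 hinj
    · left
      rw [class_big hinj hsurj ha]
      exact card2 hinj ha
  · -- unique class of size 3
    refine ⟨{1, g, g⁻¹}, ⟨⟨1, ?_⟩, card3 hinj⟩, ?_⟩
    · have hcs := class_small hinj hsurj (g := g) (Or.inl rfl)
      rw [zpow_zero] at hcs
      exact hcs.symm
    · rintro c ⟨⟨z, rfl⟩, hc3⟩
      obtain ⟨b, rfl⟩ := hsurj z
      by_cases hb : Small b
      · rw [class_small hinj hsurj hb]
      · rw [class_big hinj hsurj hb] at hc3 ⊢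
        rw [card2 hinj hb] at hc3
        omega
  · -- countably many classes of size 2
    have hcnt : Countable G :=
      Function.Surjective.countable (f := fun n : ℤ => g ^ n)
        (fun y => by obtain ⟨n, hn⟩ := hsurj y; exact ⟨n, hn.symm⟩)
    refine Set.Countable.mono ?_ (Set.countable_range (eqvClass G))
    rintro c ⟨⟨z, rfl⟩, -⟩
    exact ⟨z, rfl⟩
  · -- infinitely many classes of size 2
    refine Set.infinite_of_injective_forall_mem
      (f := fun n : ℕ => eqvClass G (g ^ ((n : ℤ) + 2))) ?_ ?_
    · intro n m hnm
      simp only at hnm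
      have hm : g ^ ((m:ℤ) + 2) ∈ eqvClass G (g ^ ((n:ℤ) + 2)) := by
        rw [hnm]
        exact mem_eqvClass_self _
      rw [class_big hinj hsurj (by unfold Small; omega)] at hm
      rcases hm with hm | hm
      · have := hinj _ _ hm
        omega
      · have := hinj _ _ (hm : g ^ ((m:ℤ) + 2) = g ^ (-((n:ℤ) + 2)))
        omega
    · intro n
      refine ⟨⟨g ^ ((n:ℤ) + 2), rfl⟩, ?_⟩
      show Nat.card (eqvClass G (g ^ ((n:ℤ) + 2))) = 2
      rw [class_big hinj hsurj (by unfold Small; omega)]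
      exact card2 hinj (by unfold Small; omega)

end PGAux

/-- Suppose the center of the power graph of `G` has more than one element. Then
`G ≅ (ℤ,+)` iff `G` is the union of countably many `≡_G`-classes of cardinality `2`
together with exactly one `≡_G`-class of cardinality `3`. -/
theorem iso_int_iff_eqvClasses {G : Type*} [Group G]
    (h : (graphCenter (powerGraph G)).Nontrivial) :
    Nonempty (G ≃* Multiplicative ℤ) ↔
      ((∀ x : G, Nat.card (eqvClass G x) = 2 ∨ Nat.card (eqvClass G x) = 3) ∧
        (∃! c : Set G, (∃ x : G, c = eqvClass G x) ∧ Nat.card c = 3) ∧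
        {c : Set G | (∃ x : G, c = eqvClass G x) ∧ Nat.card c = 2}.Countable ∧
        {c : Set G | (∃ x : G, c = eqvClass G x) ∧ Nat.card c = 2}.Infinite) := by
  constructor
  · rintro ⟨f⟩
    exact PGAux.forward f
  · rintro ⟨h2or3, h3u, hcount, hinf⟩
    exact PGAux.backward h h2or3 h3u.exists hinf
end

section
/- Let G be a group and let x ∈ G be an element of infinite order. Then x and x⁻¹ lie in different connected components of the N-power graph 𝒢⁺(G). -/
set_option linter.unusedVariables false

/-- If `x` has infinite order, then `x` and `x⁻¹` lie in different connected components of the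
N-power graph. -/
theorem inv_not_in_same_component_nPowerGraph {G : Type*} [Group G] (x : G)
    (hx : ¬ IsOfFinOrder x) :
    (nPowerGraph G).connectedComponentMk x ≠ (nPowerGraph G).connectedComponentMk x⁻¹ := by
  intro h
  rw [SimpleGraph.ConnectedComponent.eq] at h
  obtain ⟨w⟩ := h
  have key : ∀ {a b : G} (w : (nPowerGraph G).Walk a b),
      ∃ p q : ℕ, 0 < p ∧ 0 < q ∧ a ^ p = b ^ q := by
    intro a b w
    induction w with
    | nil => exact ⟨1, 1, one_pos, one_pos, rfl⟩
    | cons hadj w ih =>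
      obtain ⟨p, q, hp, hq, he⟩ := ih
      obtain ⟨hne, n, hn, hcase⟩ := hadj
      rcases hcase with h1 | h1
      · exact ⟨n * p, q, Nat.mul_pos hn hp, hq, by rw [pow_mul, ← h1, he]⟩
      · refine ⟨p, n * q, hp, Nat.mul_pos hn hq, ?_⟩
        rw [h1, ← pow_mul, mul_comm n p, pow_mul, he, ← pow_mul, mul_comm]
  obtain ⟨p, q, hp, hq, he⟩ := key w
  apply hx
  rw [isOfFinOrder_iff_pow_eq_one]
  refine ⟨p + q, by positivity, ?_⟩
  rw [pow_add, he, inv_pow, inv_mul_cancel]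
end

section
/- Let G be a group and let x ∈ G be an element of infinite order. Define S̄(x) = { y ∈ G : ∃ n, m ∈ ℕ with n, m ≥ 1 and y^m = x^n }. Then S̄(x) is the vertex set of a connected component of the N-power graph 𝒢⁺(G), and x⁻¹ ∉ S̄(x). -/
set_option linter.unusedVariables false

/-- For `x` of infinite order, the set `S̄(x) = {y | ∃ n m ≥ 1, y ^ m = x ^ n}` is the vertex set
of a connected component of the N-power graph (namely, that of `x`), and `x⁻¹ ∉ S̄(x)`. -/
theorem sbar_is_component_and_inv_not_mem {G : Type*} [Group G] (x : G)
    (hx : ¬ IsOfFinOrder x) :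
    {y : G | ∃ n m : ℕ, 1 ≤ n ∧ 1 ≤ m ∧ y ^ m = x ^ n} =
        ((nPowerGraph G).connectedComponentMk x).supp ∧
      x⁻¹ ∉ {y : G | ∃ n m : ℕ, 1 ≤ n ∧ 1 ≤ m ∧ y ^ m = x ^ n} := by
  constructor
  · ext y
    simp only [Set.mem_setOf_eq, SimpleGraph.ConnectedComponent.mem_supp_iff,
      SimpleGraph.ConnectedComponent.eq]
    constructor
    · rintro ⟨n, m, hn, hm, h⟩
      have h1 : (nPowerGraph G).Reachable y (y ^ m) := by
        by_cases he : y = y ^ m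
        · rw [← he]
        · exact SimpleGraph.Adj.reachable ⟨he, m, hm, Or.inl rfl⟩
      have h2 : (nPowerGraph G).Reachable x (x ^ n) := by
        by_cases he : x = x ^ n
        · rw [← he]
        · exact SimpleGraph.Adj.reachable ⟨he, n, hn, Or.inl rfl⟩
      rw [h] at h1
      exact h1.trans h2.symm
    · intro hr
      obtain ⟨w⟩ := hr.symm
      have key : ∀ {a b : G}, (nPowerGraph G).Walk a b →
          (∃ n m : ℕ, 1 ≤ n ∧ 1 ≤ m ∧ a ^ m = x ^ n) →
          (∃ n m : ℕ, 1 ≤ n ∧ 1 ≤ m ∧ b ^ m = x ^ n) := by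
        intro a b w
        induction w with
        | nil => exact id
        | @cons a c b h p ih =>
          intro ha
          apply ih
          obtain ⟨n, m, hn, hm, hab⟩ := ha
          obtain ⟨hne, k, hk, hc⟩ := h
          rcases hc with h1 | h1
          · exact ⟨n * k, m, Nat.one_le_iff_ne_zero.mpr (by positivity), hm, by
              rw [h1, ← pow_mul, mul_comm k m, pow_mul, hab, ← pow_mul]⟩
          · exact ⟨n, k * m, hn, Nat.one_le_iff_ne_zero.mpr (by positivity), by
              rw [pow_mul, ← h1, hab]⟩
      exact key w ⟨1, 1, le_refl 1, le_refl 1, by simp⟩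
  · rintro ⟨n, m, hn, hm, h⟩
    rw [inv_pow] at h
    have hpow : x ^ (n + m) = 1 := by
      rw [pow_add, ← h]
      simp
    exact hx (isOfFinOrder_iff_pow_eq_one.mpr ⟨n + m, by omega, hpow⟩)
end

section
/- Let G be a group and let Φ be a connected component of the Z±-power graph 𝒢±(G) that contains an element of infinite order, and let x be an element of infinite order in Φ. Let Ψ be the connected component of the N-power graph 𝒢⁺(G) containing x. Then Φ is isomorphic to the strong product Ψ ⊠ P₂, where P₂ is the path (complete graph) on two vertices. -/
set_option linter.unusedVariables false

/-- The strong product of two simple graphs. -/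
def strongProd {α β : Type*} (Γ : SimpleGraph α) (Δ : SimpleGraph β) :
    SimpleGraph (α × β) where
  Adj p q := (p.1 = q.1 ∧ Δ.Adj p.2 q.2) ∨ (Γ.Adj p.1 q.1 ∧ p.2 = q.2) ∨
    (Γ.Adj p.1 q.1 ∧ Δ.Adj p.2 q.2)
  symm := by
    refine ⟨?_⟩
    rintro p q (⟨h1, h2⟩ | ⟨h1, h2⟩ | ⟨h1, h2⟩)
    · exact Or.inl ⟨h1.symm, h2.symm⟩
    · exact Or.inr (Or.inl ⟨h1.symm, h2.symm⟩)
    · exact Or.inr (Or.inr ⟨h1.symm, h2.symm⟩)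
  loopless := by
    refine ⟨?_⟩
    rintro p (⟨h1, h2⟩ | ⟨h1, h2⟩ | ⟨h1, h2⟩)
    · exact Δ.loopless.irrefl _ h2
    · exact Γ.loopless.irrefl _ h1
    · exact Γ.loopless.irrefl _ h1

set_option linter.unusedSectionVars false

namespace ZpmAux
variable {G : Type*} [Group G]

/-- a^m = b^n for positive m n -/
def Rel (a b : G) : Prop := ∃ m n : ℕ, 0 < m ∧ 0 < n ∧ a ^ m = b ^ n

lemma Rel.refl (a : G) : Rel a a := ⟨1, 1, one_pos, one_pos, rfl⟩

lemma Rel.symm {a b : G} (h : Rel a b) : Rel b a :=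
  let ⟨m, n, hm, hn, h⟩ := h; ⟨n, m, hn, hm, h.symm⟩

lemma Rel.trans {a b c : G} (h1 : Rel a b) (h2 : Rel b c) : Rel a c := by
  obtain ⟨m, n, hm, hn, e1⟩ := h1
  obtain ⟨p, q, hp, hq, e2⟩ := h2
  refine ⟨m * p, q * n, Nat.mul_pos hm hp, Nat.mul_pos hq hn, ?_⟩
  calc a ^ (m * p) = (a ^ m) ^ p := pow_mul a m p
    _ = (b ^ n) ^ p := by rw [e1]
    _ = (b ^ p) ^ n := by rw [← pow_mul, mul_comm, pow_mul]
    _ = (c ^ q) ^ n := by rw [e2]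
    _ = c ^ (q * n) := (pow_mul c q n).symm

lemma Rel.inv {a b : G} (h : Rel a b) : Rel a⁻¹ b⁻¹ :=
  let ⟨m, n, hm, hn, e⟩ := h; ⟨m, n, hm, hn, by rw [inv_pow, inv_pow, e]⟩

lemma isOfFinOrder_of_rel_inv {a : G} (h : Rel a a⁻¹) : IsOfFinOrder a := by
  obtain ⟨m, n, hm, hn, e⟩ := h
  rw [inv_pow] at e
  refine isOfFinOrder_iff_pow_eq_one.2 ⟨m + n, by omega, ?_⟩
  rw [pow_add, e, inv_mul_cancel]

lemma rel_of_npow_adj {a b : G} (h : (nPowerGraph G).Adj a b) : Rel a b := by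
  obtain ⟨-, n, hn, h | h⟩ := h
  · exact ⟨n, 1, hn, one_pos, by rw [h, pow_one]⟩
  · exact ⟨1, n, one_pos, hn, by rw [h, pow_one]⟩

lemma rel_of_reachable {a b : G} (h : (nPowerGraph G).Reachable a b) : Rel a b := by
  rw [SimpleGraph.reachable_iff_reflTransGen] at h
  induction h with
  | refl => exact Rel.refl a
  | tail _ hadj ih => exact ih.trans (rel_of_npow_adj hadj)

/-- inversion as a hom of the N-power graph -/
lemma npow_adj_inv {a b : G} (h : (nPowerGraph G).Adj a b) :
    (nPowerGraph G).Adj a⁻¹ b⁻¹ := by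
  obtain ⟨hne, n, hn, h | h⟩ := h
  · exact ⟨fun e => hne (inv_injective e), n, hn, Or.inl (by rw [h, inv_pow])⟩
  · exact ⟨fun e => hne (inv_injective e), n, hn, Or.inr (by rw [h, inv_pow])⟩

lemma npow_reachable_inv {a b : G} (h : (nPowerGraph G).Reachable a b) :
    (nPowerGraph G).Reachable a⁻¹ b⁻¹ := by
  rw [SimpleGraph.reachable_iff_reflTransGen] at h ⊢
  induction h with
  | refl => exact Relation.ReflTransGen.refl
  | tail _ hadj ih => exact ih.tail (npow_adj_inv hadj)

lemma zpm_adj_inv {a b : G} (h : (zpmPowerGraph G).Adj a b) :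
    (zpmPowerGraph G).Adj a⁻¹ b⁻¹ := by
  obtain ⟨hne, n, hn, h | h⟩ := h
  · exact ⟨fun e => hne (inv_injective e), n, hn, Or.inl (by rw [h, inv_zpow])⟩
  · exact ⟨fun e => hne (inv_injective e), n, hn, Or.inr (by rw [h, inv_zpow])⟩

lemma npow_adj_zpm {a b : G} (h : (nPowerGraph G).Adj a b) :
    (zpmPowerGraph G).Adj a b := by
  obtain ⟨hne, n, hn, h | h⟩ := h
  · exact ⟨hne, n, Int.natCast_ne_zero.2 hn.ne', Or.inl (by rw [h, zpow_natCast])⟩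
  · exact ⟨hne, n, Int.natCast_ne_zero.2 hn.ne', Or.inr (by rw [h, zpow_natCast])⟩

lemma pos_case {a b : G} {n : ℤ} (hn : 0 < n) (h : b = a ^ n) : b = a ^ n.toNat := by
  rw [h, ← zpow_natCast, Int.toNat_of_nonneg hn.le]

lemma neg_case {a b : G} {n : ℤ} (hn : n < 0) (h : b = a ^ n) : b⁻¹ = a ^ (-n).toNat := by
  rw [h, ← zpow_natCast, Int.toNat_of_nonneg (by omega), ← zpow_neg]

end ZpmAux

namespace ZpmAux

section Main

variable {G : Type*} [Group G] {x : G} (hx : ¬ IsOfFinOrder x)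

include hx

lemma hdisj {a : G} (ha : (nPowerGraph G).Reachable a x)
    (ha' : (nPowerGraph G).Reachable a⁻¹ x) : False := by
  have r1 : Rel a x := rel_of_reachable ha
  have r2 : Rel a⁻¹ x := rel_of_reachable ha'
  exact hx (isOfFinOrder_of_rel_inv (r2.symm.trans r1.inv))

lemma inf_of_reach {a : G} (ha : (nPowerGraph G).Reachable a x) : ¬ IsOfFinOrder a := by
  intro hfin
  obtain ⟨m, n, hm, hn, e⟩ := rel_of_reachable ha
  obtain ⟨k, hk, hk1⟩ := isOfFinOrder_iff_pow_eq_one.1 hfin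
  refine hx (isOfFinOrder_iff_pow_eq_one.2 ⟨n * k, Nat.mul_pos hn hk, ?_⟩)
  calc x ^ (n * k) = (x ^ n) ^ k := pow_mul x n k
    _ = (a ^ m) ^ k := by rw [e]
    _ = (a ^ k) ^ m := by rw [← pow_mul, mul_comm, pow_mul]
    _ = 1 := by rw [hk1, one_pow]

omit hx

lemma ne_inv_of_inf {u : G} (hu : ¬ IsOfFinOrder u) : u ≠ u⁻¹ := by
  intro e
  refine hu (isOfFinOrder_iff_pow_eq_one.2 ⟨2, two_pos, ?_⟩)
  rw [pow_two]
  nth_rewrite 2 [e]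
  exact mul_inv_cancel u

lemma mem_of_pow {a b : G} (ha : (nPowerGraph G).Reachable a x) {m : ℕ} (hm : 0 < m)
    (h : b = a ^ m ∨ a = b ^ m) : (nPowerGraph G).Reachable b x := by
  by_cases hab : b = a
  · exact hab ▸ ha
  · exact ((SimpleGraph.Adj.reachable (⟨fun e => hab e.symm, m, hm, h⟩ :
      (nPowerGraph G).Adj a b)).symm).trans ha

include hx

lemma hclosed {b c : G} (hb : (nPowerGraph G).Reachable b x)
    (h : (zpmPowerGraph G).Adj b c) :
    (nPowerGraph G).Reachable c x ∨ (nPowerGraph G).Reachable c⁻¹ x := by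
  obtain ⟨hne, n, hn, h | h⟩ := h
  · rcases lt_trichotomy n 0 with hlt | rfl | hgt
    · right
      exact mem_of_pow hb (by omega) (Or.inl (neg_case hlt h))
    · exact absurd rfl hn
    · left
      exact mem_of_pow hb (by omega) (Or.inl (pos_case hgt h))
  · rcases lt_trichotomy n 0 with hlt | rfl | hgt
    · right
      have h2 : b⁻¹ = c ^ (-n).toNat := neg_case hlt h
      have h3 : b = (c⁻¹) ^ (-n).toNat := by rw [inv_pow, ← h2, inv_inv]
      exact mem_of_pow hb (by omega) (Or.inr h3)
    · exact absurd rfl hn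
    · left
      exact mem_of_pow hb (by omega) (Or.inr (pos_case hgt h))

lemma phi_mem {u : G} :
    (zpmPowerGraph G).Reachable u x ↔
      ((nPowerGraph G).Reachable u x ∨ (nPowerGraph G).Reachable u⁻¹ x) := by
  constructor
  · intro h
    have h' : Relation.ReflTransGen (zpmPowerGraph G).Adj x u :=
      (SimpleGraph.reachable_iff_reflTransGen _ _).1 h.symm
    clear h
    induction h' with
    | refl => exact Or.inl (SimpleGraph.Reachable.refl x)
    | tail _ hadj ih =>
      rcases ih with hb | hb
      · exact hclosed hx hb hadj
      · rcases hclosed hx hb (zpm_adj_inv hadj) with h1 | h1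
        · exact Or.inr h1
        · exact Or.inl (by rwa [inv_inv] at h1)
  · rintro (h | h)
    · exact h.map (⟨id, npow_adj_zpm⟩ : nPowerGraph G →g zpmPowerGraph G)
    · have hu : ¬ IsOfFinOrder u := fun hf => inf_of_reach hx h (hf.inv)
      have hne : u ≠ u⁻¹ := ne_inv_of_inf hu
      have hadj : (zpmPowerGraph G).Adj u u⁻¹ :=
        ⟨hne, -1, by norm_num, Or.inl (zpow_neg_one u).symm⟩
      exact hadj.reachable.trans
        (h.map (⟨id, npow_adj_zpm⟩ : nPowerGraph G →g zpmPowerGraph G))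

lemma adj_one {a b : G} (ha : (nPowerGraph G).Reachable a x)
    (hb : (nPowerGraph G).Reachable b x) :
    (zpmPowerGraph G).Adj a b ↔ (nPowerGraph G).Adj a b := by
  constructor
  · rintro ⟨hne, n, hn, h | h⟩
    · rcases lt_trichotomy n 0 with hlt | rfl | hgt
      · exact absurd (mem_of_pow ha (m := (-n).toNat) (by omega) (Or.inl (neg_case hlt h)))
          (fun hr => (hdisj hx hb hr).elim)
      · exact absurd rfl hn
      · exact ⟨hne, n.toNat, by omega, Or.inl (pos_case hgt h)⟩
    · rcases lt_trichotomy n 0 with hlt | rfl | hgt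
      · exact absurd (mem_of_pow hb (m := (-n).toNat) (by omega) (Or.inl (neg_case hlt h)))
          (fun hr => (hdisj hx ha hr).elim)
      · exact absurd rfl hn
      · exact ⟨hne, n.toNat, by omega, Or.inr (pos_case hgt h)⟩
  · exact npow_adj_zpm

lemma adj_two {a b : G} (ha : (nPowerGraph G).Reachable a x)
    (hb : (nPowerGraph G).Reachable b x) :
    (zpmPowerGraph G).Adj a b⁻¹ ↔ (a = b ∨ (nPowerGraph G).Adj a b) := by
  constructor
  · rintro ⟨hne, n, hn, h | h⟩
    · rcases lt_trichotomy n 0 with hlt | rfl | hgt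
      · -- b⁻¹ = a ^ n, n < 0 : then (b⁻¹)⁻¹ = b = a ^ m
        have h2 : b = a ^ (-n).toNat := by
          have := neg_case hlt h; rwa [inv_inv] at this
        by_cases hab : a = b
        · exact Or.inl hab
        · exact Or.inr ⟨hab, (-n).toNat, by omega, Or.inl h2⟩
      · exact absurd rfl hn
      · exact absurd (mem_of_pow ha (m := n.toNat) (by omega) (Or.inl (pos_case hgt h)))
          (fun hr => (hdisj hx hb hr).elim)
    · rcases lt_trichotomy n 0 with hlt | rfl | hgt
      · -- a = (b⁻¹) ^ n, n < 0 : a⁻¹ = (b⁻¹)^m so a = b ^ m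
        have h2 : a⁻¹ = (b⁻¹) ^ (-n).toNat := neg_case hlt h
        have h3 : a = b ^ (-n).toNat := by
          rw [inv_pow] at h2
          rw [← inv_inv a, h2, inv_inv]
        by_cases hab : a = b
        · exact Or.inl hab
        · exact Or.inr ⟨hab, (-n).toNat, by omega, Or.inr h3⟩
      · exact absurd rfl hn
      · -- a = (b⁻¹) ^ n, n > 0 : b⁻¹ in component
        exact absurd (mem_of_pow ha (m := n.toNat) (by omega) (Or.inr (pos_case hgt h)))
          (fun hr => (hdisj hx hb hr).elim)
  · rintro (rfl | ⟨hne, k, hk, h | h⟩)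
    · have hu : ¬ IsOfFinOrder a := inf_of_reach hx ha
      have hne : a ≠ a⁻¹ := ne_inv_of_inf hu
      exact ⟨hne, -1, by norm_num, Or.inl (zpow_neg_one a).symm⟩
    · refine ⟨fun e => hdisj hx hb (e ▸ ha), -(k : ℤ), by omega, Or.inl ?_⟩
      rw [h, zpow_neg, zpow_natCast]
    · refine ⟨fun e => hdisj hx hb (e ▸ ha), -(k : ℤ), by omega, Or.inr ?_⟩
      rw [zpow_neg, zpow_natCast, inv_pow, inv_inv]
      exact h

end Main
end ZpmAux

namespace ZpmAux

lemma zpm_adj_inv_iff {G : Type*} [Group G] {a b : G} :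
    (zpmPowerGraph G).Adj a⁻¹ b⁻¹ ↔ (zpmPowerGraph G).Adj a b :=
  ⟨fun h => by simpa using zpm_adj_inv h, zpm_adj_inv⟩

end ZpmAux

open ZpmAux in
/-- Let `Φ` be the connected component of the Z±-power graph containing an element `x` of
infinite order, and `Ψ` the connected component of the N-power graph containing `x`. Then
`Φ ≅ Ψ ⊠ P₂`, where `P₂` is the complete graph on two vertices. -/
theorem zpm_component_iso_strongProd {G : Type*} [Group G] (x : G)
    (hx : ¬ IsOfFinOrder x) :
    Nonempty
      ((zpmPowerGraph G).induce ((zpmPowerGraph G).connectedComponentMk x).supp ≃g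
        strongProd ((nPowerGraph G).induce ((nPowerGraph G).connectedComponentMk x).supp)
          (⊤ : SimpleGraph (Fin 2))) := by
  classical
  set SP : Set G := ((nPowerGraph G).connectedComponentMk x).supp with hSP
  set SZ : Set G := ((zpmPowerGraph G).connectedComponentMk x).supp with hSZ
  have memP : ∀ a : G, a ∈ SP ↔ (nPowerGraph G).Reachable a x := fun a => by
    rw [hSP, SimpleGraph.ConnectedComponent.mem_supp_iff, SimpleGraph.ConnectedComponent.eq]
  have memZ : ∀ a : G, a ∈ SZ ↔ (zpmPowerGraph G).Reachable a x := fun a => by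
    rw [hSZ, SimpleGraph.ConnectedComponent.mem_supp_iff, SimpleGraph.ConnectedComponent.eq]
  let f : (SP × Fin 2) → SZ := fun p =>
    if p.2 = 0 then
      ⟨p.1.1, (memZ _).2 ((phi_mem hx).2 (Or.inl ((memP _).1 p.1.2)))⟩
    else
      ⟨(p.1.1)⁻¹, (memZ _).2 ((phi_mem hx).2 (Or.inr (by
        rw [inv_inv]; exact (memP _).1 p.1.2)))⟩
  have hinj : Function.Injective f := by
    rintro ⟨⟨a, ha⟩, i⟩ ⟨⟨b, hb⟩, j⟩ h
    have ra := (memP a).1 ha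
    have rb := (memP b).1 hb
    fin_cases i <;> fin_cases j
    · have : a = b := by simpa [f, Subtype.ext_iff] using h
      simp [this]
    · have hab : a = b⁻¹ := by simpa [f, Subtype.ext_iff] using h
      exact absurd (hab ▸ ra) (fun hr => (hdisj hx rb hr).elim)
    · have hab : a⁻¹ = b := by simpa [f, Subtype.ext_iff] using h
      exact absurd (hab ▸ rb) (fun hr => (hdisj hx ra hr).elim)
    · have : a = b := by
        have h2 : a⁻¹ = b⁻¹ := by simpa [f, Subtype.ext_iff] using h
        simpa using inv_injective h2
      simp [this]
  have hsurj : Function.Surjective f := by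
    rintro ⟨u, hu⟩
    rcases (phi_mem hx).1 ((memZ u).1 hu) with h | h
    · exact ⟨(⟨u, (memP u).2 h⟩, 0), Subtype.ext (by simp [f])⟩
    · exact ⟨(⟨u⁻¹, (memP _).2 h⟩, 1), Subtype.ext (by simp [f])⟩
  let e := Equiv.ofBijective f ⟨hinj, hsurj⟩
  have hmap : ∀ (p q : SP × Fin 2),
      (zpmPowerGraph G).Adj (f p).1 (f q).1 ↔
        (strongProd ((nPowerGraph G).induce SP) (⊤ : SimpleGraph (Fin 2))).Adj p q := by
    rintro ⟨⟨a, ha⟩, i⟩ ⟨⟨b, hb⟩, j⟩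
    have ra := (memP a).1 ha
    have rb := (memP b).1 hb
    have hIndAdj : ∀ (u v : SP), ((nPowerGraph G).induce SP).Adj u v ↔
        (nPowerGraph G).Adj u.1 v.1 := fun u v => Iff.rfl
    have h10 : (zpmPowerGraph G).Adj a⁻¹ b ↔ (a = b ∨ (nPowerGraph G).Adj a b) := by
      rw [SimpleGraph.adj_comm, adj_two hx rb ra, SimpleGraph.adj_comm (nPowerGraph G) b a,
        eq_comm]
    fin_cases i <;> fin_cases j <;>
      simp only [f, strongProd, Fin.isValue, SimpleGraph.top_adj, hIndAdj,
        Subtype.mk.injEq, Prod.mk.injEq] <;>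
      norm_num
    · exact adj_one hx ra rb
    · exact adj_two hx ra rb
    · exact h10
    · exact zpm_adj_inv_iff.trans (adj_one hx ra rb)
  exact ⟨(SimpleGraph.Iso.symm ⟨e, fun {p q} => hmap p q⟩)⟩
end

section
/- Let G be a torsion-free group and let x, y ∈ G with x ∉ {y, y⁻¹}. If y = x^n for some nonzero integer n (i.e. x → y in the directed Z±-power graph), then the set S_G(y,x), consisting of the vertices lying in the closed neighborhood of x but not in the closed neighborhood of y in 𝒢±(G), is infinite. -/
set_option linter.unusedVariables false

/-- A monoid is torsion-free if every non-identity element has infinite order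
(the definition of `Monoid.IsTorsionFree` in the older Mathlib). -/
def Monoid.IsTorsionFree (G : Type*) [Monoid G] : Prop :=
  ∀ g : G, g ≠ 1 → ¬IsOfFinOrder g

/-- In a torsion-free group, if `x ∉ {y, y⁻¹}` and `y = x ^ n` for some nonzero integer `n`,
then the set of vertices lying in the closed neighborhood of `x` but not in the closed
neighborhood of `y` in the Z±-power graph is infinite. -/
theorem S_infinite_of_dir {G : Type*} [Group G] (hG : Monoid.IsTorsionFree G)
    (x y : G) (hxy : x ≠ y ∧ x ≠ y⁻¹) (h : ∃ n : ℤ, n ≠ 0 ∧ y = x ^ n) :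
    (closedNbhd (zpmPowerGraph G) x \ closedNbhd (zpmPowerGraph G) y).Infinite := by
  obtain ⟨n, hn0, hy⟩ := h
  have hx1 : x ≠ 1 := by
    rintro rfl
    exact hxy.1 (by simp [hy])
  have hinj0 : Function.Injective fun k : ℤ => x ^ k :=
    injective_zpow_iff_not_isOfFinOrder.mpr (hG x hx1)
  have hinj : ∀ p q : ℤ, x ^ p = x ^ q → p = q := fun p q h => hinj0 h
  have hn1 : n ≠ 1 := by rintro rfl; exact hxy.1 (by simp [hy])
  have hnm1 : n ≠ -1 := by rintro rfl; exact hxy.2 (by simp [hy])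
  set a : ℤ := (n.natAbs : ℤ) with ha
  have hnabs : 2 ≤ a := by omega
  have han : a ∣ n := Int.natAbs_dvd.mpr dvd_rfl
  set f : ℕ → G := fun m => x ^ ((m + 1 : ℤ) * a + 1) with hf
  refine Set.infinite_of_injective_forall_mem (f := f) ?_ ?_
  · intro p q hpq
    have h2 : ((p : ℤ) + 1) * a + 1 = ((q : ℤ) + 1) * a + 1 := hinj _ _ hpq
    have h3 : ((p : ℤ) + 1) * a = ((q : ℤ) + 1) * a := by linarith
    have h4 := mul_right_cancel₀ (show a ≠ 0 by omega) h3
    omega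
  · intro m
    set e : ℤ := (m + 1 : ℤ) * a + 1 with he
    have hea : a < e := by nlinarith
    have he1 : (1 : ℤ) < e := by nlinarith
    have hxe : x ≠ x ^ e := by
      intro hc
      have : (1 : ℤ) = e := hinj _ _ (by simpa using hc)
      omega
    constructor
    · right
      exact ⟨hxe, e, by omega, Or.inl rfl⟩
    · rintro (hc | hc)
      · -- f m = y
        rw [hy] at hc
        have : e = n := hinj _ _ hc
        omega
      · obtain ⟨hne, k, hk0, hk⟩ := hc
        rcases hk with hk | hk
        · -- x^e = y^k = x^(n*k)
          rw [hy, ← zpow_mul] at hk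
          have heq : e = n * k := hinj _ _ hk
          have hdvd : a ∣ e := heq ▸ dvd_mul_of_dvd_left han k
          have h1 : a ∣ e - (m + 1 : ℤ) * a := dvd_sub hdvd ⟨(m + 1 : ℤ), mul_comm _ _⟩
          have h2 : e - (m + 1 : ℤ) * a = 1 := by rw [he]; ring
          rw [h2] at h1
          have := Int.le_of_dvd one_pos h1
          omega
        · -- y = (x^e)^k, i.e. x^n = x^(e*k)
          rw [hy, ← zpow_mul] at hk
          have hek : n = e * k := hinj _ _ hk
          have hk1 : (1 : ℤ) ≤ |k| := Int.one_le_abs hk0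
          have hlt : a < |e * k| := by
            rw [abs_mul, abs_of_pos (show (0:ℤ) < e by omega)]
            calc a < e := hea
              _ = e * 1 := (mul_one e).symm
              _ ≤ e * |k| := by
                  exact mul_le_mul_of_nonneg_left hk1 (by omega)
          rw [← hek, Int.abs_eq_natAbs] at hlt
          omega
end

section
/- Let G be a torsion-free group in which every non-identity element is contained in a unique maximal cyclic subgroup, and let x, y ∈ G with x ∉ {y, y⁻¹} be adjacent in the Z±-power graph 𝒢±(G). Then y = x^n for some nonzero integer n if and only if the set S_G(x,y), consisting of the vertices lying in the closed neighborhood of y but not in the closed neighborhood of x in 𝒢±(G), is finite. -/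
set_option linter.unusedVariables false

lemma eq_one_of_zpow_eq_one' {G : Type*} [Group G] (hG : Monoid.IsTorsionFree G)
    {g : G} {n : ℤ} (hn : n ≠ 0) (h : g ^ n = 1) : g = 1 := by
  by_contra hg
  have hi := injective_zpow_iff_not_isOfFinOrder.2 (hG g hg)
  exact hn (hi (show g ^ n = g ^ (0:ℤ) by simpa using h))

lemma divisors_finite' {b : ℤ} (hb : b ≠ 0) : {k : ℤ | k ∣ b}.Finite := by
  apply (Set.finite_Icc (-|b|) |b|).subset
  intro k hk
  have h1 : |k| ≤ |b| := Int.le_of_dvd (abs_pos.2 hb) ((abs_dvd _ _).2 ((dvd_abs _ _).2 hk))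
  rcases abs_le.1 h1 with ⟨h2, h3⟩
  exact Set.mem_Icc.2 ⟨h2, h3⟩

/-- In a torsion-free group in which every non-identity element lies in a unique maximal cyclic
subgroup, for adjacent `x, y` in the Z±-power graph with `x ∉ {y, y⁻¹}`: `y` is a nonzero power
of `x` iff the set of vertices in the closed neighborhood of `y` but not of `x` is finite. -/
theorem dir_iff_S_finite {G : Type*} [Group G] (hG : Monoid.IsTorsionFree G)
    (huniq : ∀ g : G, g ≠ 1 → ∃! C : Subgroup G,
      (IsCyclic C ∧ ∀ D : Subgroup G, IsCyclic D → C ≤ D → C = D) ∧ g ∈ C)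
    (x y : G) (hxy : x ≠ y ∧ x ≠ y⁻¹) (hadj : (zpmPowerGraph G).Adj x y) :
    (∃ n : ℤ, n ≠ 0 ∧ y = x ^ n) ↔
      (closedNbhd (zpmPowerGraph G) y \ closedNbhd (zpmPowerGraph G) x).Finite := by
  obtain ⟨hne, n0, hn0, hcase⟩ := hadj
  have hy1 : y ≠ 1 := by
    rintro rfl
    rcases hcase with h | h
    · exact hne (eq_one_of_zpow_eq_one' hG hn0 h.symm)
    · rw [one_zpow] at h; exact hne h
  have hinjy := injective_zpow_iff_not_isOfFinOrder.2 (hG y hy1)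
  constructor
  · rintro ⟨n, hn, hyn⟩
    obtain ⟨C, ⟨⟨hCcyc, hCmax⟩, hyC⟩, hCuniq⟩ := huniq y hy1
    obtain ⟨c, hc⟩ := hCcyc.exists_generator
    obtain ⟨b, hb⟩ := Subgroup.mem_zpowers_iff.1 (hc ⟨y, hyC⟩)
    have hyb : (c : G) ^ b = y := by
      have := congrArg Subtype.val hb
      simpa using this
    have hcg1 : (c : G) ≠ 1 := by
      intro h; rw [h, one_zpow] at hyb; exact hy1 hyb.symm
    have hb0 : b ≠ 0 := by
      rintro rfl; rw [zpow_zero] at hyb; exact hy1 hyb.symm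
    have hinjc := injective_zpow_iff_not_isOfFinOrder.2 (hG (c : G) hcg1)
    apply ((divisors_finite' hb0).image (fun k : ℤ => (c : G) ^ k)).subset
    rintro z ⟨hzNy, hzNx⟩
    have hyNx : y ∈ closedNbhd (zpmPowerGraph G) x :=
      Or.inr ⟨hxy.1, n, hn, Or.inl hyn⟩
    rcases hzNy with rfl | ⟨hyz, m, hm, hzy⟩
    · exact absurd hyNx hzNx
    · rcases hzy with hzy | hzy
      · -- z = y ^ m : then z is a power of x, contradiction
        exfalso
        have hzx : z = x ^ (n * m) := by rw [hzy, hyn, zpow_mul]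
        by_cases hzx' : z = x
        · exact hzNx (Or.inl hzx')
        · exact hzNx (Or.inr ⟨Ne.symm hzx', n * m, mul_ne_zero hn hm, Or.inl hzx⟩)
      · -- y = z ^ m : z is a root of y, lies in C
        have hz1 : z ≠ 1 := by
          rintro rfl; rw [one_zpow] at hzy; exact hy1 hzy
        obtain ⟨D, ⟨⟨hDcyc, hDmax⟩, hzD⟩, _⟩ := huniq z hz1
        have hyD : y ∈ D := hzy ▸ zpow_mem hzD m
        have hDC : D = C := hCuniq D ⟨⟨hDcyc, hDmax⟩, hyD⟩
        have hzC : z ∈ C := hDC ▸ hzD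
        obtain ⟨k, hk⟩ := Subgroup.mem_zpowers_iff.1 (hc ⟨z, hzC⟩)
        have hzk : (c : G) ^ k = z := by
          have := congrArg Subtype.val hk
          simpa using this
        have hkm : (c : G) ^ (k * m) = (c : G) ^ b := by
          rw [zpow_mul, hzk, hyb, ← hzy]
        exact ⟨k, ⟨m, (hinjc hkm).symm⟩, hzk⟩
  · intro hfin
    rcases hcase with h | h
    · exact ⟨n0, hn0, h⟩
    exfalso
    have hn1 : n0 ≠ 1 := by rintro rfl; rw [zpow_one] at h; exact hxy.1 h
    have hnm1 : n0 ≠ -1 := by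
      rintro rfl; rw [zpow_neg_one] at h; exact hxy.2 h
    have h2 : 2 ≤ |n0| := by rcases abs_cases n0 with ⟨he, _⟩ | ⟨he, _⟩ <;> omega
    have habs : |n0| ∣ n0 := (abs_dvd _ _).2 dvd_rfl
    set f : ℕ → G := fun j => y ^ (((j : ℤ) + 1) * |n0| + 1) with hf
    have hkpos : ∀ j : ℕ, 2 ≤ ((j : ℤ) + 1) * |n0| + 1 := by
      intro j
      have hj : (0 : ℤ) ≤ j := Int.natCast_nonneg j
      nlinarith
    have hinjf : Function.Injective f := by
      intro i j hij
      have := hinjy hij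
      have h3 : ((i : ℤ) + 1) * |n0| = ((j : ℤ) + 1) * |n0| := by omega
      have h4 : (i : ℤ) + 1 = (j : ℤ) + 1 := mul_right_cancel₀ (by omega) h3
      omega
    refine Set.infinite_of_injective_forall_mem (s := _) hinjf ?_ hfin
    intro j
    set k : ℤ := ((j : ℤ) + 1) * |n0| + 1 with hkdef
    have hfj : f j = y ^ k := rfl
    have hk2 := hkpos j
    have hj : (0 : ℤ) ≤ j := Int.natCast_nonneg j
    constructor
    · -- f j ∈ N[y]
      have hne' : y ≠ y ^ k := by
        intro hh
        have : (1 : ℤ) = k := hinjy (by simpa using hh)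
        omega
      exact Or.inr ⟨hne', k, by omega, Or.inl rfl⟩
    · -- f j ∉ N[x]
      rintro (hfx | ⟨hxz, m, hm, hcs⟩)
      · -- y ^ k = x = y ^ n0
        have : k = n0 := hinjy (show y ^ k = y ^ n0 from (hfj.symm.trans hfx).trans h)
        have : |n0| ∣ k := this ▸ habs
        have h5 : |n0| ∣ ((j : ℤ) + 1) * |n0| := Dvd.intro_left _ rfl
        have : |n0| ∣ 1 := (Int.dvd_add_right h5).mp (hkdef ▸ this)
        have := Int.le_of_dvd one_pos this
        omega
      · rcases hcs with hcs | hcs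
        · -- y ^ k = x ^ m = y ^ (n0 * m)
          have hc2 : y ^ k = y ^ (n0 * m) := by
            rw [← hfj, hcs, h, ← zpow_mul]
          have hkm : k = n0 * m := hinjy hc2
          have : |n0| ∣ k := hkm ▸ (habs.mul_right m)
          have h5 : |n0| ∣ ((j : ℤ) + 1) * |n0| := Dvd.intro_left _ rfl
          have : |n0| ∣ 1 := (Int.dvd_add_right h5).mp (hkdef ▸ this)
          have := Int.le_of_dvd one_pos this
          omega
        · -- x = (y ^ k) ^ m, i.e. y ^ n0 = y ^ (k * m), so k ∣ n0
          have hc2 : y ^ n0 = y ^ (k * m) := by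
            rw [← h, hcs, hfj, ← zpow_mul]
          have hkm : n0 = k * m := hinjy hc2
          have hdvd : k ∣ n0 := Dvd.intro _ hkm.symm
          have h6 : |k| ≤ |n0| :=
            Int.le_of_dvd (abs_pos.2 (by omega)) ((abs_dvd _ _).2 ((dvd_abs _ _).2 hdvd))
          have h7 : |k| = k := abs_of_pos (by omega)
          nlinarith
end

section
/- Let G be a torsion-free group and let x be a non-identity element of G. Then O_G(x) is the vertex set of a connected component of the graph obtained by restricting the complement of the Z±-power graph 𝒢±(G) to the set M_G(x). -/
set_option linter.unusedVariables false

/-- `O_G(x)`: the direct successors of `x` in the directed Z±-power graph, excluding `x⁻¹`. -/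
def Osucc {G : Type*} [Group G] (x : G) : Set G :=
  {y | y ≠ x ∧ y ≠ x⁻¹ ∧ ∃ n : ℤ, n ≠ 0 ∧ y = x ^ n}

/-- `I_G(x)`: the direct predecessors of `x` in the directed Z±-power graph, excluding `x⁻¹`. -/
def Ipred {G : Type*} [Group G] (x : G) : Set G :=
  {y | y ≠ x ∧ y ≠ x⁻¹ ∧ ∃ n : ℤ, n ≠ 0 ∧ x = y ^ n}

/-- `M_G(x) = I_G(x) ∪ O_G(x)`: the neighbors of `x` in the Z±-power graph, excluding `x⁻¹`. -/
def Mnbr {G : Type*} [Group G] (x : G) : Set G :=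
  Ipred x ∪ Osucc x

/-- For a non-identity element `x` of a torsion-free group, `O_G(x)` is the vertex set of a
connected component of the restriction of the complement of the Z±-power graph to `M_G(x)`. -/
theorem Osucc_is_component_of_complement_on_Mnbr {G : Type*} [Group G]
    (hG : Monoid.IsTorsionFree G) (x : G) (hx : x ≠ 1) :
    ∃ C : (((zpmPowerGraph G)ᶜ).induce (Mnbr x)).ConnectedComponent,
      Subtype.val '' C.supp = Osucc x := by
  classical
  have hinj : Function.Injective fun n : ℤ => x ^ n :=
    injective_zpow_iff_not_isOfFinOrder.mpr (hG x hx)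
  have hOmem : ∀ n : ℤ, 2 ≤ |n| → x ^ n ∈ Osucc x := by
    intro n hn
    have h0 : n ≠ 0 := by rintro rfl; simp at hn
    have h1 : n ≠ 1 := by rintro rfl; simp at hn
    have hm1 : n ≠ -1 := by rintro rfl; norm_num at hn
    refine ⟨?_, ?_, n, h0, rfl⟩
    · intro h
      exact h1 (hinj (by simpa using h : x ^ n = x ^ (1:ℤ)))
    · intro h
      exact hm1 (hinj (by simpa using h : x ^ n = x ^ (-1:ℤ)))
  have hOchar : ∀ y ∈ Osucc x, ∃ n : ℤ, 2 ≤ |n| ∧ y = x ^ n := by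
    rintro y ⟨hy1, hy2, n, hn0, rfl⟩
    refine ⟨n, ?_, rfl⟩
    rcases lt_trichotomy n 0 with h | h | h
    · have hne : n ≠ -1 := by rintro rfl; exact hy2 (by simp)
      rw [abs_of_neg h]; omega
    · exact absurd h hn0
    · have hne : n ≠ 1 := by rintro rfl; exact hy1 (by simp)
      rw [abs_of_pos h]; omega
  have hndvd : ∀ a b : ℤ, b ≠ 0 → |b| < |a| → ¬ a ∣ b := by
    intro a b hb hab h
    have := Int.le_of_dvd (abs_pos.mpr hb) ((abs_dvd _ _).mpr ((dvd_abs _ _).mpr h))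
    linarith
  have hedge : ∀ a b : ℤ, ¬ a ∣ b → ¬ b ∣ a →
      ((zpmPowerGraph G)ᶜ).Adj (x ^ a) (x ^ b) := by
    intro a b hab hba
    have hne : x ^ a ≠ x ^ b := by
      intro h; exact hab (hinj h ▸ dvd_refl a)
    refine ⟨hne, ?_⟩
    rintro ⟨-, n, hn0, h | h⟩
    · rw [← zpow_mul] at h
      exact hab ⟨n, hinj h⟩
    · rw [← zpow_mul] at h
      exact hba ⟨n, hinj h⟩
  have hOsub : Osucc x ⊆ Mnbr x := Set.subset_union_right
  have hx2 : x ^ (2:ℤ) ∈ Osucc x := hOmem 2 (by norm_num)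
  set v0 : ↥(Mnbr x) := ⟨x ^ (2:ℤ), hOsub hx2⟩ with hv0
  refine ⟨SimpleGraph.connectedComponentMk _ v0, ?_⟩
  have hstep : ∀ u w : ↥(Mnbr x),
      (((zpmPowerGraph G)ᶜ).induce (Mnbr x)).Adj u w →
      (u : G) ∈ Osucc x → (w : G) ∈ Osucc x := by
    intro u w hadj huO
    rcases w.2 with hwI | hwO
    · exfalso
      obtain ⟨n, hn, hu2⟩ := hOchar u huO
      obtain ⟨-, -, m, hm0, hxw⟩ := hwI
      have hadj' : ((zpmPowerGraph G)ᶜ).Adj (u : G) (w : G) := hadj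
      obtain ⟨hne, hnadj⟩ := hadj'
      have hn0 : n ≠ 0 := by rintro rfl; simp at hn
      refine hnadj ⟨hne, m * n, mul_ne_zero hm0 hn0, Or.inr ?_⟩
      rw [hu2, zpow_mul, ← hxw]
    · exact hwO
  have hwalk : ∀ u w : ↥(Mnbr x),
      (((zpmPowerGraph G)ᶜ).induce (Mnbr x)).Walk u w →
      (u : G) ∈ Osucc x → (w : G) ∈ Osucc x := by
    intro u w p
    induction p with
    | nil => exact id
    | cons h p ih => exact fun hu => ih (hstep _ _ h hu)
  ext y
  constructor
  · rintro ⟨u, hu, rfl⟩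
    rw [SimpleGraph.ConnectedComponent.mem_supp_iff,
      SimpleGraph.ConnectedComponent.eq] at hu
    obtain ⟨p⟩ := hu.symm
    exact hwalk _ _ p hx2
  · intro hy
    obtain ⟨b, hb, hyb⟩ := hOchar y hy
    subst hyb
    refine ⟨⟨x ^ b, hOsub hy⟩, ?_, rfl⟩
    rw [SimpleGraph.ConnectedComponent.mem_supp_iff,
      SimpleGraph.ConnectedComponent.eq]
    set c : ℤ := 2 * |b| + 1 with hc
    have hcpos : 0 < c := by rw [hc]; positivity
    have hc2 : 2 ≤ |c| := by rw [abs_of_pos hcpos]; rw [hc]; linarith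
    have h1 : ¬ b ∣ c := by
      intro h
      have h2 : b ∣ 2 * |b| := Dvd.dvd.mul_left ((dvd_abs b b).mpr dvd_rfl) 2
      have h3 : b ∣ c - 2 * |b| := dvd_sub h h2
      have h4 : b ∣ (1:ℤ) := by rw [hc] at h3; simpa using h3
      have := Int.le_of_dvd one_pos ((abs_dvd _ _).mpr h4)
      linarith
    have h2 : ¬ c ∣ b := by
      refine hndvd c b (by rintro rfl; simp at hb) ?_
      rw [abs_of_pos hcpos, hc]; linarith
    have h3 : ¬ (2:ℤ) ∣ c := by
      intro h
      have h5 : (2:ℤ) ∣ 1 := (dvd_add_right ⟨|b|, rfl⟩).mp (by rwa [hc] at h)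
      norm_num at h5
    have h4 : ¬ c ∣ (2:ℤ) := by
      refine hndvd c 2 (by norm_num) ?_
      rw [abs_two, abs_of_pos hcpos, hc]; linarith
    have e1 : (((zpmPowerGraph G)ᶜ).induce (Mnbr x)).Adj
        ⟨x ^ b, hOsub hy⟩ ⟨x ^ c, hOsub (hOmem c hc2)⟩ := hedge b c h1 h2
    have e2 : (((zpmPowerGraph G)ᶜ).induce (Mnbr x)).Adj
        ⟨x ^ c, hOsub (hOmem c hc2)⟩ v0 := hedge c 2 h4 h3
    exact (e1.reachable).trans e2.reachable
end

section
/- Let G be a torsion-free group, let H be a group, and let φ : G → H be an isomorphism from the Z±-power graph 𝒢±(G) to 𝒢±(H). Let z be a non-identity element of G. Then φ maps M_G(z) bijectively onto M_H(φ(z)) inducing an isomorphism between the subgraphs of the complements of 𝒢±(G) and 𝒢±(H) induced by M_G(z) and M_H(φ(z)) respectively; moreover, the subgraph of the complement of 𝒢±(G) induced by I_G(z) is isomorphic to the subgraph of the complement of 𝒢±(H) induced by I_H(φ(z)), and the subgraph induced by O_G(z) is isomorphic to the subgraph induced by O_H(φ(z)). -/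
set_option linter.unusedVariables false
set_option maxHeartbeats 1000000

namespace IsoOnMnbrAux

open SimpleGraph Set

variable {G H K : Type*} [Group G] [Group H] [Group K]

lemma adj_iff {x y : K} :
    (zpmPowerGraph K).Adj x y ↔ x ≠ y ∧ ∃ n : ℤ, n ≠ 0 ∧ (y = x ^ n ∨ x = y ^ n) :=
  Iff.rfl

lemma finOrder_of_zpow {x : K} {n : ℤ} (hn : n ≠ 0) (h : x ^ n = 1) : IsOfFinOrder x :=
  isOfFinOrder_iff_zpow_eq_one.2 ⟨n, hn, h⟩

lemma zpow_inj {x : K} (hx : ¬IsOfFinOrder x) {a b : ℤ} : x ^ a = x ^ b ↔ a = b :=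
  ⟨fun h => injective_zpow_iff_not_isOfFinOrder.2 hx h, fun h => h ▸ rfl⟩

lemma mem_cn {x y : K} :
    y ∈ closedNbhd (zpmPowerGraph K) x ↔ y = x ∨ (zpmPowerGraph K).Adj x y := by
  simp [closedNbhd]

lemma self_mem_cn (x : K) : x ∈ closedNbhd (zpmPowerGraph K) x := mem_cn.2 (Or.inl rfl)

lemma adj_inv_of_adj {x y : K} (h : (zpmPowerGraph K).Adj x y) (hne : y ≠ x⁻¹) :
    (zpmPowerGraph K).Adj x⁻¹ y := by
  obtain ⟨hxy, n, hn, h1 | h2⟩ := h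
  · refine ⟨fun hc => hne hc.symm, -n, neg_ne_zero.2 hn, Or.inl ?_⟩
    rw [h1]
    simp [zpow_neg]
  · refine ⟨fun hc => hne hc.symm, -n, neg_ne_zero.2 hn, Or.inr ?_⟩
    rw [zpow_neg, ← h2]

lemma cn_inv (x : K) :
    closedNbhd (zpmPowerGraph K) x⁻¹ = closedNbhd (zpmPowerGraph K) x := by
  have key : ∀ u y : K, y ∈ closedNbhd (zpmPowerGraph K) u⁻¹ →
      y ∈ closedNbhd (zpmPowerGraph K) u := by
    intro u y hy
    rcases mem_cn.1 hy with rfl | hadj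
    · rcases eq_or_ne (u⁻¹) u with h | h
      · exact mem_cn.2 (Or.inl h)
      · refine mem_cn.2 (Or.inr ?_)
        refine ⟨h.symm, -1, ?_, Or.inl ?_⟩
        · norm_num
        · simp
    · rcases eq_or_ne y u with rfl | h
      · exact self_mem_cn _
      · have := adj_inv_of_adj hadj (by simpa using h)
        rw [inv_inv] at this
        exact mem_cn.2 (Or.inr this)
  ext y
  constructor
  · exact key x y
  · intro hy
    have := key x⁻¹ y (by simpa using hy)
    exact this

section iso

variable (φ : zpmPowerGraph G ≃g zpmPowerGraph H)

lemma map_adj {x y : G} :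
    (zpmPowerGraph H).Adj (φ x) (φ y) ↔ (zpmPowerGraph G).Adj x y := φ.map_adj_iff

lemma mem_cn_map {x y : G} :
    φ y ∈ closedNbhd (zpmPowerGraph H) (φ x) ↔ y ∈ closedNbhd (zpmPowerGraph G) x := by
  rw [mem_cn, mem_cn, map_adj, φ.injective.eq_iff]

lemma cn_eq_map {a b : G}
    (h : closedNbhd (zpmPowerGraph G) a = closedNbhd (zpmPowerGraph G) b) :
    closedNbhd (zpmPowerGraph H) (φ a) = closedNbhd (zpmPowerGraph H) (φ b) := by
  ext v
  obtain ⟨y, rfl⟩ := φ.surjective v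
  rw [mem_cn_map, mem_cn_map, h]

end iso

lemma core_aux {x a : K} (hx : ¬IsOfFinOrder x)
    (h : closedNbhd (zpmPowerGraph K) a = closedNbhd (zpmPowerGraph K) x)
    {n : ℤ} (hn : n ≠ 0) (hne : a ≠ x) (he : a = x ^ n) : a = x⁻¹ := by
  rcases eq_or_ne n (-1) with rfl | hn1
  · simpa using he
  have hn1' : n ≠ 1 := by
    rintro rfl
    exact hne (by simpa using he)
  exfalso
  have hnabs : 2 ≤ n.natAbs := by omega
  obtain ⟨p, hp_le, hp⟩ := Nat.exists_infinite_primes (n.natAbs + 1)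
  have hple : n.natAbs < p := by omega
  have h1 : x ^ (p : ℤ) ∈ closedNbhd (zpmPowerGraph K) x := by
    refine mem_cn.2 (Or.inr ⟨?_, (p : ℤ), ?_, Or.inl rfl⟩)
    · intro hc
      have : (1 : ℤ) = p := (zpow_inj hx).1 (by simpa using hc)
      have := hp.one_lt
      omega
    · exact_mod_cast hp.pos.ne'
  rw [← h, he] at h1
  rcases mem_cn.1 h1 with heq | hadj
  · have : n = (p : ℤ)  := (zpow_inj hx).1 heq.symm
    have : n.natAbs = p := by omega
    omega
  · obtain ⟨hne2, m, hm, h2 | h3⟩ := hadj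
    · -- x ^ p = (x ^ n) ^ m, so n ∣ p
      rw [← zpow_mul] at h2
      have hpm : (p : ℤ) = n * m := (zpow_inj hx).1 h2
      have : n.natAbs ∣ p := by
        have h5 : n ∣ (p : ℤ) := ⟨m, hpm⟩
        have := Int.natAbs_dvd_natAbs.2 h5
        simpa using this
      rcases (Nat.Prime.eq_one_or_self_of_dvd hp _ this) with h4 | h4 <;> omega
    · -- x ^ n = (x ^ p) ^ m, so p ∣ n
      rw [← zpow_mul] at h3
      have hpm : n = (p : ℤ) * m := (zpow_inj hx).1 h3
      have : p ∣ n.natAbs := by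
        have h5 : (p : ℤ) ∣ n := ⟨m, hpm⟩
        have := Int.natAbs_dvd_natAbs.2 h5
        simpa using this
      have := Nat.le_of_dvd (by omega) this
      omega

lemma core {x a : K} (hx : ¬IsOfFinOrder x) (ha : ¬IsOfFinOrder a)
    (h : closedNbhd (zpmPowerGraph K) a = closedNbhd (zpmPowerGraph K) x) :
    a = x ∨ a = x⁻¹ := by
  have hax : a ∈ closedNbhd (zpmPowerGraph K) x := h ▸ self_mem_cn a
  rcases mem_cn.1 hax with heq | hadj
  · exact Or.inl heq
  obtain ⟨hne, n, hn, he | he⟩ := hadj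
  · exact Or.inr (core_aux hx h hn (Ne.symm hne) he)
  · have hxa : x = a⁻¹ := core_aux ha h.symm hn hne he
    exact Or.inr (by rw [hxa, inv_inv])

lemma twins_G (hG : Monoid.IsTorsionFree G) {x : G} (hx : x ≠ 1) :
    {a | closedNbhd (zpmPowerGraph G) a = closedNbhd (zpmPowerGraph G) x} = {x, x⁻¹} := by
  ext a
  simp only [Set.mem_setOf_eq, Set.mem_insert_iff, Set.mem_singleton_iff]
  constructor
  · intro h
    rcases eq_or_ne a 1 with rfl | ha
    · exfalso
      have hx1 : x ∈ closedNbhd (zpmPowerGraph G) (1 : G) := h ▸ self_mem_cn x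
      rcases mem_cn.1 hx1 with h1 | hadj
      · exact hx h1
      · obtain ⟨hne, n, hn, he | he⟩ := hadj
        · exact hx (by simpa using he)
        · exact hG x hx (finOrder_of_zpow hn he.symm)
    · exact core (hG x hx) (hG a ha) h
  · rintro (rfl | rfl)
    · rfl
    · exact cn_inv x


lemma cn_subset_of_mutual {a x : K} {i j : ℤ} (hi : i ≠ 0) (hj : j ≠ 0)
    (ha : a = x ^ i) (hxa : x = a ^ j) :
    closedNbhd (zpmPowerGraph K) x ⊆ closedNbhd (zpmPowerGraph K) a := by
  intro c hc
  by_cases hca : c = a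
  · rw [hca]; exact self_mem_cn a
  refine mem_cn.2 (Or.inr ?_)
  rcases mem_cn.1 hc with hcx | hadj
  · exact ⟨Ne.symm hca, j, hj, Or.inl (by rw [hcx, hxa])⟩
  · obtain ⟨hne, n, hn, h1 | h2⟩ := hadj
    · exact ⟨Ne.symm hca, j * n, mul_ne_zero hj hn, Or.inl (by rw [h1, hxa, ← zpow_mul])⟩
    · exact ⟨Ne.symm hca, n * i, mul_ne_zero hn hi, Or.inr (by rw [ha, h2, ← zpow_mul])⟩

lemma cn_eq_of_mutual {a x : K} {i j : ℤ} (hi : i ≠ 0) (hj : j ≠ 0)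
    (ha : a = x ^ i) (hxa : x = a ^ j) :
    closedNbhd (zpmPowerGraph K) a = closedNbhd (zpmPowerGraph K) x :=
  le_antisymm (cn_subset_of_mutual hj hi hxa ha) (cn_subset_of_mutual hi hj ha hxa)

lemma twin_of_coprime {b : K} (hd : orderOf b ≠ 1) {m : ℕ}
    (hm : Nat.Coprime m (orderOf b)) :
    closedNbhd (zpmPowerGraph K) (b ^ m) = closedNbhd (zpmPowerGraph K) b := by
  set d := orderOf b with hdd
  have hm0 : m ≠ 0 := by
    rintro rfl
    simp [Nat.Coprime] at hm
    exact hd (by omega)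
  have hbez : (1 : ℤ) = m * Nat.gcdA m d + d * Nat.gcdB m d := by
    have := Nat.gcd_eq_gcd_ab m d
    rwa [hm] at this
  set u := Nat.gcdA m d
  have hu0 : u ≠ 0 := by
    rintro h
    rw [h, mul_zero, zero_add] at hbez
    have : (d : ℤ) ∣ 1 := Dvd.intro _ hbez.symm
    have := Int.eq_one_of_dvd_one (by positivity) this
    have : d = 1 := by exact_mod_cast this
    exact hd this
  have hb : b = (b ^ m) ^ u := by
    have h1 : (b ^ m : K) = b ^ (m : ℤ) := (zpow_natCast b m).symm
    rw [h1, ← zpow_mul]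
    have : b ^ ((m : ℤ) * u) = b ^ ((1 : ℤ) - d * Nat.gcdB m d) := by
      congr 1
      omega
    rw [this, zpow_sub, zpow_one, zpow_mul]
    have hbd : b ^ (d : ℤ) = 1 := by
      rw [zpow_natCast, hdd]
      exact pow_orderOf_eq_one b
    rw [hbd, one_zpow, inv_one, mul_one]
  have ha : (b ^ m : K) = b ^ (m : ℤ) := (zpow_natCast b m).symm
  exact cn_eq_of_mutual (i := (m : ℤ)) (j := u) (by exact_mod_cast hm0) hu0 ha hb

lemma coprime_two_of_odd {d : ℕ} (h : d % 2 = 1) : Nat.Coprime 2 d := by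
  rw [Nat.Prime.coprime_iff_not_dvd Nat.prime_two]
  omega

lemma exists_third_unit {d : ℕ} (hd : 7 ≤ d) :
    ∃ j : ℕ, Nat.Coprime j d ∧ j ≠ 1 ∧ j ≠ d - 1 ∧ j < d ∧ j ≠ 0 := by
  rcases Nat.even_or_odd d with he | ho
  · obtain ⟨m, hm⟩ := he
    rcases Nat.even_or_odd m with hm2 | hm2
    · have hm2' : m % 2 = 0 := Nat.even_iff.1 hm2
      refine ⟨m + 1, ?_, by omega, by omega, by omega, by omega⟩
      have hdm : d = 2 * m := by omega
      rw [hdm]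
      refine Nat.Coprime.mul_right ?_ ?_
      · exact (coprime_two_of_odd (by omega)).symm
      · have : Nat.Coprime (1 + m) m := by
          rw [Nat.coprime_add_self_left]
          exact Nat.coprime_one_left m
        simpa [add_comm] using this
    · have hm2' : m % 2 = 1 := Nat.odd_iff.1 hm2
      refine ⟨m + 2, ?_, by omega, by omega, by omega, by omega⟩
      have hdm : d = 2 * m := by omega
      rw [hdm]
      refine Nat.Coprime.mul_right ?_ ?_
      · exact (coprime_two_of_odd (by omega)).symm
      · have : Nat.Coprime (2 + m) m := by
          rw [Nat.coprime_add_self_left]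
          exact coprime_two_of_odd hm2'
        simpa [add_comm] using this
  · have ho' : d % 2 = 1 := Nat.odd_iff.1 ho
    exact ⟨2, coprime_two_of_odd ho', by omega, by omega, by omega, by omega⟩

lemma twin_mem_pair (hG : Monoid.IsTorsionFree G) (φ : zpmPowerGraph G ≃g zpmPowerGraph H)
    {g : G} (hg : g ≠ 1) {y : H}
    (h : closedNbhd (zpmPowerGraph H) y = closedNbhd (zpmPowerGraph H) (φ g)) :
    y = φ g ∨ y = φ g⁻¹ := by
  have h2 : closedNbhd (zpmPowerGraph G) (φ.symm y) = closedNbhd (zpmPowerGraph G) g := by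
    have := cn_eq_map φ.symm (a := y) (b := φ g) h
    simpa using this
  have h3 : φ.symm y ∈ ({g, g⁻¹} : Set G) := by
    rw [← twins_G hG hg]
    exact h2
  rcases h3 with h3 | h3
  · left
    rw [← h3]
    simp
  · right
    rw [show y = φ (φ.symm y) by simp, h3]

lemma order_le_six (hG : Monoid.IsTorsionFree G) (φ : zpmPowerGraph G ≃g zpmPowerGraph H)
    {g : G} (hg : g ≠ 1) (hfin : IsOfFinOrder (φ g)) :
    orderOf (φ g) ≤ 6 := by
  by_contra hlt
  set b := φ g with hb
  set d := orderOf b with hdd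
  have hd7 : 7 ≤ d := by omega
  have hd_pos : 0 < d := hfin.orderOf_pos
  obtain ⟨j, hcop, hj1, hjd1, hjlt, hj0⟩ := exists_third_unit hd7
  have hctwin : closedNbhd (zpmPowerGraph H) (b ^ j) = closedNbhd (zpmPowerGraph H) b :=
    twin_of_coprime (by omega) (by rw [← hdd]; exact hcop)
  have hinvtwin := cn_inv b
  have h1 := twin_mem_pair hG φ hg hctwin
  have h2 := twin_mem_pair hG φ hg hinvtwin
  have hcb : b ^ j ≠ b := by
    intro hc
    refine hj1 (pow_injOn_Iio_orderOf (x := b) ?_ ?_ ?_)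
    · exact Set.mem_Iio.2 (by omega)
    · exact Set.mem_Iio.2 (by omega)
    · simpa using hc
  have hbinv : b⁻¹ = b ^ (d - 1) := by
    have h3 : b ^ (d - 1) * b = 1 := by
      rw [← pow_succ]
      have h4 : d - 1 + 1 = d := by omega
      rw [h4]
      exact pow_orderOf_eq_one b
    exact inv_eq_of_mul_eq_one_left h3
  have hcbinv : b ^ j ≠ b⁻¹ := by
    rw [hbinv]
    intro hc
    refine hjd1 (pow_injOn_Iio_orderOf (x := b) ?_ ?_ hc)
    · exact Set.mem_Iio.2 (by omega)
    · exact Set.mem_Iio.2 (by omega)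
  have hbne : b ≠ b⁻¹ := by
    intro hc
    have h5 : b ^ (2:ℕ) = 1 := by
      rw [pow_two]
      nth_rewrite 2 [hc]
      simp
    have := Nat.le_of_dvd (by norm_num) (orderOf_dvd_of_pow_eq_one h5)
    omega
  rcases h1 with h1 | h1
  · exact hcb h1
  rcases h2 with h2 | h2
  · exact hbne (by rw [h2])
  exact hcbinv (h1.trans h2.symm)

lemma nbr_torsion {w y : H} (hw : IsOfFinOrder w) (h : (zpmPowerGraph H).Adj w y) :
    IsOfFinOrder y := by
  have hd := hw.orderOf_pos
  have hwd : w ^ (orderOf w : ℤ) = 1 := by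
    rw [zpow_natCast]
    exact pow_orderOf_eq_one w
  obtain ⟨hne, n, hn, h1 | h2⟩ := h
  · refine finOrder_of_zpow (n := (orderOf w : ℤ)) (by exact_mod_cast hd.ne') ?_
    rw [h1, ← zpow_mul, mul_comm, zpow_mul, hwd, one_zpow]
  · refine finOrder_of_zpow (n := n * (orderOf w : ℤ))
      (mul_ne_zero hn (by exact_mod_cast hd.ne')) ?_
    rw [zpow_mul, ← h2, hwd]

lemma twin_of_adj_same_order {a b : K} (hfa : IsOfFinOrder a) (hne : a ≠ b)
    (hord : orderOf a = orderOf b) {n : ℤ} (hab : b = a ^ n) :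
    closedNbhd (zpmPowerGraph K) b = closedNbhd (zpmPowerGraph K) a := by
  set d := orderOf a with hdd
  have hdpos : 0 < d := hfa.orderOf_pos
  have hd1 : d ≠ 1 := by
    intro h
    have ha1 : a = 1 := orderOf_eq_one_iff.1 h
    have hb1 : b = 1 := orderOf_eq_one_iff.1 (by rw [← hord]; exact h)
    exact hne (ha1.trans hb1.symm)
  have hmod : b = a ^ ((n % (d:ℤ)).toNat) := by
    have hmod1 : a ^ (n % (d:ℤ)) = a ^ n := by
      rw [hdd]
      exact zpow_mod_orderOf a n
    have hmod2 : 0 ≤ n % (d:ℤ) := Int.emod_nonneg n (by exact_mod_cast hdpos.ne')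
    rw [hab, ← hmod1, ← zpow_natCast]
    congr 1
    omega
  set m := (n % (d:ℤ)).toNat with hmm
  have hm0 : m ≠ 0 := by
    intro hc
    rw [hc, pow_zero] at hmod
    rw [hmod] at hord
    simp [orderOf_one] at hord
    omega
  have hcop : Nat.Coprime m d := by
    have horder : orderOf (a ^ m) = d / Nat.gcd d m := orderOf_pow' a hm0
    rw [← hmod, ← hord] at horder
    have : Nat.gcd d m = 1 := by
      rcases (Nat.div_eq_self.1 horder.symm) with h | h
      · omega
      · exact h
    exact Nat.Coprime.symm this
  have := twin_of_coprime (b := a) (by omega) (by rw [← hdd]; exact hcop)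
  rwa [← hmod] at this

lemma inf_image (hG : Monoid.IsTorsionFree G) (φ : zpmPowerGraph G ≃g zpmPowerGraph H)
    {g : G} (hg : g ≠ 1) : ¬IsOfFinOrder (φ g) := by
  intro hfin
  have hginf : ¬IsOfFinOrder g := hG g hg
  set e : ℕ → ℤ := fun i => 2 ^ (i + 1) with he
  have he1 : ∀ i, e i ≠ 0 := fun i => by positivity
  have he2 : ∀ i, (1:ℤ) < e i := by
    intro i
    simp only [he]
    calc (1:ℤ) < 2 ^ 1 := by norm_num
    _ ≤ 2 ^ (i+1) := by
        apply pow_le_pow_right₀ <;> omega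
  have heinj : ∀ i j : ℕ, e i = e j → i = j := by
    intro i j hij
    simp only [he] at hij
    have h2 : (2:ℕ) ^ (i+1) = 2 ^ (j+1) := by exact_mod_cast hij
    have := Nat.pow_right_injective (le_refl 2) h2
    omega
  have hgne : ∀ i, g ^ e i ≠ 1 := by
    intro i hc
    exact hginf (finOrder_of_zpow (he1 i) hc)
  have hadj : ∀ i, (zpmPowerGraph G).Adj g (g ^ e i) := by
    intro i
    refine ⟨?_, e i, he1 i, Or.inl rfl⟩
    intro hc
    have h3 : (1:ℤ) = e i := (zpow_inj hginf).1 (by simpa using hc)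
    have := he2 i
    omega
  have hbtor : ∀ i, IsOfFinOrder (φ (g ^ e i)) := fun i =>
    nbr_torsion hfin ((map_adj φ).2 (hadj i))
  have hnot_twin : ∀ i j : ℕ, i ≠ j →
      closedNbhd (zpmPowerGraph H) (φ (g ^ e i)) ≠
        closedNbhd (zpmPowerGraph H) (φ (g ^ e j)) := by
    intro i j hij hcn
    rcases twin_mem_pair hG φ (hgne j) (y := φ (g ^ e i)) hcn with h | h
    · have h4 := φ.injective h
      exact hij (heinj i j ((zpow_inj hginf).1 h4))
    · have h4 := φ.injective h
      rw [← zpow_neg] at h4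
      have h5 := (zpow_inj hginf).1 h4
      have := he2 i
      have := he2 j
      omega
  have hord_ne : ∀ i j : ℕ, i < j →
      orderOf (φ (g ^ e i)) ≠ orderOf (φ (g ^ e j)) := by
    intro i j hij hord
    have hadj2 : (zpmPowerGraph G).Adj (g ^ e i) (g ^ e j) := by
      refine ⟨?_, 2 ^ (j - i), by positivity, Or.inl ?_⟩
      · intro hc
        exact hij.ne (heinj i j ((zpow_inj hginf).1 hc))
      · rw [← zpow_mul]
        congr 1
        simp only [he]
        rw [← pow_add]
        congr 1
        omega
    have hadjH := (map_adj φ).2 hadj2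
    obtain ⟨hne, n, hn, h1 | h2⟩ := hadjH
    · exact hnot_twin j i (fun hc => hij.ne hc.symm)
        (twin_of_adj_same_order (hbtor i) hne hord h1)
    · exact hnot_twin i j hij.ne
        (twin_of_adj_same_order (hbtor j) (Ne.symm hne) hord.symm h2)
  have hmaps : ∀ i ∈ Finset.range 7, orderOf (φ (g ^ e i)) ∈ Finset.Icc 1 6 := by
    intro i _
    rw [Finset.mem_Icc]
    exact ⟨(hbtor i).orderOf_pos, order_le_six hG φ (hgne i) (hbtor i)⟩
  have hinj : Set.InjOn (fun i => orderOf (φ (g ^ e i))) (Finset.range 7) := by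
    intro i _ j _ hh
    by_contra hij
    rcases Nat.lt_or_ge i j with h | h
    · exact hord_ne i j h hh
    · exact hord_ne j i (by omega) hh.symm
  have := Finset.card_le_card_of_injOn _ hmaps hinj
  simp [Nat.card_Icc] at this

lemma map_inv (hG : Monoid.IsTorsionFree G) (φ : zpmPowerGraph G ≃g zpmPowerGraph H)
    {g : G} (hg : g ≠ 1) : φ g⁻¹ = (φ g)⁻¹ := by
  have hg' : g⁻¹ ≠ 1 := by simpa using hg
  have h1 : closedNbhd (zpmPowerGraph H) (φ g⁻¹) = closedNbhd (zpmPowerGraph H) (φ g) :=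
    cn_eq_map φ (cn_inv g)
  rcases core (inf_image hG φ hg) (inf_image hG φ hg') h1 with h | h
  · exfalso
    have hinv : g⁻¹ = g := φ.injective h
    have h2 : g ^ (2:ℤ) = 1 := by
      rw [(by norm_num : (2:ℤ) = 1 + 1), zpow_add, zpow_one]
      nth_rewrite 1 [← hinv]
      simp
    exact hG g hg (finOrder_of_zpow two_ne_zero h2)
  · exact h

lemma mem_Mnbr {x y : K} :
    y ∈ Mnbr x ↔ (zpmPowerGraph K).Adj x y ∧ y ≠ x⁻¹ := by
  constructor
  · rintro (⟨h1, h2, n, hn, he⟩ | ⟨h1, h2, n, hn, he⟩)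
    · exact ⟨⟨Ne.symm h1, n, hn, Or.inr he⟩, h2⟩
    · exact ⟨⟨Ne.symm h1, n, hn, Or.inl he⟩, h2⟩
  · rintro ⟨⟨hne, n, hn, he | he⟩, hni⟩
    · exact Or.inr ⟨Ne.symm hne, hni, n, hn, he⟩
    · exact Or.inl ⟨Ne.symm hne, hni, n, hn, he⟩

lemma map_Mnbr (hG : Monoid.IsTorsionFree G) (φ : zpmPowerGraph G ≃g zpmPowerGraph H)
    {x : G} (hx : x ≠ 1) : ⇑φ '' Mnbr x = Mnbr (φ x) := by
  ext v
  constructor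
  · rintro ⟨y, hy, rfl⟩
    rw [mem_Mnbr] at hy ⊢
    refine ⟨(map_adj φ).2 hy.1, ?_⟩
    rw [← map_inv hG φ hx]
    exact fun hc => hy.2 (φ.injective hc)
  · intro hv
    refine ⟨φ.symm v, ?_, by simp⟩
    rw [mem_Mnbr] at hv ⊢
    constructor
    · have := (map_adj φ.symm).2 hv.1
      simpa using this
    · intro hc
      apply hv.2
      rw [show v = φ (φ.symm v) from by simp, hc, map_inv hG φ hx]

lemma map_Mnbr_symm (hG : Monoid.IsTorsionFree G) (φ : zpmPowerGraph G ≃g zpmPowerGraph H)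
    {x : G} (hx : x ≠ 1) : ⇑φ.symm '' Mnbr (φ x) = Mnbr x := by
  rw [← map_Mnbr hG φ hx, ← Set.image_comp]
  have hcomp : ⇑φ.symm ∘ ⇑φ = id := funext fun a => φ.symm_apply_apply a
  rw [hcomp, Set.image_id]

lemma mem_Osucc {x y : K} (hx : ¬IsOfFinOrder x) :
    y ∈ Osucc x ↔ ∃ n : ℤ, (n ≠ 0 ∧ n ≠ 1 ∧ n ≠ -1) ∧ y = x ^ n := by
  constructor
  · rintro ⟨h1, h2, n, hn, rfl⟩
    refine ⟨n, ⟨hn, ?_, ?_⟩, rfl⟩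
    · rintro rfl
      exact h1 (zpow_one x)
    · rintro rfl
      exact h2 (zpow_neg_one x)
  · rintro ⟨n, ⟨h0, h1, hm1⟩, rfl⟩
    refine ⟨?_, ?_, n, h0, rfl⟩
    · intro hc
      exact h1 ((zpow_inj hx).1 (hc.trans (zpow_one x).symm))
    · intro hc
      exact hm1 ((zpow_inj hx).1 (hc.trans (zpow_neg_one x).symm))

lemma zpow_mem_Osucc {x : K} (hx : ¬IsOfFinOrder x) {k : ℤ}
    (h0 : k ≠ 0) (h1 : k ≠ 1) (hm1 : k ≠ -1) : x ^ k ∈ Osucc x :=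
  (mem_Osucc hx).2 ⟨k, ⟨h0, h1, hm1⟩, rfl⟩

lemma zpow_mem_Mnbr {x : K} (hx : ¬IsOfFinOrder x) {k : ℤ}
    (h0 : k ≠ 0) (h1 : k ≠ 1) (hm1 : k ≠ -1) : x ^ k ∈ Mnbr x :=
  Set.mem_union_right _ (zpow_mem_Osucc hx h0 h1 hm1)

lemma O_I_disjoint {x y : K} (hx : ¬IsOfFinOrder x) (hO : y ∈ Osucc x) (hI : y ∈ Ipred x) :
    False := by
  obtain ⟨h1, h2, n, hn, rfl⟩ := hO
  obtain ⟨_, _, m, hm, hxm⟩ := hI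
  rw [← zpow_mul] at hxm
  have h3 : (1:ℤ) = n * m := (zpow_inj hx).1 (by rw [zpow_one]; exact hxm)
  rcases Int.mul_eq_one_iff_eq_one_or_neg_one.1 h3.symm with ⟨hn1, _⟩ | ⟨hn1, _⟩
  · rw [hn1] at h1
    exact h1 (zpow_one x)
  · rw [hn1] at h2
    exact h2 (zpow_neg_one x)

lemma adj_of_O_I {x u v : K} (hx : ¬IsOfFinOrder x) (hu : u ∈ Osucc x) (hv : v ∈ Ipred x) :
    (zpmPowerGraph K).Adj v u := by
  have hne : v ≠ u := fun hc => O_I_disjoint hx hu (hc ▸ hv)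
  obtain ⟨_, _, n, hn, rfl⟩ := hu
  obtain ⟨_, _, m, hm, hxm⟩ := hv
  exact ⟨hne, m * n, mul_ne_zero hm hn, Or.inl (by rw [hxm, ← zpow_mul])⟩

lemma same_side {w u v : K} (hw : ¬IsOfFinOrder w)
    (hu : u ∈ Mnbr w) (hv : v ∈ Mnbr w) (hnadj : ¬ (zpmPowerGraph K).Adj u v) :
    (u ∈ Osucc w ↔ v ∈ Osucc w) := by
  constructor
  · intro huO
    rcases hv with hvI | hvO
    · exact absurd (adj_of_O_I hw huO hvI).symm hnadj
    · exact hvO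
  · intro hvO
    rcases hu with huI | huO
    · exact absurd (adj_of_O_I hw hvO huI) hnadj
    · exact huO

lemma adj_zpow_iff {x : K} (hx : ¬IsOfFinOrder x) {a b : ℤ} (ha : a ≠ 0) (hb : b ≠ 0) :
    (zpmPowerGraph K).Adj (x ^ a) (x ^ b) ↔ a ≠ b ∧ (a ∣ b ∨ b ∣ a) := by
  constructor
  · rintro ⟨hne, n, hn, h1 | h2⟩
    · rw [← zpow_mul] at h1
      exact ⟨fun hc => hne (by rw [hc]), Or.inl ⟨n, (zpow_inj hx).1 h1⟩⟩
    · rw [← zpow_mul] at h2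
      exact ⟨fun hc => hne (by rw [hc]), Or.inr ⟨n, (zpow_inj hx).1 h2⟩⟩
  · rintro ⟨hne, ⟨c, rfl⟩ | ⟨c, rfl⟩⟩
    · have hc0 : c ≠ 0 := by
        rintro rfl
        exact hb (mul_zero a)
      exact ⟨fun hc => hne ((zpow_inj hx).1 hc), c, hc0, Or.inl (zpow_mul x a c)⟩
    · have hc0 : c ≠ 0 := by
        rintro rfl
        exact ha (mul_zero b)
      exact ⟨fun hc => hne ((zpow_inj hx).1 hc), c, hc0, Or.inr (zpow_mul x b c)⟩

lemma stepA (hG : Monoid.IsTorsionFree G) (φ : zpmPowerGraph G ≃g zpmPowerGraph H)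
    {x : G} (hx : x ≠ 1) {k : ℤ} (h0 : k ≠ 0) (h1 : k ≠ 1) (hm1 : k ≠ -1) :
    (φ (x ^ k) ∈ Osucc (φ x) ↔ φ (x ^ (2:ℤ)) ∈ Osucc (φ x)) := by
  have hxinf := hG x hx
  have hwinf := inf_image hG φ hx
  have hk2 : 2 ≤ k.natAbs := by omega
  obtain ⟨p, hple, hp⟩ := Nat.exists_infinite_primes (k.natAbs + 3)
  have hp2 : 2 < p := by omega
  have hpk : (p:ℤ) ≠ 0 := by exact_mod_cast (by omega : p ≠ 0)
  have hpone : (p:ℤ) ≠ 1 := by exact_mod_cast (by omega : p ≠ 1)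
  have hpnegone : (p:ℤ) ≠ -1 := by
    intro hc
    have : (0:ℤ) ≤ p := by positivity
    omega
  have m2 : x ^ (2:ℤ) ∈ Mnbr x := zpow_mem_Mnbr hxinf (by norm_num) (by norm_num) (by norm_num)
  have mp : x ^ (p:ℤ) ∈ Mnbr x := zpow_mem_Mnbr hxinf hpk hpone hpnegone
  have mk : x ^ k ∈ Mnbr x := zpow_mem_Mnbr hxinf h0 h1 hm1
  have him : ∀ y ∈ Mnbr x, φ y ∈ Mnbr (φ x) := by
    intro y hy
    rw [← map_Mnbr hG φ hx]
    exact ⟨y, hy, rfl⟩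
  have na1 : ¬ (zpmPowerGraph G).Adj (x ^ (2:ℤ)) (x ^ (p:ℤ)) := by
    rw [adj_zpow_iff hxinf (by norm_num) hpk]
    rintro ⟨hne, hd | hd⟩
    · have hdd : (2:ℕ) ∣ p := by exact_mod_cast hd
      rcases Nat.Prime.eq_one_or_self_of_dvd hp 2 hdd with h | h <;> omega
    · have hdd : (p:ℕ) ∣ 2 := by
        have := Int.natAbs_dvd_natAbs.2 hd
        simpa using this
      have := Nat.le_of_dvd (by norm_num) hdd
      omega
  have na2 : ¬ (zpmPowerGraph G).Adj (x ^ (p:ℤ)) (x ^ k) := by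
    rw [adj_zpow_iff hxinf hpk h0]
    rintro ⟨hne, hd | hd⟩
    · have hdd : (p:ℕ) ∣ k.natAbs := by
        have := Int.natAbs_dvd_natAbs.2 hd
        simpa using this
      have := Nat.le_of_dvd (by omega) hdd
      omega
    · have hdd : k.natAbs ∣ p := by
        have := Int.natAbs_dvd_natAbs.2 hd
        simpa using this
      rcases Nat.Prime.eq_one_or_self_of_dvd hp _ hdd with h | h <;> omega
  have s1 := same_side hwinf (him _ m2) (him _ mp)
    (fun hc => na1 ((map_adj φ).1 hc))
  have s2 := same_side hwinf (him _ mp) (him _ mk)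
    (fun hc => na2 ((map_adj φ).1 hc))
  exact s2.symm.trans s1.symm

lemma stepB (hG : Monoid.IsTorsionFree G) (φ : zpmPowerGraph G ≃g zpmPowerGraph H)
    {x : G} (hx : x ≠ 1) {k : ℤ} (h0 : k ≠ 0) (h1 : k ≠ 1) (hm1 : k ≠ -1) :
    (φ.symm ((φ x) ^ k) ∈ Osucc x ↔ φ.symm ((φ x) ^ (2:ℤ)) ∈ Osucc x) := by
  have hxinf := hG x hx
  have hwinf := inf_image hG φ hx
  set w := φ x with hw
  have hk2 : 2 ≤ k.natAbs := by omega
  obtain ⟨p, hple, hp⟩ := Nat.exists_infinite_primes (k.natAbs + 3)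
  have hp2 : 2 < p := by omega
  have hpk : (p:ℤ) ≠ 0 := by exact_mod_cast (by omega : p ≠ 0)
  have hpone : (p:ℤ) ≠ 1 := by exact_mod_cast (by omega : p ≠ 1)
  have hpnegone : (p:ℤ) ≠ -1 := by
    intro hc
    have : (0:ℤ) ≤ p := by positivity
    omega
  have m2 : w ^ (2:ℤ) ∈ Mnbr w := zpow_mem_Mnbr hwinf (by norm_num) (by norm_num) (by norm_num)
  have mp : w ^ (p:ℤ) ∈ Mnbr w := zpow_mem_Mnbr hwinf hpk hpone hpnegone
  have mk : w ^ k ∈ Mnbr w := zpow_mem_Mnbr hwinf h0 h1 hm1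
  have him : ∀ y ∈ Mnbr w, φ.symm y ∈ Mnbr x := by
    intro y hy
    rw [← map_Mnbr_symm hG φ hx]
    exact ⟨y, hy, rfl⟩
  have na1 : ¬ (zpmPowerGraph H).Adj (w ^ (2:ℤ)) (w ^ (p:ℤ)) := by
    rw [adj_zpow_iff hwinf (by norm_num) hpk]
    rintro ⟨hne, hd | hd⟩
    · have hdd : (2:ℕ) ∣ p := by exact_mod_cast hd
      rcases Nat.Prime.eq_one_or_self_of_dvd hp 2 hdd with h | h <;> omega
    · have hdd : (p:ℕ) ∣ 2 := by
        have := Int.natAbs_dvd_natAbs.2 hd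
        simpa using this
      have := Nat.le_of_dvd (by norm_num) hdd
      omega
  have na2 : ¬ (zpmPowerGraph H).Adj (w ^ (p:ℤ)) (w ^ k) := by
    rw [adj_zpow_iff hwinf hpk h0]
    rintro ⟨hne, hd | hd⟩
    · have hdd : (p:ℕ) ∣ k.natAbs := by
        have := Int.natAbs_dvd_natAbs.2 hd
        simpa using this
      have := Nat.le_of_dvd (by omega) hdd
      omega
    · have hdd : k.natAbs ∣ p := by
        have := Int.natAbs_dvd_natAbs.2 hd
        simpa using this
      rcases Nat.Prime.eq_one_or_self_of_dvd hp _ hdd with h | h <;> omega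
  have s1 := same_side hxinf (him _ m2) (him _ mp)
    (fun hc => na1 ((map_adj φ.symm).1 hc))
  have s2 := same_side hxinf (him _ mp) (him _ mk)
    (fun hc => na2 ((map_adj φ.symm).1 hc))
  exact s2.symm.trans s1.symm

lemma main_cases (hG : Monoid.IsTorsionFree G) (φ : zpmPowerGraph G ≃g zpmPowerGraph H)
    {z : G} (hz : z ≠ 1) :
    (⇑φ '' Osucc z = Osucc (φ z) ∧ ⇑φ '' Ipred z = Ipred (φ z)) ∨
    (⇑φ '' Osucc z = Ipred (φ z) ∧ ⇑φ '' Ipred z = Osucc (φ z)) := by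
  have hzinf := hG z hz
  have hwinf := inf_image hG φ hz
  set w := φ z with hw
  have himM : ∀ y ∈ Mnbr z, φ y ∈ Mnbr w := by
    intro y hy
    rw [← map_Mnbr hG φ hz]
    exact ⟨y, hy, rfl⟩
  have hpreM : ∀ v ∈ Mnbr w, φ.symm v ∈ Mnbr z := by
    intro v hv
    rw [← map_Mnbr_symm hG φ hz]
    exact ⟨v, hv, rfl⟩
  have hIsubM : Ipred z ⊆ Mnbr z := Set.subset_union_left
  have hOsubM : Osucc z ⊆ Mnbr z := Set.subset_union_right
  have hIsubMw : Ipred w ⊆ Mnbr w := Set.subset_union_left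
  have hOsubMw : Osucc w ⊆ Mnbr w := Set.subset_union_right
  by_cases hside : φ (z ^ (2:ℤ)) ∈ Osucc w
  · left
    have hOim : ∀ y ∈ Osucc z, φ y ∈ Osucc w := by
      intro y hy
      obtain ⟨n, hn, rfl⟩ := (mem_Osucc hzinf).1 hy
      exact (stepA hG φ hz hn.1 hn.2.1 hn.2.2).2 hside
    have hside' : φ.symm (w ^ (2:ℤ)) ∈ Osucc z := by
      by_contra hc
      obtain ⟨m, hm, hw2⟩ := (mem_Osucc hwinf).1 hside
      have hz2 : z ^ (2:ℤ) = φ.symm (w ^ m) := by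
        rw [← hw2]
        simp
      have hmem := stepB hG φ hz hm.1 hm.2.1 hm.2.2
      have hz2O : z ^ (2:ℤ) ∈ Osucc z :=
        zpow_mem_Osucc hzinf (by norm_num) (by norm_num) (by norm_num)
      rw [hz2] at hz2O
      exact hc (hmem.1 hz2O)
    have hOim' : ∀ v ∈ Osucc w, φ.symm v ∈ Osucc z := by
      intro v hv
      obtain ⟨n, hn, rfl⟩ := (mem_Osucc hwinf).1 hv
      exact (stepB hG φ hz hn.1 hn.2.1 hn.2.2).2 hside'
    have hOeq : ⇑φ '' Osucc z = Osucc w := by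
      ext v
      constructor
      · rintro ⟨y, hy, rfl⟩
        exact hOim y hy
      · intro hv
        exact ⟨φ.symm v, hOim' v hv, by simp⟩
    refine ⟨hOeq, ?_⟩
    ext v
    constructor
    · rintro ⟨y, hy, rfl⟩
      rcases himM y (hIsubM hy) with hI | hO
      · exact hI
      · exfalso
        have h5 := hOim' _ hO
        rw [φ.symm_apply_apply] at h5
        exact O_I_disjoint hzinf h5 hy
    · intro hv
      rcases hpreM v (hIsubMw hv) with hI | hO
      · exact ⟨φ.symm v, hI, by simp⟩
      · exfalso
        have h5 := hOim _ hO
        rw [φ.apply_symm_apply] at h5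
        exact O_I_disjoint hwinf h5 hv
  · right
    have hOim : ∀ y ∈ Osucc z, φ y ∈ Ipred w := by
      intro y hy
      have hnot : φ y ∉ Osucc w := by
        obtain ⟨n, hn, rfl⟩ := (mem_Osucc hzinf).1 hy
        exact fun hc => hside ((stepA hG φ hz hn.1 hn.2.1 hn.2.2).1 hc)
      rcases himM y (hOsubM hy) with hI | hO
      · exact hI
      · exact absurd hO hnot
    have hside' : φ.symm (w ^ (2:ℤ)) ∉ Osucc z := by
      intro hc
      obtain ⟨j, hj, hzj⟩ := (mem_Osucc hzinf).1 hc
      have h2 : w ^ (2:ℤ) = φ (z ^ j) := by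
        rw [← hzj]
        simp
      have h3 : φ (z ^ j) ∈ Ipred w := hOim _ (zpow_mem_Osucc hzinf hj.1 hj.2.1 hj.2.2)
      have h4 : w ^ (2:ℤ) ∈ Osucc w :=
        zpow_mem_Osucc hwinf (by norm_num) (by norm_num) (by norm_num)
      rw [h2] at h4
      exact O_I_disjoint hwinf h4 h3
    have hIim' : ∀ v ∈ Osucc w, φ.symm v ∈ Ipred z := by
      intro v hv
      have hnot : φ.symm v ∉ Osucc z := by
        obtain ⟨n, hn, rfl⟩ := (mem_Osucc hwinf).1 hv
        exact fun hc => hside' ((stepB hG φ hz hn.1 hn.2.1 hn.2.2).1 hc)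
      rcases hpreM v (hOsubMw hv) with hI | hO
      · exact hI
      · exact absurd hO hnot
    have hkey : ∀ x ∈ Ipred z, φ x ∉ Ipred w := by
      intro x hxmem hux
      obtain ⟨hxz, hxzi, a, ha0, hza⟩ := hxmem
      have hx1 : x ≠ 1 := by
        rintro rfl
        rw [one_zpow] at hza
        exact hz hza
      have hxinf := hG x hx1
      have huinf := inf_image hG φ hx1
      obtain ⟨huw, huwi, b, hb0, hwb⟩ := hux
      have ha1 : a ≠ 1 := by
        rintro rfl
        rw [zpow_one] at hza
        exact hxz hza.symm
      have ham1 : a ≠ -1 := by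
        rintro rfl
        rw [zpow_neg_one] at hza
        exact hxzi (by rw [hza, inv_inv])
      have hb1 : b ≠ 1 := by
        rintro rfl
        rw [zpow_one] at hwb
        exact huw hwb.symm
      have hbm1 : b ≠ -1 := by
        rintro rfl
        rw [zpow_neg_one] at hwb
        exact huwi (by rw [hwb, inv_inv])
      have hwO : φ (x ^ a) ∈ Osucc (φ x) := by
        rw [← hza]
        exact (mem_Osucc huinf).2 ⟨b, ⟨hb0, hb1, hbm1⟩, hwb⟩
      have hsideX : φ (x ^ (2:ℤ)) ∈ Osucc (φ x) := (stepA hG φ hx1 ha0 ha1 ham1).1 hwO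
      have ha2 : 2 ≤ a.natAbs := by omega
      classical
      set B := b.natAbs with hB
      have hBpos : 1 ≤ B := by omega
      set T : Finset H := (Finset.Icc (-(B:ℤ)) (B:ℤ)).image (fun j => (φ x) ^ j) with hT
      have hmemT : ∀ k : ℕ, 2 ≤ k → φ (z ^ (k:ℤ)) ∈ T := by
        intro k hk
        have hkz : ((k:ℤ)) ≠ 0 := by exact_mod_cast (by omega : k ≠ 0)
        have hak : z ^ (k:ℤ) = x ^ (a * k) := by
          rw [zpow_mul, ← hza]
        have habs : (a * k).natAbs = a.natAbs * k := by
          rw [Int.natAbs_mul]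
          simp
        have hv0 : a * (k:ℤ) ≠ 0 := mul_ne_zero ha0 hkz
        have hge4 : 4 ≤ (a * (k:ℤ)).natAbs := by
          rw [habs]
          exact Nat.mul_le_mul ha2 hk
        have hv1 : a * (k:ℤ) ≠ 1 := by
          intro hc
          rw [hc] at hge4
          norm_num at hge4
        have hvm1 : a * (k:ℤ) ≠ -1 := by
          intro hc
          rw [hc] at hge4
          norm_num at hge4
        have hmemO : φ (x ^ (a * (k:ℤ))) ∈ Osucc (φ x) :=
          (stepA hG φ hx1 hv0 hv1 hvm1).2 hsideX
        rw [← hak] at hmemO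
        have hkO : z ^ (k:ℤ) ∈ Osucc z :=
          zpow_mem_Osucc hzinf hkz (by exact_mod_cast (by omega : k ≠ 1))
            (by intro hc; omega)
        have hmemI : φ (z ^ (k:ℤ)) ∈ Ipred w := hOim _ hkO
        obtain ⟨j, hj, hjeq⟩ := (mem_Osucc huinf).1 hmemO
        obtain ⟨_, _, c, hc0, hwc⟩ := hmemI
        rw [hjeq, ← zpow_mul] at hwc
        have hbjc : b = j * c := (zpow_inj huinf).1 (hwb.symm.trans hwc)
        have hjb : j ∣ b := ⟨c, hbjc⟩
        have hjle : j.natAbs ≤ B := by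
          rw [hB]
          exact Nat.le_of_dvd (by omega) (Int.natAbs_dvd_natAbs.2 hjb)
        rw [hT]
        refine Finset.mem_image.2 ⟨j, Finset.mem_Icc.2 ⟨by omega, by omega⟩, hjeq.symm⟩
      have hinj2 : Set.InjOn (fun k : ℕ => φ (z ^ (k:ℤ))) (Finset.Icc 2 (2*B+3)) := by
        intro i _ j _ hh
        simp only at hh
        have h6 := φ.injective hh
        have h7 := (zpow_inj hzinf).1 h6
        exact_mod_cast h7
      have hcard := Finset.card_le_card_of_injOn _
        (fun k hk => hmemT k (Finset.mem_Icc.1 hk).1) hinj2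
      have hcard1 : (Finset.Icc 2 (2*B+3)).card = 2*B+2 := by
        rw [Nat.card_Icc]
        omega
      have hcard2 : T.card ≤ 2*B+1 := by
        rw [hT]
        refine le_trans Finset.card_image_le ?_
        rw [Int.card_Icc]
        omega
      omega
    have hOeqI : ⇑φ '' Osucc z = Ipred w := by
      ext v
      constructor
      · rintro ⟨y, hy, rfl⟩
        exact hOim y hy
      · intro hv
        rcases hpreM v (hIsubMw hv) with hI | hO
        · exfalso
          exact hkey _ hI (by rw [φ.apply_symm_apply]; exact hv)
        · exact ⟨φ.symm v, hO, by simp⟩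
    have hIeqO : ⇑φ '' Ipred z = Osucc w := by
      ext v
      constructor
      · rintro ⟨y, hy, rfl⟩
        rcases himM y (hIsubM hy) with hI | hO
        · exact absurd hI (hkey y hy)
        · exact hO
      · intro hv
        exact ⟨φ.symm v, hIim' v hv, by simp⟩
    exact ⟨hOeqI, hIeqO⟩

def complIso {V W : Type*} {A : SimpleGraph V} {B : SimpleGraph W} (ψ : A ≃g B) : Aᶜ ≃g Bᶜ where
  toEquiv := ψ.toEquiv
  map_rel_iff' := by
    intro a b
    change (Bᶜ).Adj (ψ a) (ψ b) ↔ (Aᶜ).Adj a b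
    rw [SimpleGraph.compl_adj, SimpleGraph.compl_adj]
    constructor
    · rintro ⟨h1, h2⟩
      exact ⟨fun hc => h1 (by rw [hc]), fun hc => h2 (ψ.map_adj_iff.2 hc)⟩
    · rintro ⟨h1, h2⟩
      exact ⟨fun hc => h1 (ψ.injective hc), fun hc => h2 (ψ.map_adj_iff.1 hc)⟩

@[simp] lemma complIso_coe {V W : Type*} {A : SimpleGraph V} {B : SimpleGraph W}
    (ψ : A ≃g B) : ⇑(complIso ψ) = ⇑ψ := rfl

noncomputable def induceIso {V W : Type*} {A : SimpleGraph V} {B : SimpleGraph W} (ψ : A ≃g B)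
    {s : Set V} {t : Set W} (h : ⇑ψ '' s = t) : A.induce s ≃g B.induce t where
  toEquiv := (ψ.toEquiv.image s).trans (Equiv.setCongr (by exact h))
  map_rel_iff' := by
    rintro ⟨a, ha⟩ ⟨b, hb⟩
    exact ψ.map_adj_iff

def Dgraph : SimpleGraph {n : ℤ // n ≠ 0 ∧ n ≠ 1 ∧ n ≠ -1} where
  Adj a b := a ≠ b ∧ ¬((a : ℤ) ∣ (b : ℤ) ∨ (b : ℤ) ∣ (a : ℤ))
  symm := by
    constructor
    rintro a b ⟨h1, h2⟩
    exact ⟨h1.symm, fun hc => h2 hc.symm⟩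
  loopless := by
    constructor
    rintro a ⟨h, _⟩
    exact h rfl

noncomputable def DIso {x : K} (hx : ¬IsOfFinOrder x) :
    Dgraph ≃g ((zpmPowerGraph K)ᶜ).induce (Osucc x) where
  toEquiv := Equiv.ofBijective
    (fun n => ⟨x ^ (n : ℤ), zpow_mem_Osucc hx n.2.1 n.2.2.1 n.2.2.2⟩)
    (by
      constructor
      · intro a b hab
        exact Subtype.ext ((zpow_inj hx).1 (congrArg Subtype.val hab))
      · intro v
        obtain ⟨n, hn, hv⟩ := (mem_Osucc hx).1 v.2
        exact ⟨⟨n, hn⟩, Subtype.ext hv.symm⟩)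
  map_rel_iff' := by
    rintro ⟨a, ha⟩ ⟨b, hb⟩
    show ((zpmPowerGraph K)ᶜ).Adj (x ^ a) (x ^ b) ↔ Dgraph.Adj ⟨a, ha⟩ ⟨b, hb⟩
    rw [SimpleGraph.compl_adj, adj_zpow_iff hx ha.1 hb.1]
    constructor
    · rintro ⟨h1, h2⟩
      have hab : a ≠ b := fun hc => h1 (by rw [hc])
      exact ⟨fun hc => hab (congrArg Subtype.val hc), fun hc => h2 ⟨hab, hc⟩⟩
    · rintro ⟨h1, h2⟩
      have hab : a ≠ b := fun hc => h1 (Subtype.ext hc)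
      exact ⟨fun hc => hab ((zpow_inj hx).1 hc), fun hc => h2 hc.2⟩

end IsoOnMnbrAux

open IsoOnMnbrAux in
/-- Let `G` be torsion-free, `φ` an isomorphism of the Z±-power graphs of `G` and `H`, and `z` a
non-identity element of `G`. Then `φ` maps `M_G(z)` onto `M_H(φ z)`, inducing an isomorphism of
the subgraphs of the complements induced by these sets, and the subgraphs of the complements
induced by `I_G(z)` and `I_H(φ z)` (resp. `O_G(z)` and `O_H(φ z)`) are isomorphic. -/
theorem iso_on_Mnbr {G H : Type*} [Group G] [Group H] (hG : Monoid.IsTorsionFree G)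
    (φ : zpmPowerGraph G ≃g zpmPowerGraph H) (z : G) (hz : z ≠ 1) :
    (φ '' Mnbr z = Mnbr (φ z)) ∧
      (∀ u ∈ Mnbr z, ∀ v ∈ Mnbr z,
        ((zpmPowerGraph G)ᶜ).Adj u v ↔ ((zpmPowerGraph H)ᶜ).Adj (φ u) (φ v)) ∧
      Nonempty (((zpmPowerGraph G)ᶜ).induce (Mnbr z) ≃g
        ((zpmPowerGraph H)ᶜ).induce (Mnbr (φ z))) ∧
      Nonempty (((zpmPowerGraph G)ᶜ).induce (Ipred z) ≃g
        ((zpmPowerGraph H)ᶜ).induce (Ipred (φ z))) ∧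
      Nonempty (((zpmPowerGraph G)ᶜ).induce (Osucc z) ≃g
        ((zpmPowerGraph H)ᶜ).induce (Osucc (φ z))) := by
  have hzinf := hG z hz
  have hwinf := inf_image hG φ hz
  have hM := map_Mnbr hG φ hz
  refine ⟨hM, ?_, ?_, ?_, ?_⟩
  · intro u hu v hv
    rw [SimpleGraph.compl_adj, SimpleGraph.compl_adj]
    constructor
    · rintro ⟨h1, h2⟩
      exact ⟨fun hc => h1 (φ.injective hc), fun hc => h2 ((map_adj φ).1 hc)⟩
    · rintro ⟨h1, h2⟩
      exact ⟨fun hc => h1 (by rw [hc]), fun hc => h2 ((map_adj φ).2 hc)⟩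
  · exact ⟨induceIso (complIso φ) (by simpa using hM)⟩
  · rcases main_cases hG φ hz with ⟨hO, hI⟩ | ⟨hOI, hIO⟩
    · exact ⟨induceIso (complIso φ) (by simpa using hI)⟩
    · refine ⟨(induceIso (complIso φ) (s := Ipred z) (t := Osucc (φ z))
        (by simpa using hIO)).trans ?_⟩
      exact (DIso hwinf).symm.trans ((DIso hzinf).trans
        (induceIso (complIso φ) (by simpa using hOI)))
  · exact ⟨(DIso hzinf).symm.trans (DIso hwinf)⟩
end

section
/- Let a ∈ ℚ \ {0} and define φ_a : ℚ → ℚ by φ_a(0) = 0 and φ_a(x) = a²/x for x ≠ 0 (all operations in the multiplicative sense applied to the additive group (ℚ,+): here a²/x means the rational number a·a/x). Then φ_a is an automorphism of the Z±-power graph 𝒢±(ℚ,+), and φ_a is an anti-automorphism of the directed Z±-power graph of (ℚ,+) (i.e., x → y iff φ_a(y) → φ_a(x)); moreover, φ_a maps I_ℚ(a) bijectively onto O_ℚ(a), giving an isomorphism from the induced subgraph of 𝒢±(ℚ,+) on I_ℚ(a) to that on O_ℚ(a). -/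
set_option linter.unusedVariables false

/-- The Z±-power graph of the additive group `(ℚ, +)`: distinct `x, y` adjacent iff one is a
nonzero integer multiple of the other. -/
def zpmQ : SimpleGraph ℚ where
  Adj x y := x ≠ y ∧ ∃ n : ℤ, n ≠ 0 ∧ (y = n • x ∨ x = n • y)
  symm := ⟨fun x y ⟨hxy, n, hn, h⟩ => ⟨hxy.symm, n, hn, h.symm⟩⟩
  loopless := ⟨fun x ⟨h, _⟩ => h rfl⟩

/-- The directed Z±-power graph of `(ℚ, +)`: `x → y` iff `x ≠ y` and `y = n • x` for some
nonzero integer `n`. -/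
def dirQ : ℚ → ℚ → Prop :=
  fun x y => x ≠ y ∧ ∃ n : ℤ, n ≠ 0 ∧ y = n • x

/-- `O_ℚ(x)`: direct successors of `x` in the directed Z±-power graph of `(ℚ,+)`, excluding `-x`. -/
def OsuccQ (x : ℚ) : Set ℚ :=
  {y | y ≠ x ∧ y ≠ -x ∧ ∃ n : ℤ, n ≠ 0 ∧ y = n • x}

/-- `I_ℚ(x)`: direct predecessors of `x` in the directed Z±-power graph of `(ℚ,+)`, excluding `-x`. -/
def IpredQ (x : ℚ) : Set ℚ :=
  {y | y ≠ x ∧ y ≠ -x ∧ ∃ n : ℤ, n ≠ 0 ∧ x = n • y}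

/-- The map `φ_a : ℚ → ℚ`, `φ_a(0) = 0` and `φ_a(x) = a²/x` otherwise. -/
noncomputable def phiQ (a : ℚ) : ℚ → ℚ := fun x => if x = 0 then 0 else a ^ 2 / x

lemma phiQ_aux (a x y : ℚ) (ha2 : a^2 ≠ 0) (hx : x ≠ 0) (hy : y ≠ 0) (n : ℤ) :
    (y = n * x ↔ a^2/x = n * (a^2/y)) := by
  constructor
  · rintro rfl; field_simp; rw [mul_div_cancel_right₀ _ (left_ne_zero_of_mul hy)]
  · intro h
    have h2 : a^2 * y = n * (a^2 * x) := by
      field_simp at h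
      linarith [h]
    exact mul_left_cancel₀ ha2 (by linear_combination h2 : a^2 * y = a^2 * (n * x))

/-- For nonzero `a ∈ ℚ`, `φ_a` is an automorphism of the Z±-power graph of `(ℚ,+)`, an
anti-automorphism of the directed Z±-power graph of `(ℚ,+)`, and maps `I_ℚ(a)` bijectively onto
`O_ℚ(a)` giving an isomorphism of the corresponding induced subgraphs. -/
theorem phiQ_properties (a : ℚ) (ha : a ≠ 0) :
    Function.Bijective (phiQ a) ∧
      (∀ x y : ℚ, zpmQ.Adj x y ↔ zpmQ.Adj (phiQ a x) (phiQ a y)) ∧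
      (∀ x y : ℚ, dirQ x y ↔ dirQ (phiQ a y) (phiQ a x)) ∧
      Set.BijOn (phiQ a) (IpredQ a) (OsuccQ a) ∧
      Nonempty (zpmQ.induce (IpredQ a) ≃g zpmQ.induce (OsuccQ a)) := by
  have ha2 : a ^ 2 ≠ 0 := pow_ne_zero _ ha
  have h00 : phiQ a 0 = 0 := by simp [phiQ]
  have hne : ∀ x : ℚ, x ≠ 0 → phiQ a x ≠ 0 := by
    intro x hx
    simp only [phiQ, if_neg hx]
    exact div_ne_zero ha2 hx
  have hinv : Function.Involutive (phiQ a) := by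
    intro x
    rcases eq_or_ne x 0 with rfl | hx
    · simp [phiQ]
    · have h1 : a ^ 2 / x ≠ 0 := div_ne_zero ha2 hx
      simp only [phiQ, if_neg hx, if_neg h1]
      field_simp
  have hbij : Function.Bijective (phiQ a) := hinv.bijective
  have hzero : ∀ x : ℚ, phiQ a x = 0 ↔ x = 0 := by
    intro x
    constructor
    · intro h; by_contra hx; exact hne x hx h
    · rintro rfl; exact h00
  have hkey : ∀ (x y : ℚ), x ≠ 0 → y ≠ 0 → ∀ n : ℤ,
      (y = n • x ↔ phiQ a x = n • phiQ a y) := by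
    intro x y hx hy n
    simp only [phiQ, if_neg hx, if_neg hy, zsmul_eq_mul]
    exact phiQ_aux a x y ha2 hx hy n
  have hNe : ∀ x y : ℚ, x ≠ y ↔ phiQ a x ≠ phiQ a y :=
    fun x y => ⟨fun h h' => h (hbij.injective h'), fun h h' => h (h' ▸ rfl)⟩
  have hdir : ∀ x y : ℚ, dirQ x y ↔ dirQ (phiQ a y) (phiQ a x) := by
    intro x y
    unfold dirQ
    rcases eq_or_ne x 0 with rfl | hx
    · constructor
      · rintro ⟨hne', n, hn, h⟩
        rw [smul_zero] at h
        exact absurd h.symm hne'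
      · rintro ⟨hne', n, hn, h⟩
        rw [h00] at h hne'
        rcases smul_eq_zero.mp h.symm with h1 | h1
        · exact absurd h1 hn
        · exact absurd h1 hne'
    · rcases eq_or_ne y 0 with rfl | hy
      · constructor
        · rintro ⟨hne', n, hn, h⟩
          rcases smul_eq_zero.mp h.symm with h1 | h1
          · exact absurd h1 hn
          · exact absurd h1 hx
        · rintro ⟨hne', n, hn, h⟩
          rw [h00, smul_zero] at h
          exact absurd ((hzero x).mp h) hx
      · constructor
        · rintro ⟨hne', n, hn, h⟩
          exact ⟨fun h' => hne' (hbij.injective h'.symm), n, hn,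
            (hkey x y hx hy n).mp h⟩
        · rintro ⟨hne', n, hn, h⟩
          exact ⟨fun h' => hne' (h' ▸ rfl), n, hn, (hkey x y hx hy n).mpr h⟩
  have haa : phiQ a a = a := by
    simp only [phiQ, if_neg ha, pow_two]
    field_simp
  have hnaa : phiQ a (-a) = -a := by
    simp only [phiQ, if_neg (neg_ne_zero.mpr ha)]
    rw [div_eq_iff (neg_ne_zero.mpr ha)]
    ring
  have hfix : ∀ y : ℚ, phiQ a y = a → y = a := by
    intro y h2
    have h3 : y = phiQ a (phiQ a y) := (hinv y).symm
    rw [h2, haa] at h3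
    exact h3
  have hfixn : ∀ y : ℚ, phiQ a y = -a → y = -a := by
    intro y h2
    have h3 : y = phiQ a (phiQ a y) := (hinv y).symm
    rw [h2, hnaa] at h3
    exact h3
  have hadj : ∀ x y : ℚ, zpmQ.Adj x y ↔ zpmQ.Adj (phiQ a x) (phiQ a y) := by
    intro x y
    show (x ≠ y ∧ _) ↔ (phiQ a x ≠ phiQ a y ∧ _)
    constructor
    · rintro ⟨hne', n, hn, h⟩
      refine ⟨(hNe x y).mp hne', n, hn, ?_⟩
      rcases h with h | h
      · rcases eq_or_ne x 0 with rfl | hx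
        · rw [smul_zero] at h; exact absurd h.symm hne'
        · have hy : y ≠ 0 := by
            rintro rfl
            rcases smul_eq_zero.mp h.symm with h1 | h1
            · exact hn h1
            · exact hx h1
          exact Or.inr ((hkey x y hx hy n).mp h)
      · rcases eq_or_ne y 0 with rfl | hy
        · rw [smul_zero] at h; exact absurd h hne'
        · have hx : x ≠ 0 := by
            rintro rfl
            rcases smul_eq_zero.mp h.symm with h1 | h1
            · exact hn h1
            · exact hy h1
          exact Or.inl ((hkey y x hy hx n).mp h)
    · rintro ⟨hne', n, hn, h⟩
      refine ⟨(hNe x y).mpr hne', n, hn, ?_⟩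
      rcases h with h | h
      · -- h : phiQ a y = n • phiQ a x, gives x = n • y
        rcases eq_or_ne x 0 with rfl | hx
        · rw [h00, smul_zero] at h
          rw [h00] at hne'
          exact absurd h.symm hne'
        · have hy : y ≠ 0 := by
            rintro rfl
            rw [h00] at h
            rcases smul_eq_zero.mp h.symm with h1 | h1
            · exact hn h1
            · exact hne x hx h1
          exact Or.inr ((hkey y x hy hx n).mpr h)
      · -- h : phiQ a x = n • phiQ a y, gives y = n • x
        rcases eq_or_ne y 0 with rfl | hy
        · rw [h00, smul_zero] at h
          rw [h00] at hne'
          exact absurd h hne'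
        · have hx : x ≠ 0 := by
            rintro rfl
            rw [h00] at h
            rcases smul_eq_zero.mp h.symm with h1 | h1
            · exact hn h1
            · exact hne y hy h1
          exact Or.inl ((hkey x y hx hy n).mpr h)
  -- BijOn
  have hIO : Set.MapsTo (phiQ a) (IpredQ a) (OsuccQ a) := by
    rintro y ⟨hya, hyna, n, hn, h⟩
    have hy : y ≠ 0 := by
      rintro rfl; rw [smul_zero] at h; exact ha h
    have h1 : phiQ a y = n • a := by
      have := (hkey y a hy ha n).mp h
      rwa [haa] at this
    exact ⟨fun h2 => hya (hfix y h2), fun h2 => hyna (hfixn y h2), n, hn, h1⟩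
  have hOI : Set.MapsTo (phiQ a) (OsuccQ a) (IpredQ a) := by
    rintro y ⟨hya, hyna, n, hn, h⟩
    have hy : y ≠ 0 := by
      rintro rfl
      rcases smul_eq_zero.mp h.symm with h1 | h1
      · exact hn h1
      · exact ha h1
    have h1 : a = n • phiQ a y := by
      have := (hkey a y ha hy n).mp h
      rwa [haa] at this
    exact ⟨fun h2 => hya (hfix y h2), fun h2 => hyna (hfixn y h2), n, hn, h1⟩
  have hBijOn : Set.BijOn (phiQ a) (IpredQ a) (OsuccQ a) :=
    ⟨hIO, hbij.injective.injOn, fun z hz => ⟨phiQ a z, hOI hz, hinv z⟩⟩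
  refine ⟨hbij, hadj, hdir, hBijOn, ⟨⟨hBijOn.equiv (phiQ a), ?_⟩⟩⟩
  intro u v
  exact (hadj u.val v.val).symm
end

section
/- Let G be a torsion-free group and let x, y, z ∈ G be such that x, y ∈ O_G(z), y = x^n for some nonzero integer n, and y ∉ {x, x⁻¹}. Let H be a group and let φ : G → H be an isomorphism from the Z±-power graph 𝒢±(G) to 𝒢±(H). Then φ(y) = φ(x)^m for some nonzero integer m if and only if φ maps O_G(z) bijectively onto O_H(φ(z)). -/
set_option linter.unusedVariables false

lemma two_le_abs_iff (c : ℤ) : 2 ≤ |c| ↔ c ≠ 0 ∧ c ≠ 1 ∧ c ≠ -1 := by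
  rcases le_or_gt 0 c with h | h
  · rw [abs_of_nonneg h]; omega
  · rw [abs_of_neg h]; omega

lemma isOfFinOrder_of_zpow_eq_one {K : Type*} [Group K] {g : K} {n : ℤ} (hn : n ≠ 0)
    (h : g ^ n = 1) : IsOfFinOrder g := by
  refine isOfFinOrder_iff_pow_eq_one.mpr ⟨n.natAbs, by omega, ?_⟩
  have hcast := zpow_natCast g n.natAbs
  rcases Int.natAbs_eq n with he | he
  · rw [← hcast, ← he, h]
  · have h2 : (n.natAbs : ℤ) = -n := by omega
    rw [← hcast, h2, zpow_neg, h, inv_one]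

lemma tf_zpow_inj {K : Type*} [Group K] (hK : Monoid.IsTorsionFree K) {g : K} (hg : g ≠ 1)
    {i j : ℤ} (h : g ^ i = g ^ j) : i = j := by
  by_contra hij
  have hk : g ^ (i - j) = 1 := by rw [zpow_sub, h]; exact mul_inv_cancel _
  exact hK g hg (isOfFinOrder_of_zpow_eq_one (by omega) hk)

lemma zpm_adj_ne_one {K : Type*} [Group K] (hK : Monoid.IsTorsionFree K) {v w : K}
    (h : (zpmPowerGraph K).Adj v w) : v ≠ 1 := by
  rintro rfl
  obtain ⟨hne, n, hn0, hc⟩ := h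
  rcases hc with hc | hc
  · rw [one_zpow] at hc; exact hne hc.symm
  · by_cases hw : w = 1
    · exact hne hw.symm
    · exact hK w hw (isOfFinOrder_of_zpow_eq_one hn0 hc.symm)

lemma zpm_one_not_adj {K : Type*} [Group K] (hK : Monoid.IsTorsionFree K) (w : K) :
    ¬ (zpmPowerGraph K).Adj 1 w := fun h => (zpm_adj_ne_one hK h) rfl

lemma tf_of_graph_iso {G H : Type*} [Group G] [Group H] (hG : Monoid.IsTorsionFree G)
    (φ : zpmPowerGraph G ≃g zpmPowerGraph H) : Monoid.IsTorsionFree H := by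
  have hiso : ∀ w : H, ¬ (zpmPowerGraph H).Adj (φ 1) w := by
    intro w hw
    have hw2 : (zpmPowerGraph H).Adj (φ 1) (φ (φ.symm w)) := by
      rw [φ.apply_symm_apply]; exact hw
    exact zpm_one_not_adj hG (φ.symm w) (φ.map_rel_iff.mp hw2)
  have h1 : φ 1 = 1 := by
    by_contra hne1
    refine hiso ((φ 1) ^ (2:ℤ)) ⟨?_, 2, two_ne_zero, Or.inl rfl⟩
    intro he
    rw [zpow_two] at he
    exact hne1 (right_eq_mul.mp he)
  intro h hh hfin
  obtain ⟨k, hk0, hk⟩ := isOfFinOrder_iff_pow_eq_one.mp hfin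
  have hadj : (zpmPowerGraph H).Adj h 1 := by
    refine ⟨hh, (k : ℤ), by exact_mod_cast hk0.ne', Or.inl ?_⟩
    rw [zpow_natCast, hk]
  rw [← h1] at hadj
  exact hiso h hadj.symm

lemma zpm_adj_inv {K : Type*} [Group K] {v g : K} (h : (zpmPowerGraph K).Adj v g)
    (hne : g ≠ v⁻¹) : (zpmPowerGraph K).Adj v⁻¹ g := by
  obtain ⟨hvg, n, hn0, hc⟩ := h
  refine ⟨fun he => hne he.symm, -n, neg_ne_zero.mpr hn0, ?_⟩
  rcases hc with hc | hc
  · left; rw [zpow_neg, inv_zpow, inv_inv, hc]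
  · right; rw [zpow_neg, ← hc]

lemma prime_not_comparable {c : ℤ} {p : ℕ} (pp : p.Prime) (hc : 2 ≤ |c|) (hp : c.natAbs < p) :
    ¬((p:ℤ) ∣ c) ∧ ¬(c ∣ (p:ℤ)) := by
  have hc2 : 2 ≤ c.natAbs := by
    rcases le_or_gt 0 c with h | h
    · rw [abs_of_nonneg h] at hc; omega
    · rw [abs_of_neg h] at hc; omega
  constructor
  · intro hd
    have hd' : p ∣ c.natAbs := by
      have := Int.natAbs_dvd_natAbs.mpr hd
      simpa using this
    have := Nat.le_of_dvd (by omega) hd'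
    omega
  · intro hd
    have hd' : c.natAbs ∣ p := by
      have := Int.natAbs_dvd_natAbs.mpr hd
      simpa using this
    rcases (Nat.Prime.eq_one_or_self_of_dvd pp _ hd') with h | h <;> omega

lemma map_inv_aux {G H : Type*} [Group G] [Group H] (hG : Monoid.IsTorsionFree G)
    (hH : Monoid.IsTorsionFree H) (ψ : zpmPowerGraph G ≃g zpmPowerGraph H)
    (v₁ v₂ : G) (h12 : v₂ = v₁⁻¹) (c : ℤ) (hc : ψ v₂ = (ψ v₁) ^ c)
    (hVne1 : ψ v₁ ≠ 1) (hVA : ψ v₁ ≠ ψ v₂) (hcabs : 2 ≤ |c|) : False := by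
  obtain ⟨p, hpc, pp⟩ := Nat.exists_infinite_primes (c.natAbs + 1)
  have hnc := prime_not_comparable pp hcabs (by omega)
  have hp1 : (1:ℤ) ≠ (p:ℤ) := by have := pp.two_le; omega
  have hBV : (zpmPowerGraph H).Adj (ψ v₁) ((ψ v₁) ^ (p:ℤ)) := by
    refine ⟨?_, (p:ℤ), by exact_mod_cast pp.pos.ne', Or.inl rfl⟩
    intro he
    exact hp1 (tf_zpow_inj hH hVne1 (by rw [zpow_one]; exact he))
  have hg : (zpmPowerGraph G).Adj v₁ (ψ.symm ((ψ v₁) ^ (p:ℤ))) := by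
    refine ψ.map_rel_iff.mp ?_
    rw [ψ.apply_symm_apply]; exact hBV
  have hgne : ψ.symm ((ψ v₁) ^ (p:ℤ)) ≠ v₂ := by
    intro he
    have h2 : (ψ v₁) ^ (p:ℤ) = ψ v₂ := by
      rw [← he, ψ.apply_symm_apply]
    rw [hc] at h2
    have := tf_zpow_inj hH hVne1 h2
    omega
  have hadj2 : (zpmPowerGraph G).Adj v₂ (ψ.symm ((ψ v₁) ^ (p:ℤ))) := by
    rw [h12]
    exact zpm_adj_inv hg (by rw [← h12]; exact hgne)
  have hAdj2 : (zpmPowerGraph H).Adj (ψ v₂) ((ψ v₁) ^ (p:ℤ)) := by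
    have := ψ.map_rel_iff.mpr hadj2
    rwa [ψ.apply_symm_apply] at this
  obtain ⟨hne2, e, he0, hce⟩ := hAdj2
  rcases hce with hce | hce
  · rw [hc, ← zpow_mul] at hce
    have : (p:ℤ) = c * e := tf_zpow_inj hH hVne1 hce
    exact hnc.2 ⟨e, this⟩
  · rw [hc, ← zpow_mul] at hce
    have : c = (p:ℤ) * e := tf_zpow_inj hH hVne1 hce
    exact hnc.1 ⟨e, this⟩

lemma map_inv_of_iso {G H : Type*} [Group G] [Group H] (hG : Monoid.IsTorsionFree G)
    (hH : Monoid.IsTorsionFree H) (φ : zpmPowerGraph G ≃g zpmPowerGraph H) {v : G}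
    (hv : v ≠ 1) : φ v⁻¹ = (φ v)⁻¹ := by
  have hvv : v ≠ v⁻¹ := by
    intro he
    refine hG v hv (isOfFinOrder_iff_pow_eq_one.mpr ⟨2, two_pos, ?_⟩)
    rw [pow_two]; exact mul_eq_one_iff_eq_inv.mpr he
  have hadj : (zpmPowerGraph G).Adj v v⁻¹ := ⟨hvv, -1, by norm_num, Or.inl (zpow_neg_one v).symm⟩
  have hAdj : (zpmPowerGraph H).Adj (φ v) (φ v⁻¹) := φ.map_rel_iff.mpr hadj
  have hVne1 : φ v ≠ 1 := zpm_adj_ne_one hH hAdj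
  have hAne1 : φ v⁻¹ ≠ 1 := zpm_adj_ne_one hH hAdj.symm
  obtain ⟨hVA, c, hc0, hc⟩ := hAdj
  rcases hc with hc | hc
  · by_cases hc1 : c = -1
    · rw [hc, hc1, zpow_neg_one]
    · exfalso
      have hcabs : 2 ≤ |c| := (two_le_abs_iff c).mpr
        ⟨hc0, fun h1 => hVA (by rw [hc, h1, zpow_one]), hc1⟩
      exact map_inv_aux hG hH φ v v⁻¹ rfl c hc hVne1 hVA hcabs
  · by_cases hc1 : c = -1
    · rw [hc1, zpow_neg_one] at hc
      rw [hc, inv_inv]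
    · exfalso
      have hcabs : 2 ≤ |c| := (two_le_abs_iff c).mpr
        ⟨hc0, fun h1 => (hVA (by rw [hc, h1, zpow_one])).elim, hc1⟩
      exact map_inv_aux hG hH φ v⁻¹ v (inv_inv v).symm c hc hAne1 (Ne.symm hVA) hcabs

lemma dvd_or_dvd_of_adj_zpow {K : Type*} [Group K] (hK : Monoid.IsTorsionFree K) {t : K}
    (ht : t ≠ 1) {i j : ℤ} (h : (zpmPowerGraph K).Adj (t ^ i) (t ^ j)) : i ∣ j ∨ j ∣ i := by
  obtain ⟨hne, e, he0, hc⟩ := h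
  rcases hc with hc | hc
  · left; rw [← zpow_mul] at hc; exact ⟨e, tf_zpow_inj hK ht hc⟩
  · right; rw [← zpow_mul] at hc; exact ⟨e, tf_zpow_inj hK ht hc⟩

lemma classify {G H : Type*} [Group G] [Group H] (hG : Monoid.IsTorsionFree G)
    (hH : Monoid.IsTorsionFree H) (φ : zpmPowerGraph G ≃g zpmPowerGraph H) {t : G}
    (ht : t ≠ 1) {j : ℤ} (hj : 2 ≤ |j|) :
    (∃ c : ℤ, 2 ≤ |c| ∧ φ (t ^ j) = (φ t) ^ c) ∨
    (∃ c : ℤ, 2 ≤ |c| ∧ φ t = (φ (t ^ j)) ^ c) := by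
  obtain ⟨hj0, hj1, hjm⟩ := (two_le_abs_iff j).mp hj
  have htj : t ^ j ≠ t := fun he => hj1 (tf_zpow_inj hG ht (by rw [he, zpow_one] : t ^ j = t ^ (1:ℤ)).symm).symm
  have htj1 : t ^ j ≠ 1 := fun he => hj0 (tf_zpow_inj hG ht (by rw [he, zpow_zero] : t ^ j = t ^ (0:ℤ)))
  have hadj : (zpmPowerGraph G).Adj t (t ^ j) := ⟨Ne.symm htj, j, hj0, Or.inl rfl⟩
  have hAdj := φ.map_rel_iff.mpr hadj
  have hW : φ t ≠ 1 := zpm_adj_ne_one hH hAdj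
  have hA : φ (t ^ j) ≠ 1 := zpm_adj_ne_one hH hAdj.symm
  obtain ⟨hne, c, hc0, hc⟩ := hAdj
  rcases hc with hc | hc
  · left
    refine ⟨c, (two_le_abs_iff c).mpr ⟨hc0, ?_, ?_⟩, hc⟩
    · rintro rfl; rw [zpow_one] at hc; exact hne hc.symm
    · rintro rfl
      rw [zpow_neg_one, ← map_inv_of_iso hG hH φ ht] at hc
      have h2 : t ^ j = t⁻¹ := φ.injective hc
      exact hjm (tf_zpow_inj hG ht (by rw [h2, zpow_neg_one]))
  · right
    refine ⟨c, (two_le_abs_iff c).mpr ⟨hc0, ?_, ?_⟩, hc⟩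
    · rintro rfl; rw [zpow_one] at hc; exact hne hc
    · rintro rfl
      rw [zpow_neg_one, ← map_inv_of_iso hG hH φ htj1] at hc
      have h2 : t = (t ^ j)⁻¹ := φ.injective hc
      have h3 : t ^ (1:ℤ) = t ^ (-j) := by rw [zpow_one, zpow_neg]; exact h2
      have := tf_zpow_inj hG ht h3
      omega

lemma not_dvd_mul_primes {k : ℤ} (hk : 2 ≤ |k|) {p q : ℕ} (pp : p.Prime) (qq : q.Prime)
    (hp : k.natAbs < p) (hq : k.natAbs < q) :
    ¬(k ∣ ((p * q : ℕ) : ℤ)) ∧ ¬(((p * q : ℕ) : ℤ) ∣ k) := by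
  have hk2 : 2 ≤ k.natAbs := by
    rcases le_or_gt 0 k with h | h
    · rw [abs_of_nonneg h] at hk; omega
    · rw [abs_of_neg h] at hk; omega
  constructor
  · intro hd
    have hd' : k.natAbs ∣ p * q := by
      have h := Int.natAbs_dvd_natAbs.mpr hd
      rwa [Int.natAbs_natCast] at h
    obtain ⟨s, sp, hs⟩ := Nat.exists_prime_and_dvd (by omega : k.natAbs ≠ 1)
    have hs2 : s ∣ p * q := hs.trans hd'
    have hsle : s ≤ k.natAbs := Nat.le_of_dvd (by omega) hs
    rcases (Nat.Prime.dvd_mul sp).mp hs2 with h | h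
    · have := (Nat.prime_dvd_prime_iff_eq sp pp).mp h; omega
    · have := (Nat.prime_dvd_prime_iff_eq sp qq).mp h; omega
  · intro hd
    have hd' : p * q ∣ k.natAbs := by
      have h := Int.natAbs_dvd_natAbs.mpr hd
      rwa [Int.natAbs_natCast] at h
    have h1 := Nat.le_of_dvd (by omega) hd'
    have h2 : p ≤ p * q := Nat.le_mul_of_pos_right p qq.pos
    omega

lemma dichotomy {G H : Type*} [Group G] [Group H] (hG : Monoid.IsTorsionFree G)
    (hH : Monoid.IsTorsionFree H) (φ : zpmPowerGraph G ≃g zpmPowerGraph H) {t : G}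
    (ht : t ≠ 1) :
    (∀ j : ℤ, 2 ≤ |j| → ∃ c : ℤ, 2 ≤ |c| ∧ φ t = (φ (t ^ j)) ^ c) ∨
    (∀ j : ℤ, 2 ≤ |j| → ¬ ∃ c : ℤ, 2 ≤ |c| ∧ φ t = (φ (t ^ j)) ^ c) := by
  by_contra hcon
  push_neg at hcon
  obtain ⟨h1, h2⟩ := hcon
  obtain ⟨i₀, hi₀, hnr⟩ := h1
  obtain ⟨j₀, hj₀, hroot₀⟩ := h2
  have hpow₀ : ∃ c : ℤ, 2 ≤ |c| ∧ φ (t ^ i₀) = (φ t) ^ c :=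
    (classify hG hH φ ht hi₀).resolve_right (by rintro ⟨c, hc, hce⟩; exact hnr c hc hce)
  have hmix : ∀ jr ip : ℤ, (∃ c : ℤ, 2 ≤ |c| ∧ φ t = (φ (t ^ jr)) ^ c) →
      (∃ c : ℤ, 2 ≤ |c| ∧ φ (t ^ ip) = (φ t) ^ c) → (jr ∣ ip ∨ ip ∣ jr) := by
    rintro jr ip ⟨c, hc, hcr⟩ ⟨e, he, hep⟩
    by_cases heq : t ^ jr = t ^ ip
    · left; exact (tf_zpow_inj hG ht heq) ▸ dvd_refl _
    · have hAdj : (zpmPowerGraph H).Adj (φ (t ^ jr)) (φ (t ^ ip)) := by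
        refine ⟨fun hh => heq (φ.injective hh), c * e, ?_, Or.inl ?_⟩
        · have hc' := (two_le_abs_iff c).mp hc
          have he' := (two_le_abs_iff e).mp he
          exact mul_ne_zero hc'.1 he'.1
        · rw [hep, hcr, zpow_mul]
      exact dvd_or_dvd_of_adj_zpow hG ht (φ.map_rel_iff.mp hAdj)
  set M := j₀.natAbs + i₀.natAbs with hM
  obtain ⟨p, hpM, pp⟩ := Nat.exists_infinite_primes (M + 1)
  obtain ⟨q, hqp, qq⟩ := Nat.exists_infinite_primes (p + 1)
  have hr : 2 ≤ |((p * q : ℕ) : ℤ)| := by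
    have h4 : 4 ≤ p * q := Nat.mul_le_mul pp.two_le qq.two_le
    rw [abs_of_nonneg (by positivity)]
    exact_mod_cast by omega
  have hnci := not_dvd_mul_primes hi₀ pp qq (by omega) (by omega)
  have hncj := not_dvd_mul_primes hj₀ pp qq (by omega) (by omega)
  rcases classify hG hH φ ht hr with hpowr | hrootr
  · rcases hmix j₀ ((p * q : ℕ) : ℤ) hroot₀ hpowr with h | h
    · exact hncj.1 h
    · exact hncj.2 h
  · rcases hmix ((p * q : ℕ) : ℤ) i₀ hrootr hpow₀ with h | h
    · exact hnci.2 h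
    · exact hnci.1 h

/-- Let `G` be torsion-free, `x, y ∈ O_G(z)` with `y` a nonzero power of `x` and `y ∉ {x, x⁻¹}`,
and let `φ` be an isomorphism of the Z±-power graphs of `G` and `H`. Then `φ y` is a nonzero
power of `φ x` iff `φ` maps `O_G(z)` onto `O_H(φ z)`. -/
theorem dir_preserved_iff_Osucc_image {G H : Type*} [Group G] [Group H]
    (hG : Monoid.IsTorsionFree G) (x y z : G)
    (hx : x ∈ Osucc z) (hy : y ∈ Osucc z)
    (hxy : ∃ n : ℤ, n ≠ 0 ∧ y = x ^ n) (hne : y ≠ x ∧ y ≠ x⁻¹)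
    (φ : zpmPowerGraph G ≃g zpmPowerGraph H) :
    (∃ m : ℤ, m ≠ 0 ∧ φ y = (φ x) ^ m) ↔ φ '' Osucc z = Osucc (φ z) := by
  classical
  obtain ⟨hxz, hxzi, a, ha0, hxa⟩ := hx
  obtain ⟨hyz, hyzi, b, hb0, hyb⟩ := hy
  obtain ⟨n, hn0, hyxn⟩ := hxy
  obtain ⟨hyx, hyxi⟩ := hne
  have hH : Monoid.IsTorsionFree H := tf_of_graph_iso hG φ
  have hz1 : z ≠ 1 := by
    rintro rfl; rw [one_zpow] at hxa; exact hxz hxa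
  have hx1 : x ≠ 1 := by
    intro he
    have h2 : z ^ a = z ^ (0:ℤ) := by rw [← hxa, he, zpow_zero]
    exact ha0 (tf_zpow_inj hG hz1 h2)
  have ha1 : a ≠ 1 := fun h => hxz (by rw [hxa, h, zpow_one])
  have ham : a ≠ -1 := fun h => hxzi (by rw [hxa, h, zpow_neg_one])
  have h2a : 2 ≤ |a| := (two_le_abs_iff a).mpr ⟨ha0, ha1, ham⟩
  have hn1 : n ≠ 1 := fun h => hyx (by rw [hyxn, h, zpow_one])
  have hnm : n ≠ -1 := fun h => hyxi (by rw [hyxn, h, zpow_neg_one])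
  have h2n : 2 ≤ |n| := (two_le_abs_iff n).mpr ⟨hn0, hn1, hnm⟩
  have hadjzx : (zpmPowerGraph G).Adj z x := ⟨Ne.symm hxz, a, ha0, Or.inl hxa⟩
  have hphz1 : φ z ≠ 1 := zpm_adj_ne_one hH (φ.map_rel_iff.mpr hadjzx)
  have hphx1 : φ x ≠ 1 := zpm_adj_ne_one hH (φ.map_rel_iff.mpr hadjzx.symm)
  constructor
  · rintro ⟨m, hm0, hYm⟩
    have hm1 : m ≠ 1 := fun h => hyx (φ.injective (by rw [hYm, h, zpow_one]))
    have hmm : m ≠ -1 := by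
      intro h
      have h2 : φ y = φ x⁻¹ := by
        rw [hYm, h, zpow_neg_one, ← map_inv_of_iso hG hH φ hx1]
      exact hyxi (φ.injective h2)
    have h2m : 2 ≤ |m| := (two_le_abs_iff m).mpr ⟨hm0, hm1, hmm⟩
    rcases dichotomy hG hH φ hz1 with hroot | hpow
    · exfalso
      obtain ⟨s, h2s, hus⟩ := hroot a h2a
      rw [← hxa] at hus
      rcases dichotomy hH hG φ.symm hphx1 with hroot' | hpow'
      · obtain ⟨c, h2c, hc⟩ := hroot' m h2m
        rw [← hYm, φ.symm_apply_apply, φ.symm_apply_apply] at hc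
        rw [hyxn, ← zpow_mul] at hc
        have h1 : (1:ℤ) = n * c := tf_zpow_inj hG hx1 (by rw [zpow_one]; exact hc)
        rcases Int.mul_eq_one_iff_eq_one_or_neg_one.mp h1.symm with ⟨h, _⟩ | ⟨h, _⟩ <;>
          simp [h] at h2n
      · exact hpow' s h2s ⟨a, h2a, by rw [← hus, φ.symm_apply_apply, φ.symm_apply_apply]; exact hxa⟩
    · have hpow' : ∀ j : ℤ, 2 ≤ |j| → ∃ c : ℤ, 2 ≤ |c| ∧ φ (z ^ j) = (φ z) ^ c := fun j hj =>
        (classify hG hH φ hz1 hj).resolve_right (hpow j hj)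
      apply Set.Subset.antisymm
      · rintro _ ⟨w, ⟨hwz, hwzi, k, hk0, hwk⟩, rfl⟩
        have h2k : 2 ≤ |k| := (two_le_abs_iff k).mpr
          ⟨hk0, fun h => hwz (by rw [hwk, h, zpow_one]),
            fun h => hwzi (by rw [hwk, h, zpow_neg_one])⟩
        obtain ⟨c, h2c, hc⟩ := hpow' k h2k
        rw [← hwk] at hc
        obtain ⟨hc0', hc1, hcm⟩ := (two_le_abs_iff c).mp h2c
        refine ⟨?_, ?_, c, hc0', hc⟩
        · intro he
          exact hc1 (tf_zpow_inj hH hphz1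
            (by rw [zpow_one]; exact he.symm.trans hc : (φ z) ^ (1:ℤ) = (φ z) ^ c)).symm
        · intro he
          exact hcm (tf_zpow_inj hH hphz1
            (by rw [zpow_neg_one]; exact he.symm.trans hc : (φ z) ^ (-1:ℤ) = (φ z) ^ c)).symm
      · rintro v ⟨hvu, hvui, j, hj0, hvj⟩
        have h2j : 2 ≤ |j| := (two_le_abs_iff j).mpr
          ⟨hj0, fun h => hvu (by rw [hvj, h, zpow_one]),
            fun h => hvui (by rw [hvj, h, zpow_neg_one])⟩
        obtain ⟨c₂, h2c₂, hc₂⟩ := hpow' 2 (by norm_num)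
        rcases dichotomy hH hG φ.symm hphz1 with hroot'' | hpow''
        · exfalso
          obtain ⟨e, h2e, he⟩ := hroot'' c₂ h2c₂
          rw [← hc₂, φ.symm_apply_apply, φ.symm_apply_apply, ← zpow_mul] at he
          have h1 : (1:ℤ) = 2 * e := tf_zpow_inj hG hz1 (by rw [zpow_one]; exact he)
          omega
        · obtain ⟨e, h2e, he⟩ := (classify hH hG φ.symm hphz1 h2j).resolve_right (hpow'' j h2j)
          rw [φ.symm_apply_apply] at he
          obtain ⟨he0, he1, hem⟩ := (two_le_abs_iff e).mp h2e
          refine ⟨z ^ e, ⟨?_, ?_, e, he0, rfl⟩, ?_⟩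
          · intro h
            exact he1 (tf_zpow_inj hG hz1 (by rw [zpow_one]; exact h : z ^ e = z ^ (1:ℤ)))
          · intro h
            exact hem (tf_zpow_inj hG hz1
              (by rw [zpow_neg_one]; exact h : z ^ e = z ^ (-1:ℤ)))
          · have h3 : φ (φ.symm ((φ z) ^ j)) = φ (z ^ e) := congrArg φ he
            rw [φ.apply_symm_apply] at h3
            rw [← h3, ← hvj]
  · intro hset
    have hXmem : φ x ∈ Osucc (φ z) := by
      rw [← hset]; exact ⟨x, ⟨hxz, hxzi, a, ha0, hxa⟩, rfl⟩
    obtain ⟨hXu, hXui, c, hc0, hXc⟩ := hXmem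
    have h2c : 2 ≤ |c| := (two_le_abs_iff c).mpr
      ⟨hc0, fun h => hXu (by rw [hXc, h, zpow_one]),
        fun h => hXui (by rw [hXc, h, zpow_neg_one])⟩
    rcases dichotomy hG hH φ hx1 with hroot | hpow
    · exfalso
      have key : ∀ k : ℕ, ∃ jj : ℤ, jj ∣ c ∧ φ (x ^ ((k:ℤ) + 2)) = (φ z) ^ jj := by
        intro k
        have h2e : 2 ≤ |((k:ℤ) + 2)| := le_trans (by omega : (2:ℤ) ≤ (k:ℤ) + 2) (le_abs_self _)
        obtain ⟨s, h2s, hs⟩ := hroot ((k:ℤ) + 2) h2e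
        have habs : 4 ≤ |a * ((k:ℤ) + 2)| := by
          rw [abs_mul]
          exact le_trans (by norm_num) (mul_le_mul h2a h2e (by norm_num) (abs_nonneg a))
        have hmem : x ^ ((k:ℤ) + 2) ∈ Osucc z := by
          rw [hxa, ← zpow_mul]
          refine ⟨?_, ?_, a * ((k:ℤ) + 2), ?_, rfl⟩
          · intro h
            have hE := tf_zpow_inj hG hz1 (by rw [zpow_one]; exact h :
              z ^ (a * ((k:ℤ) + 2)) = z ^ (1:ℤ))
            rw [hE] at habs; norm_num at habs
          · intro h
            have hE := tf_zpow_inj hG hz1 (by rw [zpow_neg_one]; exact h :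
              z ^ (a * ((k:ℤ) + 2)) = z ^ (-1:ℤ))
            rw [hE] at habs; norm_num at habs
          · intro h
            rw [h] at habs; norm_num at habs
        have hmem2 : φ (x ^ ((k:ℤ) + 2)) ∈ Osucc (φ z) := by
          rw [← hset]; exact ⟨_, hmem, rfl⟩
        obtain ⟨_, _, jj, hjj0, hjj⟩ := hmem2
        refine ⟨jj, ?_, hjj⟩
        rw [hjj, ← zpow_mul] at hs
        exact ⟨s, tf_zpow_inj hH hphz1 (hXc.symm.trans hs)⟩
      choose f hf1 hf2 using key
      have hinj : Function.Injective f := by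
        intro k k' hkk
        have h3 : φ (x ^ ((k:ℤ) + 2)) = φ (x ^ ((k':ℤ) + 2)) := by
          rw [hf2 k, hf2 k', hkk]
        have h4 := tf_zpow_inj hG hx1 (φ.injective h3)
        omega
      have hfin : {j : ℤ | j ∣ c}.Finite := by
        apply Set.Finite.subset (Set.finite_Icc (-|c|) |c|)
        intro j hj
        have h1 : |j| ≤ |c| := by
          have h2 : |j| ∣ |c| := (abs_dvd _ _).mpr ((dvd_abs _ _).mpr hj)
          exact Int.le_of_dvd (abs_pos.mpr hc0) h2
        exact Set.mem_Icc.mpr (abs_le.mp h1)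
      exact hfin.not_infinite (Set.infinite_of_injective_forall_mem hinj hf1)
    · obtain ⟨c', h2c', hc'⟩ := (classify hG hH φ hx1 h2n).resolve_right (hpow n h2n)
      rw [← hyxn] at hc'
      exact ⟨c', ((two_le_abs_iff c').mp h2c').1, hc'⟩
end
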